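/- arXiv:1008.3581 — 4 statements merged into one kernel-verified Lean document; each statement's English description precedes it below -/
import Mathlib

section
/- There is an absolute constant C > 0 such that for every ε ∈ (0,1] and all r, t > 0 with r > 1 and r > t/100, the kernel satisfies |G_ε(r,t)| ≤ C · r^{-1/2} / (ε·r + r^{1/2} + max(t − r, 0)). -/
open MeasureTheory

/-- The Green's function kernel `G_ε(r,t)` of `(−Δ − z)^{-1} e^{itΔ}` on `ℝ³`,
with `z = 1/4 + iε`:
`G_ε(r,t) = (e^{-iπ/4}/(8π^{3/2})) ∫_t^∞ exp(i((s−t)z + r²/(4s))) s^{-3/2} ds`. -/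
noncomputable def Gker (ε r t : ℝ) : ℂ :=
  (Complex.exp (-(Real.pi / 4 : ℝ) * Complex.I) / ((8 * Real.pi ^ ((3 : ℝ) / 2) : ℝ))) *
    ∫ s in Set.Ioi t,
      Complex.exp (Complex.I * (((s : ℂ) - (t : ℂ)) * (1 / 4 + (ε : ℂ) * Complex.I)
          + (r : ℂ) ^ 2 / (4 * (s : ℂ)))) * ((s ^ (-(3 : ℝ) / 2) : ℝ) : ℂ)

open Set
set_option maxHeartbeats 1000000

noncomputable section
namespace Stmt0

def zc (ε : ℝ) : ℂ := 1/4 + (ε:ℂ) * Complex.I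

def gph (ε r t s : ℝ) : ℂ :=
  Complex.I * (((s:ℂ) - (t:ℂ)) * zc ε + (r:ℂ)^2 / (4 * (s:ℂ)))

def Fi (ε r t s : ℝ) : ℂ := Complex.exp (gph ε r t s) * ((s ^ (-(3:ℝ)/2) : ℝ) : ℂ)

def gd (ε r s : ℝ) : ℂ := Complex.I * (zc ε - (r:ℂ)^2 / (4 * (s:ℂ)^2))

def gdd (r s : ℝ) : ℂ := Complex.I * ((r:ℂ)^2 / (2 * (s:ℂ)^3))

def wf (ε r s : ℝ) : ℂ := ((s ^ (-(3:ℝ)/2) : ℝ) : ℂ) / gd ε r s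

def Wd (ε r s : ℝ) : ℂ :=
  ((((-(3:ℝ)/2) * s ^ (-(5:ℝ)/2) : ℝ) : ℂ) * gd ε r s
    - ((s ^ (-(3:ℝ)/2) : ℝ) : ℂ) * gdd r s) / (gd ε r s)^2

def Ei (ε r t s : ℝ) : ℂ := Complex.exp (gph ε r t s) * Wd ε r s

lemma gd_eq (ε r s : ℝ) :
    gd ε r s = ((-ε : ℝ) : ℂ) + ((1/4 - r^2/(4*s^2) : ℝ) : ℂ) * Complex.I := by
  unfold gd zc
  push_cast
  ring_nf
  rw [Complex.I_sq]
  ring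

lemma gd_re (ε r s : ℝ) : (gd ε r s).re = -ε := by
  rw [gd_eq]
  simp only [Complex.add_re, Complex.mul_re, Complex.I_re, Complex.I_im,
    Complex.ofReal_re, Complex.ofReal_im]
  ring

lemma gd_im (ε r s : ℝ) : (gd ε r s).im = 1/4 - r^2/(4*s^2) := by
  rw [gd_eq]
  simp only [Complex.add_im, Complex.mul_im, Complex.I_re, Complex.I_im,
    Complex.ofReal_re, Complex.ofReal_im]
  ring

lemma gd_ne_zero {ε : ℝ} (hε : 0 < ε) (r s : ℝ) : gd ε r s ≠ 0 := by
  intro h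
  have := gd_re ε r s
  rw [h] at this
  simp at this
  linarith

lemma norm_gd_ge_eps {ε : ℝ} (hε : 0 < ε) (r s : ℝ) : ε ≤ ‖gd ε r s‖ := by
  have h := Complex.abs_re_le_norm (gd ε r s)
  rw [gd_re, abs_neg, abs_of_pos hε] at h
  exact h

lemma norm_gd_ge_im (ε r s : ℝ) : |1/4 - r^2/(4*s^2)| ≤ ‖gd ε r s‖ := by
  have h := Complex.abs_im_le_norm (gd ε r s)
  rwa [gd_im] at h

lemma sq_norm_gd (ε r s : ℝ) :
    ‖gd ε r s‖^2 = ε^2 + (1/4 - r^2/(4*s^2))^2 := by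
  rw [Complex.sq_norm, Complex.normSq_apply, gd_re, gd_im]; ring

lemma norm_gd_pos {ε : ℝ} (hε : 0 < ε) (r s : ℝ) : 0 < ‖gd ε r s‖ :=
  lt_of_lt_of_le hε (norm_gd_ge_eps hε r s)

lemma norm_gdd {r s : ℝ} (hs : 0 < s) : ‖gdd r s‖ = r^2/(2*s^3) := by
  have h : gdd r s = Complex.I * ((r^2/(2*s^3) : ℝ) : ℂ) := by unfold gdd; push_cast; ring
  rw [h, norm_mul, Complex.norm_I, one_mul, Complex.norm_real,
    Real.norm_of_nonneg (by positivity : (0:ℝ) ≤ r^2/(2*s^3))]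

lemma gph_eq (ε r t s : ℝ) :
    gph ε r t s = ((-ε * (s-t) : ℝ) : ℂ) + (((s-t)/4 + r^2/(4*s) : ℝ) : ℂ) * Complex.I := by
  unfold gph zc
  push_cast
  ring_nf
  rw [Complex.I_sq]
  ring

lemma gph_re (ε r t s : ℝ) : (gph ε r t s).re = -ε * (s - t) := by
  rw [gph_eq]
  simp only [Complex.add_re, Complex.mul_re, Complex.I_re, Complex.I_im,
    Complex.ofReal_re, Complex.ofReal_im]
  ring

lemma norm_exp_gph_le {ε r t s : ℝ} (hε : 0 ≤ ε) (hts : t ≤ s) :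
    ‖Complex.exp (gph ε r t s)‖ ≤ 1 := by
  rw [Complex.norm_exp, gph_re, Real.exp_le_one_iff]
  nlinarith

lemma hasDerivAt_ofReal (s : ℝ) : HasDerivAt (fun y : ℝ => (y:ℂ)) 1 s := by
  simpa using (hasDerivAt_id s).ofReal_comp

lemma hasDerivAt_gph (ε r t : ℝ) {s : ℝ} (hs : s ≠ 0) :
    HasDerivAt (fun s : ℝ => gph ε r t s) (gd ε r s) s := by
  have hcs := hasDerivAt_ofReal s
  have hsc : (s:ℂ) ≠ 0 := by exact_mod_cast hs
  have h1 : HasDerivAt (fun y : ℝ => ((y:ℂ) - (t:ℂ)) * zc ε) (zc ε) s := by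
    simpa using (hcs.sub_const (t:ℂ)).mul_const (zc ε)
  have h2 : HasDerivAt (fun y : ℝ => (r:ℂ)^2 / (4 * (y:ℂ)))
      ((0 * (4 * (s:ℂ)) - (r:ℂ)^2 * 4) / (4 * (s:ℂ))^2) s :=
    (hasDerivAt_const s ((r:ℂ)^2)).div (by simpa using hcs.const_mul (4:ℂ))
      (by simpa using hsc)
  have h3 := (h1.add h2).const_mul Complex.I
  unfold gph gd
  refine h3.congr_deriv ?_
  field_simp
  ring

lemma hasDerivAt_gd (ε r : ℝ) {s : ℝ} (hs : s ≠ 0) :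
    HasDerivAt (fun s : ℝ => gd ε r s) (gdd r s) s := by
  have hcs := hasDerivAt_ofReal s
  have hsc : (s:ℂ) ≠ 0 := by exact_mod_cast hs
  have hsq : HasDerivAt (fun y : ℝ => 4 * ((y:ℂ))^2) (4 * (2 * (s:ℂ))) s := by
    have h0 : HasDerivAt (fun y : ℝ => (y:ℂ) * (y:ℂ)) (1 * (s:ℂ) + (s:ℂ) * 1) s := hcs.mul hcs
    have h1 := h0.const_mul (4:ℂ)
    have he : (fun y : ℝ => 4 * ((y:ℂ) * (y:ℂ))) = fun y : ℝ => 4 * ((y:ℂ))^2 := by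
      funext y; ring
    rw [he] at h1
    refine h1.congr_deriv ?_
    ring
  have h2 : HasDerivAt (fun y : ℝ => (r:ℂ)^2 / (4 * ((y:ℂ))^2))
      ((0 * (4 * (s:ℂ)^2) - (r:ℂ)^2 * (4 * (2 * (s:ℂ)))) / (4 * (s:ℂ)^2)^2) s :=
    (hasDerivAt_const s ((r:ℂ)^2)).div hsq (mul_ne_zero (by norm_num) (pow_ne_zero 2 hsc))
  have h3 := ((h2.const_sub (zc ε)).const_mul Complex.I)
  unfold gd gdd
  refine h3.congr_deriv ?_
  field_simp
  ring

lemma hasDerivAt_h {s : ℝ} (hs : 0 < s) :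
    HasDerivAt (fun y : ℝ => ((y ^ (-(3:ℝ)/2) : ℝ) : ℂ))
      (((-(3:ℝ)/2) * s ^ (-(5:ℝ)/2) : ℝ) : ℂ) s := by
  have h := (Real.hasDerivAt_rpow_const (x := s) (p := -(3:ℝ)/2) (Or.inl hs.ne')).ofReal_comp
  have he : -(3:ℝ)/2 - 1 = -(5:ℝ)/2 := by norm_num
  rwa [he] at h

lemma hasDerivAt_wf {ε : ℝ} (hε : 0 < ε) (r : ℝ) {s : ℝ} (hs : 0 < s) :
    HasDerivAt (fun y : ℝ => wf ε r y) (Wd ε r s) s :=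
  (hasDerivAt_h hs).div (hasDerivAt_gd ε r hs.ne') (gd_ne_zero hε r s)

lemma hasDerivAt_phi {ε : ℝ} (hε : 0 < ε) (r t : ℝ) {s : ℝ} (hs : 0 < s) :
    HasDerivAt (fun y : ℝ => Complex.exp (gph ε r t y) * wf ε r y)
      (Fi ε r t s + Ei ε r t s) s := by
  have he : HasDerivAt (fun y : ℝ => Complex.exp (gph ε r t y))
      (Complex.exp (gph ε r t s) * gd ε r s) s := (hasDerivAt_gph ε r t hs.ne').cexp
  have h2 := he.mul (hasDerivAt_wf hε r hs)
  refine h2.congr_deriv ?_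
  unfold Fi Ei wf
  have hgd := gd_ne_zero hε r s
  field_simp

lemma continuousOn_ofReal_rpow (p : ℝ) :
    ContinuousOn (fun s : ℝ => ((s ^ p : ℝ) : ℂ)) {s : ℝ | 0 < s} :=
  Complex.continuous_ofReal.comp_continuousOn
    (continuousOn_id.rpow_const (fun x hx => Or.inl (ne_of_gt hx)))

lemma continuousOn_coe : ContinuousOn (fun s : ℝ => (s:ℂ)) {s : ℝ | 0 < s} :=
  Complex.continuous_ofReal.continuousOn

lemma continuousOn_gph (ε r t : ℝ) :
    ContinuousOn (fun s : ℝ => gph ε r t s) {s : ℝ | 0 < s} := by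
  unfold gph
  apply ContinuousOn.mul continuousOn_const
  apply ContinuousOn.add
  · exact (continuousOn_coe.sub continuousOn_const).mul continuousOn_const
  · exact continuousOn_const.div (continuousOn_const.mul continuousOn_coe)
      (fun x hx => by
        simp only [mem_setOf_eq] at hx
        exact mul_ne_zero (by norm_num) (by exact_mod_cast ne_of_gt hx))

lemma continuousOn_gd (ε r : ℝ) :
    ContinuousOn (fun s : ℝ => gd ε r s) {s : ℝ | 0 < s} := by
  unfold gd
  apply ContinuousOn.mul continuousOn_const
  apply ContinuousOn.sub continuousOn_const
  exact continuousOn_const.div (continuousOn_const.mul (continuousOn_coe.pow 2))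
    (fun x hx => by
      simp only [mem_setOf_eq] at hx
      exact mul_ne_zero (by norm_num) (pow_ne_zero 2 (by exact_mod_cast ne_of_gt hx)))

lemma continuousOn_gdd (r : ℝ) :
    ContinuousOn (fun s : ℝ => gdd r s) {s : ℝ | 0 < s} := by
  unfold gdd
  apply ContinuousOn.mul continuousOn_const
  exact continuousOn_const.div (continuousOn_const.mul (continuousOn_coe.pow 3))
    (fun x hx => by
      simp only [mem_setOf_eq] at hx
      exact mul_ne_zero (by norm_num) (pow_ne_zero 3 (by exact_mod_cast ne_of_gt hx)))

lemma continuousOn_Fi (ε r t : ℝ) :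
    ContinuousOn (fun s : ℝ => Fi ε r t s) {s : ℝ | 0 < s} := by
  unfold Fi
  exact (Complex.continuous_exp.comp_continuousOn (continuousOn_gph ε r t)).mul
    (continuousOn_ofReal_rpow _)

lemma continuousOn_wf {ε : ℝ} (hε : 0 < ε) (r : ℝ) :
    ContinuousOn (fun s : ℝ => wf ε r s) {s : ℝ | 0 < s} := by
  unfold wf
  exact (continuousOn_ofReal_rpow _).div (continuousOn_gd ε r)
    (fun x _ => gd_ne_zero hε r x)

lemma continuousOn_Wd {ε : ℝ} (hε : 0 < ε) (r : ℝ) :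
    ContinuousOn (fun s : ℝ => Wd ε r s) {s : ℝ | 0 < s} := by
  unfold Wd
  have h1 : ContinuousOn (fun s : ℝ => ((((-(3:ℝ)/2) * s ^ (-(5:ℝ)/2) : ℝ)) : ℂ))
      {s : ℝ | 0 < s} :=
    Complex.continuous_ofReal.comp_continuousOn
      (((continuousOn_id.rpow_const (fun x hx => Or.inl (ne_of_gt hx)))).const_smul (-(3:ℝ)/2))
  have h2 : ContinuousOn (fun s : ℝ => ((s ^ (-(3:ℝ)/2) : ℝ) : ℂ)) {s : ℝ | 0 < s} :=
    continuousOn_ofReal_rpow _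
  have hnum : ContinuousOn (fun s : ℝ =>
      ((((-(3:ℝ)/2) * s ^ (-(5:ℝ)/2) : ℝ)) : ℂ) * gd ε r s
        - ((s ^ (-(3:ℝ)/2) : ℝ) : ℂ) * gdd r s) {s : ℝ | 0 < s} :=
    (h1.mul (continuousOn_gd ε r)).sub (h2.mul (continuousOn_gdd r))
  have hden : ContinuousOn (fun s : ℝ => (gd ε r s)^2) {s : ℝ | 0 < s} :=
    (continuousOn_gd ε r).pow 2
  exact hnum.div hden (fun x _ => pow_ne_zero 2 (gd_ne_zero hε r x))

lemma continuousOn_Ei {ε : ℝ} (hε : 0 < ε) (r t : ℝ) :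
    ContinuousOn (fun s : ℝ => Ei ε r t s) {s : ℝ | 0 < s} := by
  unfold Ei
  exact (Complex.continuous_exp.comp_continuousOn (continuousOn_gph ε r t)).mul
    (continuousOn_Wd hε r)

lemma uIcc_sub {a b : ℝ} (h0a : 0 < a) (hab : a ≤ b) : uIcc a b ⊆ {s : ℝ | 0 < s} := by
  intro x hx
  rw [uIcc_of_le hab] at hx
  exact lt_of_lt_of_le h0a hx.1

lemma ibp_identity {ε : ℝ} (hε : 0 < ε) (r t : ℝ) {a b : ℝ} (h0a : 0 < a) (hab : a ≤ b) :
    ∫ s in a..b, Fi ε r t s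
      = Complex.exp (gph ε r t b) * wf ε r b - Complex.exp (gph ε r t a) * wf ε r a
        - ∫ s in a..b, Ei ε r t s := by
  have hsub := uIcc_sub h0a hab
  have hFint : IntervalIntegrable (Fi ε r t) volume a b :=
    ((continuousOn_Fi ε r t).mono hsub).intervalIntegrable
  have hEint : IntervalIntegrable (Ei ε r t) volume a b :=
    ((continuousOn_Ei hε r t).mono hsub).intervalIntegrable
  have hkey := intervalIntegral.integral_eq_sub_of_hasDerivAt
    (f := fun y => Complex.exp (gph ε r t y) * wf ε r y)
    (f' := fun y => Fi ε r t y + Ei ε r t y)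
    (fun x hx => hasDerivAt_phi hε r t (hsub hx)) (hFint.add hEint)
  rw [intervalIntegral.integral_add hFint hEint] at hkey
  linear_combination hkey

lemma ibp_norm {ε : ℝ} (hε : 0 < ε) (r : ℝ) {t a b : ℝ} (hta : t ≤ a)
    (h0a : 0 < a) (hab : a ≤ b) :
    ‖∫ s in a..b, Fi ε r t s‖
      ≤ ‖wf ε r a‖ + ‖wf ε r b‖ + ∫ s in a..b, ‖Ei ε r t s‖ := by
  rw [ibp_identity hε r t h0a hab]
  have h1 : ‖Complex.exp (gph ε r t a) * wf ε r a‖ ≤ ‖wf ε r a‖ := by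
    rw [norm_mul]
    nlinarith [norm_exp_gph_le (r := r) hε.le hta, norm_nonneg (wf ε r a),
      norm_nonneg (Complex.exp (gph ε r t a))]
  have h2 : ‖Complex.exp (gph ε r t b) * wf ε r b‖ ≤ ‖wf ε r b‖ := by
    rw [norm_mul]
    nlinarith [norm_exp_gph_le (r := r) hε.le (le_trans hta hab), norm_nonneg (wf ε r b),
      norm_nonneg (Complex.exp (gph ε r t b))]
  have h3 : ‖∫ s in a..b, Ei ε r t s‖ ≤ ∫ s in a..b, ‖Ei ε r t s‖ :=
    intervalIntegral.norm_integral_le_integral_norm hab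
  calc ‖Complex.exp (gph ε r t b) * wf ε r b - Complex.exp (gph ε r t a) * wf ε r a
        - ∫ s in a..b, Ei ε r t s‖
      ≤ ‖Complex.exp (gph ε r t b) * wf ε r b - Complex.exp (gph ε r t a) * wf ε r a‖
        + ‖∫ s in a..b, Ei ε r t s‖ := norm_sub_le _ _
    _ ≤ (‖Complex.exp (gph ε r t b) * wf ε r b‖ + ‖Complex.exp (gph ε r t a) * wf ε r a‖)
        + ‖∫ s in a..b, Ei ε r t s‖ := by gcongr; exact norm_sub_le _ _
    _ ≤ ‖wf ε r a‖ + ‖wf ε r b‖ + ∫ s in a..b, ‖Ei ε r t s‖ := by linarith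

lemma norm_wf_eq {ε : ℝ} (r : ℝ) {s : ℝ} (hs : 0 < s) :
    ‖wf ε r s‖ = s ^ (-(3:ℝ)/2) / ‖gd ε r s‖ := by
  unfold wf
  rw [norm_div, Complex.norm_real, Real.norm_of_nonneg (Real.rpow_nonneg hs.le _)]

lemma norm_Wd_le {ε : ℝ} (hε : 0 < ε) (r : ℝ) {s : ℝ} (hs : 0 < s) :
    ‖Wd ε r s‖
      ≤ (3/2) * s ^ (-(5:ℝ)/2) / ‖gd ε r s‖
        + s ^ (-(3:ℝ)/2) * (r^2/(2*s^3)) / ‖gd ε r s‖^2 := by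
  have hG : 0 < ‖gd ε r s‖ := norm_gd_pos hε r s
  have hnum : ‖(((-(3:ℝ)/2) * s ^ (-(5:ℝ)/2) : ℝ) : ℂ) * gd ε r s
      - ((s ^ (-(3:ℝ)/2) : ℝ) : ℂ) * gdd r s‖
      ≤ (3/2) * s ^ (-(5:ℝ)/2) * ‖gd ε r s‖ + s ^ (-(3:ℝ)/2) * (r^2/(2*s^3)) := by
    apply le_trans (norm_sub_le _ _)
    rw [norm_mul, norm_mul, norm_gdd hs, Complex.norm_real, Complex.norm_real]
    rw [Real.norm_of_nonneg (Real.rpow_nonneg hs.le _)]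
    have : ‖(-(3:ℝ)/2) * s ^ (-(5:ℝ)/2)‖ = (3/2) * s ^ (-(5:ℝ)/2) := by
      rw [Real.norm_eq_abs, abs_mul, abs_of_nonneg (Real.rpow_nonneg hs.le _)]
      norm_num
    rw [this]
  calc ‖Wd ε r s‖ = ‖(((-(3:ℝ)/2) * s ^ (-(5:ℝ)/2) : ℝ) : ℂ) * gd ε r s
        - ((s ^ (-(3:ℝ)/2) : ℝ) : ℂ) * gdd r s‖ / ‖gd ε r s‖^2 := by
        unfold Wd; rw [norm_div, norm_pow]
    _ ≤ ((3/2) * s ^ (-(5:ℝ)/2) * ‖gd ε r s‖ + s ^ (-(3:ℝ)/2) * (r^2/(2*s^3))) / ‖gd ε r s‖^2 := by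
        gcongr
    _ = (3/2) * s ^ (-(5:ℝ)/2) / ‖gd ε r s‖ + s ^ (-(3:ℝ)/2) * (r^2/(2*s^3)) / ‖gd ε r s‖^2 := by
        rw [add_div]
        congr 1
        rw [pow_two]
        exact mul_div_mul_right _ _ (ne_of_gt hG)



lemma norm_Fi_le {ε r t s : ℝ} (hε : 0 ≤ ε) (hts : t ≤ s) (hs : 0 < s) :
    ‖Fi ε r t s‖ ≤ s ^ (-(3:ℝ)/2) := by
  unfold Fi
  rw [norm_mul, Complex.norm_real, Real.norm_of_nonneg (Real.rpow_nonneg hs.le _)]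
  nlinarith [norm_exp_gph_le (r := r) hε hts, Real.rpow_nonneg hs.le (-(3:ℝ)/2),
    norm_nonneg (Complex.exp (gph ε r t s))]

lemma integrableOn_Fi {ε : ℝ} (hε : 0 < ε) (r : ℝ) {t : ℝ} (ht : 0 < t) :
    IntegrableOn (Fi ε r t) (Ioi t) volume := by
  have hmaj : IntegrableOn (fun s : ℝ => s ^ (-(3:ℝ)/2)) (Ioi t) volume := by
    have := integrableOn_Ioi_rpow_of_lt (a := -(3:ℝ)/2) (by norm_num) ht
    simpa using this
  apply Integrable.mono' hmaj
  · exact ((continuousOn_Fi ε r t).mono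
      (fun x (hx : x ∈ Ioi t) => lt_trans ht hx)).aestronglyMeasurable measurableSet_Ioi
  · filter_upwards [ae_restrict_mem measurableSet_Ioi] with x hx
    exact norm_Fi_le hε.le (le_of_lt hx) (lt_trans ht hx)

lemma norm_gd_far {ε r s : ℝ} (hr : 0 < r) (hs2 : 2*r ≤ s) (hs0 : 0 < s) :
    3/16 ≤ ‖gd ε r s‖ := by
  apply le_trans _ (norm_gd_ge_im ε r s)
  have h1 : r^2/(4*s^2) ≤ 1/16 := by
    rw [div_le_div_iff₀ (by positivity) (by norm_num)]
    nlinarith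
  have h2 : 0 ≤ r^2/(4*s^2) := by positivity
  rw [abs_of_nonneg (by linarith)]
  linarith

lemma norm_wf_far {ε r s : ℝ} (hε : 0 < ε) (hr : 0 < r) (hs2 : 2*r ≤ s) (hs0 : 0 < s) :
    ‖wf ε r s‖ ≤ (16/3) * s ^ (-(3:ℝ)/2) := by
  rw [norm_wf_eq r hs0]
  have h := norm_gd_far (ε := ε) hr hs2 hs0
  have h2 : s ^ (-(3:ℝ)/2) / ‖gd ε r s‖ ≤ s ^ (-(3:ℝ)/2) / (3/16) :=
    div_le_div_of_nonneg_left (Real.rpow_nonneg hs0.le _) (by norm_num) h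
  linarith

lemma rpow_div_self {s : ℝ} (hs : 0 < s) : s ^ (-(3:ℝ)/2) / s = s ^ (-(5:ℝ)/2) := by
  have h : -(5:ℝ)/2 = -(3:ℝ)/2 - 1 := by norm_num
  rw [h, Real.rpow_sub hs, Real.rpow_one]

lemma norm_Ei_far {ε r t s : ℝ} (hε : 0 < ε) (hr : 0 < r) (hts : t ≤ s) (hs2 : 2*r ≤ s) :
    ‖Ei ε r t s‖ ≤ 12 * s ^ (-(5:ℝ)/2) := by
  have hs0 : 0 < s := lt_of_lt_of_le (by positivity) hs2
  have hG := norm_gd_far (ε := ε) hr hs2 hs0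
  have hW := norm_Wd_le hε r hs0
  have hterm1 : (3/2) * s ^ (-(5:ℝ)/2) / ‖gd ε r s‖ ≤ 8 * s ^ (-(5:ℝ)/2) := by
    have h2 : (3/2) * s ^ (-(5:ℝ)/2) / ‖gd ε r s‖ ≤ (3/2) * s ^ (-(5:ℝ)/2) / (3/16) :=
      div_le_div_of_nonneg_left (by positivity) (by norm_num) hG
    linarith
  have hterm2 : s ^ (-(3:ℝ)/2) * (r^2/(2*s^3)) / ‖gd ε r s‖^2 ≤ 4 * s ^ (-(5:ℝ)/2) := by
    have hb : r^2/(2*s^3) ≤ 1/(8*s) := by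
      rw [div_le_div_iff₀ (by positivity) (by positivity)]
      have hsq : 4*r^2 ≤ s^2 := by nlinarith
      nlinarith [mul_le_mul_of_nonneg_left hsq (by positivity : (0:ℝ) ≤ 2*s)]
    have hG2 : (3/16 : ℝ)^2 ≤ ‖gd ε r s‖^2 := by nlinarith
    calc s ^ (-(3:ℝ)/2) * (r^2/(2*s^3)) / ‖gd ε r s‖^2
        ≤ s ^ (-(3:ℝ)/2) * (1/(8*s)) / ((3/16)^2) := by
          apply div_le_div₀ (by positivity) _ (by norm_num) hG2
          have := Real.rpow_nonneg hs0.le (-(3:ℝ)/2)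
          nlinarith
      _ = (256/72) * (s ^ (-(3:ℝ)/2) / s) := by ring
      _ = (256/72) * s ^ (-(5:ℝ)/2) := by rw [rpow_div_self hs0]
      _ ≤ 4 * s ^ (-(5:ℝ)/2) := by
          have := Real.rpow_nonneg hs0.le (-(5:ℝ)/2)
          nlinarith
  have hexp := norm_exp_gph_le (r := r) hε.le hts
  unfold Ei
  rw [norm_mul]
  have hWnn : 0 ≤ ‖Wd ε r s‖ := norm_nonneg _
  have : ‖Wd ε r s‖ ≤ 12 * s ^ (-(5:ℝ)/2) := by linarith
  nlinarith [norm_nonneg (Complex.exp (gph ε r t s))]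

lemma integrableOn_Ei {ε : ℝ} (hε : 0 < ε) {r t c : ℝ} (hr : 0 < r) (htc : t ≤ c)
    (hc : 2*r ≤ c) (h0t : 0 < t) :
    IntegrableOn (Ei ε r t) (Ioi c) volume := by
  have h0c : 0 < c := lt_of_le_of_lt (le_refl 0) (lt_of_lt_of_le (by positivity) hc)
  have hmaj : IntegrableOn (fun s : ℝ => 12 * s ^ (-(5:ℝ)/2)) (Ioi c) volume := by
    have := integrableOn_Ioi_rpow_of_lt (a := -(5:ℝ)/2) (by norm_num) h0c
    exact this.const_mul 12
  apply Integrable.mono' hmaj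
  · exact ((continuousOn_Ei hε r t).mono
      (fun x (hx : x ∈ Ioi c) => lt_trans h0c hx)).aestronglyMeasurable measurableSet_Ioi
  · filter_upwards [ae_restrict_mem measurableSet_Ioi] with x hx
    exact norm_Ei_far hε hr (le_trans htc (le_of_lt hx)) (le_trans hc (le_of_lt hx))

lemma tail_eq {ε : ℝ} (hε : 0 < ε) (r : ℝ) {t c : ℝ} (ht : 0 < t) (htc : t ≤ c)
    (hr : 0 < r) (hc : 2*r ≤ c) :
    ∫ s in Ioi c, Fi ε r t s
      = -(Complex.exp (gph ε r t c) * wf ε r c) - ∫ s in Ioi c, Ei ε r t s := by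
  have h0c : 0 < c := lt_of_lt_of_le ht htc
  have hFIoi : IntegrableOn (Fi ε r t) (Ioi c) volume :=
    (integrableOn_Fi hε r ht).mono_set (Ioi_subset_Ioi htc)
  have hEIoi := integrableOn_Ei hε hr htc hc ht
  have hlim1 := intervalIntegral_tendsto_integral_Ioi c hFIoi Filter.tendsto_id
  have hlim2 := intervalIntegral_tendsto_integral_Ioi c hEIoi Filter.tendsto_id
  have hphi : Filter.Tendsto (fun b => Complex.exp (gph ε r t b) * wf ε r b)
      Filter.atTop (nhds 0) := by
    apply squeeze_zero_norm' (a := fun b : ℝ => (1/ε) * b ^ (-(3:ℝ)/2)) ?_ ?_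
    · filter_upwards [Filter.eventually_ge_atTop (max t 1)] with b hb
      have hb1 : t ≤ b := le_trans (le_max_left _ _) hb
      have hb0 : 0 < b := lt_of_lt_of_le (by norm_num) (le_trans (le_max_right _ _) hb)
      rw [norm_mul, norm_wf_eq r hb0]
      have h1 : b ^ (-(3:ℝ)/2) / ‖gd ε r b‖ ≤ b ^ (-(3:ℝ)/2) / ε :=
        div_le_div_of_nonneg_left (Real.rpow_nonneg hb0.le _) hε (norm_gd_ge_eps hε r b)
      have h2 := norm_exp_gph_le (r := r) hε.le hb1
      have h3 : 0 ≤ b ^ (-(3:ℝ)/2) / ‖gd ε r b‖ :=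
        div_nonneg (Real.rpow_nonneg hb0.le _) (norm_nonneg _)
      calc ‖Complex.exp (gph ε r t b)‖ * (b ^ (-(3:ℝ)/2) / ‖gd ε r b‖)
          ≤ 1 * (b ^ (-(3:ℝ)/2) / ‖gd ε r b‖) := by nlinarith
        _ ≤ (1/ε) * b ^ (-(3:ℝ)/2) := by
            rw [one_mul]
            calc b ^ (-(3:ℝ)/2) / ‖gd ε r b‖ ≤ b ^ (-(3:ℝ)/2) / ε := h1
              _ = (1/ε) * b ^ (-(3:ℝ)/2) := by ring
    · have h := tendsto_rpow_neg_atTop (by norm_num : (0:ℝ) < 3/2)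
      have h2 := h.const_mul (1/ε)
      rw [mul_zero] at h2
      convert h2 using 2
      norm_num
  have key : ∀ᶠ b in Filter.atTop, Complex.exp (gph ε r t b) * wf ε r b
      - Complex.exp (gph ε r t c) * wf ε r c - (∫ s in c..b, Ei ε r t s)
      = ∫ s in c..b, Fi ε r t s := by
    filter_upwards [Filter.eventually_ge_atTop c] with b hb
    exact (ibp_identity hε r t h0c hb).symm
  have hlim3 : Filter.Tendsto (fun b => Complex.exp (gph ε r t b) * wf ε r b
      - Complex.exp (gph ε r t c) * wf ε r c - (∫ s in c..b, Ei ε r t s)) Filter.atTop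
      (nhds (0 - Complex.exp (gph ε r t c) * wf ε r c - ∫ s in Ioi c, Ei ε r t s)) :=
    (hphi.sub tendsto_const_nhds).sub hlim2
  have := tendsto_nhds_unique (hlim3.congr' key) hlim1
  rw [← this]
  ring

lemma tail_norm {ε : ℝ} (hε : 0 < ε) (r : ℝ) {t c : ℝ} (ht : 0 < t) (htc : t ≤ c)
    (hr : 0 < r) (hc : 2*r ≤ c) :
    ‖∫ s in Ioi c, Fi ε r t s‖ ≤ 14 * c ^ (-(3:ℝ)/2) := by
  have h0c : 0 < c := lt_of_lt_of_le ht htc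
  rw [tail_eq hε r ht htc hr hc]
  have hEIoi := integrableOn_Ei hε hr htc hc ht
  have h1 : ‖Complex.exp (gph ε r t c) * wf ε r c‖ ≤ (16/3) * c ^ (-(3:ℝ)/2) := by
    rw [norm_mul]
    have ha := norm_exp_gph_le (r := r) hε.le htc
    have hb := norm_wf_far hε hr hc h0c
    nlinarith [norm_nonneg (wf ε r c), norm_nonneg (Complex.exp (gph ε r t c))]
  have h2 : ‖∫ s in Ioi c, Ei ε r t s‖ ≤ (24/3) * c ^ (-(3:ℝ)/2) := by
    have hn := norm_integral_le_integral_norm (μ := volume.restrict (Ioi c)) (Ei ε r t)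
    apply le_trans hn
    have hmono : ∫ s in Ioi c, ‖Ei ε r t s‖ ≤ ∫ s in Ioi c, 12 * s ^ (-(5:ℝ)/2) := by
      apply setIntegral_mono_on hEIoi.norm
      · exact (integrableOn_Ioi_rpow_of_lt (a := -(5:ℝ)/2) (by norm_num) h0c).const_mul 12
      · exact measurableSet_Ioi
      · intro x hx
        exact norm_Ei_far hε hr (le_trans htc (le_of_lt hx)) (le_trans hc (le_of_lt hx))
    apply le_trans hmono
    rw [MeasureTheory.integral_const_mul]
    rw [integral_Ioi_rpow_of_lt (by norm_num : -(5:ℝ)/2 < -1) h0c]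
    have he : (-(5:ℝ)/2 + 1) = -(3:ℝ)/2 := by norm_num
    rw [he]
    have := Real.rpow_nonneg h0c.le (-(3:ℝ)/2)
    nlinarith
  calc ‖-(Complex.exp (gph ε r t c) * wf ε r c) - ∫ s in Ioi c, Ei ε r t s‖
      ≤ ‖-(Complex.exp (gph ε r t c) * wf ε r c)‖ + ‖∫ s in Ioi c, Ei ε r t s‖ :=
        norm_sub_le _ _
    _ ≤ (16/3) * c ^ (-(3:ℝ)/2) + (24/3) * c ^ (-(3:ℝ)/2) := by
        rw [norm_neg]; exact add_le_add h1 h2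
    _ ≤ 14 * c ^ (-(3:ℝ)/2) := by
        have := Real.rpow_nonneg h0c.le (-(3:ℝ)/2)
        nlinarith

/-! ### helpers: rpow algebra -/

lemma sqrt_sq' {r : ℝ} (hr0 : 0 ≤ r) : Real.sqrt r ^ 2 = r := Real.sq_sqrt hr0

lemma one_lt_sqrt {r : ℝ} (hr : 1 < r) : 1 < Real.sqrt r := by
  have h := Real.sqrt_lt_sqrt (by norm_num) hr
  rwa [Real.sqrt_one] at h

lemma rpow_m32_mul {r : ℝ} (hr0 : 0 < r) : r ^ (-(3:ℝ)/2) * r = r ^ (-(1:ℝ)/2) := by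
  nth_rewrite 2 [← Real.rpow_one r]
  rw [← Real.rpow_add hr0]
  norm_num

lemma rpow_m52_mul_sq {r : ℝ} (hr0 : 0 < r) : r ^ (-(5:ℝ)/2) * r^2 = r ^ (-(1:ℝ)/2) := by
  rw [← Real.rpow_natCast r 2, ← Real.rpow_add hr0]
  norm_num

lemma rpow_m52_mul {r : ℝ} (hr0 : 0 < r) : r ^ (-(5:ℝ)/2) * r = r ^ (-(3:ℝ)/2) := by
  nth_rewrite 2 [← Real.rpow_one r]
  rw [← Real.rpow_add hr0]
  norm_num

lemma rpow_half_mul {r : ℝ} (hr0 : 0 < r) : r ^ ((1:ℝ)/2) * r ^ (-(3:ℝ)/2) = 1/r := by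
  rw [← Real.rpow_add hr0]
  rw [show (1:ℝ)/2 + -(3:ℝ)/2 = -1 by norm_num]
  rw [Real.rpow_neg_one]
  exact one_div r |>.symm

lemma sqrt_eq_rpow_half {r : ℝ} : Real.sqrt r = r ^ ((1:ℝ)/2) := by
  rw [Real.sqrt_eq_rpow]

lemma rpow_anti {x y p : ℝ} (hx : 0 < x) (hxy : x ≤ y) (hp : p ≤ 0) : y ^ p ≤ x ^ p := by
  exact Real.rpow_le_rpow_of_nonpos hx hxy hp

lemma two_pow_32_le : (2:ℝ) ^ ((3:ℝ)/2) ≤ 3 := by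
  have h1 : ((2:ℝ) ^ ((3:ℝ)/2))^2 = 8 := by
    rw [← Real.rpow_natCast ((2:ℝ) ^ ((3:ℝ)/2)) 2, ← Real.rpow_mul (by norm_num)]
    rw [show (3:ℝ)/2 * (2:ℕ) = ((3:ℕ):ℝ) by push_cast; ring, Real.rpow_natCast]
    norm_num
  have h2 : 0 ≤ (2:ℝ) ^ ((3:ℝ)/2) := Real.rpow_nonneg (by norm_num) _
  nlinarith

lemma half_rpow_le {r p : ℝ} (hr0 : 0 < r) (hp : p ≤ 0) (c : ℝ)
    (hc : (2:ℝ)^(-p) ≤ c) : (r/2) ^ p ≤ c * r ^ p := by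
  have h1 : (r/2) ^ p = r ^ p * (2:ℝ)^(-p) := by
    rw [Real.div_rpow hr0.le (by norm_num : (0:ℝ) ≤ 2), Real.rpow_neg (by norm_num)]
    field_simp
  rw [h1]
  have := Real.rpow_pos_of_pos hr0 p
  nlinarith

lemma two_pow_52_le : (2:ℝ) ^ ((5:ℝ)/2) ≤ 6 := by
  have h1 : ((2:ℝ) ^ ((5:ℝ)/2))^2 = 32 := by
    rw [← Real.rpow_natCast ((2:ℝ) ^ ((5:ℝ)/2)) 2, ← Real.rpow_mul (by norm_num)]
    rw [show (5:ℝ)/2 * (2:ℕ) = ((5:ℕ):ℝ) by push_cast; ring, Real.rpow_natCast]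
    norm_num
  have h2 : 0 ≤ (2:ℝ) ^ ((5:ℝ)/2) := Real.rpow_nonneg (by norm_num) _
  nlinarith

/-! ### helpers: definite integral bounds -/

lemma int_inv_sqrt {a b : ℝ} (h0 : 0 < a) (hab : a ≤ b) :
    ∫ s in a..b, s ^ (-(1:ℝ)/2) ≤ 2 * b ^ ((1:ℝ)/2) := by
  have hder : ∀ x ∈ uIcc a b, HasDerivAt (fun s : ℝ => 2 * s ^ ((1:ℝ)/2))
      (x ^ (-(1:ℝ)/2)) x := by
    intro x hx
    have hx0 : 0 < x := by
      rw [uIcc_of_le hab] at hx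
      exact lt_of_lt_of_le h0 hx.1
    have h := (Real.hasDerivAt_rpow_const (x := x) (p := (1:ℝ)/2) (Or.inl hx0.ne')).const_mul 2
    refine h.congr_deriv ?_
    rw [show (1:ℝ)/2 - 1 = -(1:ℝ)/2 by norm_num]
    ring
  have hint : IntervalIntegrable (fun s : ℝ => s ^ (-(1:ℝ)/2)) volume a b := by
    apply ContinuousOn.intervalIntegrable
    apply ContinuousOn.mono (continuousOn_id.rpow_const
      (fun x (hx : x ∈ {s : ℝ | 0 < s}) => Or.inl (ne_of_gt hx)))
    exact uIcc_sub h0 hab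
  rw [intervalIntegral.integral_eq_sub_of_hasDerivAt hder hint]
  have h1 : 0 ≤ a ^ ((1:ℝ)/2) := Real.rpow_nonneg h0.le _
  linarith

lemma lorentz_cont (ε r k : ℝ) (hε : 0 < ε) :
    Continuous (fun s : ℝ => (ε^2 + ((s - r)/(k*r))^2)⁻¹) := by
  apply Continuous.inv₀
  · continuity
  · intro x
    positivity

lemma int_lorentz {ε r c₁ c₂ : ℝ} (hε : 0 < ε) (hr0 : 0 < r) (k : ℝ) (hk : 0 < k) :
    ∫ s in c₁..c₂, (ε^2 + ((s - r)/(k*r))^2)⁻¹ ≤ Real.pi * (k*r)/ε := by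
  have hkr : 0 < k * r := by positivity
  have hder : ∀ x ∈ uIcc c₁ c₂, HasDerivAt
      (fun s : ℝ => (k*r/ε) * Real.arctan ((s - r)/(k*r*ε)))
      ((ε^2 + ((x - r)/(k*r))^2)⁻¹) x := by
    intro x _
    have h1 : HasDerivAt (fun s : ℝ => (s - r)/(k*r*ε)) (1/(k*r*ε)) x := by
      have := ((hasDerivAt_id x).sub_const r).div_const (k*r*ε)
      simpa using this
    have h2 := (h1.arctan).const_mul (k*r/ε)
    refine h2.congr_deriv ?_
    have hx : 0 < 1 + ((x - r)/(k*r*ε))^2 := by positivity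
    field_simp
  have hint : IntervalIntegrable (fun s : ℝ => (ε^2 + ((s - r)/(k*r))^2)⁻¹) volume c₁ c₂ :=
    (lorentz_cont ε r k hε).intervalIntegrable _ _
  rw [intervalIntegral.integral_eq_sub_of_hasDerivAt hder hint]
  have hb1 := Real.arctan_lt_pi_div_two ((c₂ - r)/(k*r*ε))
  have hb2 := Real.neg_pi_div_two_lt_arctan ((c₁ - r)/(k*r*ε))
  have hπ : 0 < Real.pi := Real.pi_pos
  have hc : 0 < k*r/ε := by positivity
  have e1 := mul_lt_mul_of_pos_left hb1 hc
  have e2 := mul_lt_mul_of_pos_left hb2 hc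
  have he : Real.pi * (k*r)/ε = (k*r/ε) * (Real.pi/2) + (k*r/ε) * (Real.pi/2) := by ring
  rw [he]
  nlinarith

/-- integral of the lorentzian against the pure power tail, left version (s < r) -/
lemma int_lorentz_left {ε r c₁ c₂ : ℝ} (hε : 0 < ε) (hr0 : 0 < r) (hc : c₁ ≤ c₂)
    (hc2 : c₂ < r) (k : ℝ) (hk : 0 < k) :
    ∫ s in c₁..c₂, (ε^2 + ((s - r)/(k*r))^2)⁻¹ ≤ k^2*r^2/(r - c₂) := by
  have hmono : ∫ s in c₁..c₂, (ε^2 + ((s - r)/(k*r))^2)⁻¹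
      ≤ ∫ s in c₁..c₂, (k*r)^2 * ((r - s)^2)⁻¹ := by
    apply intervalIntegral.integral_mono_on hc
      ((lorentz_cont ε r k hε).intervalIntegrable _ _)
    · apply ContinuousOn.intervalIntegrable
      apply ContinuousOn.mul continuousOn_const
      apply ContinuousOn.inv₀
      · fun_prop
      · intro x hx
        rw [uIcc_of_le hc] at hx
        have hxx : x < r := lt_of_le_of_lt hx.2 hc2
        exact pow_ne_zero 2 (ne_of_gt (by linarith : (0:ℝ) < r - x))
    · intro x hx
      have hxr : x < r := lt_of_le_of_lt hx.2 hc2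
      have hrx : 0 < r - x := by linarith
      have h1 : ((x - r)/(k*r))^2 = (r - x)^2 / (k*r)^2 := by
        rw [div_pow]
        congr 1
        ring
      have h0 : 0 < (r-x)^2/(k*r)^2 := by positivity
      calc (ε^2 + ((x - r)/(k*r))^2)⁻¹ ≤ ((r-x)^2/(k*r)^2)⁻¹ := by
            rw [h1]
            apply inv_anti₀ h0
            nlinarith [sq_nonneg ε]
        _ = (k*r)^2 * ((r - x)^2)⁻¹ := by
            rw [inv_div, div_eq_mul_inv]
  apply le_trans hmono
  have hder : ∀ x ∈ uIcc c₁ c₂, HasDerivAt (fun s : ℝ => (k*r)^2 * (r - s)⁻¹)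
      ((k*r)^2 * ((r - x)^2)⁻¹) x := by
    intro x hx
    rw [uIcc_of_le hc] at hx
    have hxr : x < r := lt_of_le_of_lt hx.2 hc2
    have h1 : HasDerivAt (fun s : ℝ => r - s) (-1) x := by
      simpa using (hasDerivAt_id x).const_sub r
    have h2 := (h1.inv (by linarith : r - x ≠ 0)).const_mul ((k*r)^2)
    refine h2.congr_deriv ?_
    field_simp
  have hint : IntervalIntegrable (fun s : ℝ => (k*r)^2 * ((r - s)^2)⁻¹) volume c₁ c₂ := by
    apply ContinuousOn.intervalIntegrable
    apply ContinuousOn.mul continuousOn_const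
    apply ContinuousOn.inv₀
    · fun_prop
    · intro x hx
      rw [uIcc_of_le hc] at hx
      have hxx : x < r := lt_of_le_of_lt hx.2 hc2
      exact pow_ne_zero 2 (ne_of_gt (by linarith : (0:ℝ) < r - x))
  rw [intervalIntegral.integral_eq_sub_of_hasDerivAt hder hint]
  have h3 : 0 < r - c₂ := by linarith
  have h4 : 0 < r - c₁ := by linarith
  have h5 : 0 ≤ (k*r)^2 * (r - c₁)⁻¹ := by positivity
  have h6 : (k*r)^2 * (r - c₂)⁻¹ = k^2*r^2/(r-c₂) := by
    rw [mul_pow, div_eq_mul_inv]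
  linarith [h6]

/-- right version (s > r) -/
lemma int_lorentz_right {ε r c₃ c₄ : ℝ} (hε : 0 < ε) (hr0 : 0 < r) (hc : c₃ ≤ c₄)
    (hc3 : r < c₃) (k : ℝ) (hk : 0 < k) :
    ∫ s in c₃..c₄, (ε^2 + ((s - r)/(k*r))^2)⁻¹ ≤ k^2*r^2/(c₃ - r) := by
  have hmono : ∫ s in c₃..c₄, (ε^2 + ((s - r)/(k*r))^2)⁻¹
      ≤ ∫ s in c₃..c₄, (k*r)^2 * ((s - r)^2)⁻¹ := by
    apply intervalIntegral.integral_mono_on hc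
      ((lorentz_cont ε r k hε).intervalIntegrable _ _)
    · apply ContinuousOn.intervalIntegrable
      apply ContinuousOn.mul continuousOn_const
      apply ContinuousOn.inv₀
      · fun_prop
      · intro x hx
        rw [uIcc_of_le hc] at hx
        have hxx : r < x := lt_of_lt_of_le hc3 hx.1
        exact pow_ne_zero 2 (ne_of_gt (by linarith : (0:ℝ) < x - r))
    · intro x hx
      have hxr : r < x := lt_of_lt_of_le hc3 hx.1
      have hrx : 0 < x - r := by linarith
      have h1 : ((x - r)/(k*r))^2 = (x - r)^2 / (k*r)^2 := by rw [div_pow]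
      have h0 : 0 < (x-r)^2/(k*r)^2 := by positivity
      calc (ε^2 + ((x - r)/(k*r))^2)⁻¹ ≤ ((x-r)^2/(k*r)^2)⁻¹ := by
            rw [h1]
            apply inv_anti₀ h0
            nlinarith [sq_nonneg ε]
        _ = (k*r)^2 * ((x - r)^2)⁻¹ := by
            rw [inv_div, div_eq_mul_inv]
  apply le_trans hmono
  have hder : ∀ x ∈ uIcc c₃ c₄, HasDerivAt (fun s : ℝ => -((k*r)^2 * (s - r)⁻¹))
      ((k*r)^2 * ((x - r)^2)⁻¹) x := by
    intro x hx
    rw [uIcc_of_le hc] at hx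
    have hxr : r < x := lt_of_lt_of_le hc3 hx.1
    have h1 : HasDerivAt (fun s : ℝ => s - r) (1 : ℝ) x := by
      simpa using (hasDerivAt_id x).sub_const r
    have h2 := (((h1.inv (by linarith : x - r ≠ 0)).const_mul ((k*r)^2))).neg
    refine h2.congr_deriv ?_
    field_simp
  have hint : IntervalIntegrable (fun s : ℝ => (k*r)^2 * ((s - r)^2)⁻¹) volume c₃ c₄ := by
    apply ContinuousOn.intervalIntegrable
    apply ContinuousOn.mul continuousOn_const
    apply ContinuousOn.inv₀
    · fun_prop
    · intro x hx
      rw [uIcc_of_le hc] at hx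
      have hxx : r < x := lt_of_lt_of_le hc3 hx.1
      exact pow_ne_zero 2 (ne_of_gt (by linarith : (0:ℝ) < x - r))
  rw [intervalIntegral.integral_eq_sub_of_hasDerivAt hder hint]
  have h3 : 0 < c₃ - r := by linarith
  have h4 : 0 < c₄ - r := by linarith
  have h5 : 0 ≤ (k*r)^2 * (c₄ - r)⁻¹ := by positivity
  have h6 : (k*r)^2 * (c₃ - r)⁻¹ = k^2*r^2/(c₃-r) := by
    rw [mul_pow, div_eq_mul_inv]
  linarith [h6]

/-! ### master scalar lemmas -/

lemma masterQ {ε r t ℓ : ℝ} (hε : 0 < ε) (hε1 : ε ≤ 1) (hr : 1 < r) (ht : 0 < t)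
    (hℓ : 0 < ℓ) (hℓL : r/(2*(ε*r + Real.sqrt r + max (t-r) 0)) ≤ ℓ) (hℓt : t - r ≤ ℓ) :
    min (1/ε) (r/ℓ) * (ε*r + Real.sqrt r + max (t-r) 0) ≤ 8*r := by
  have hr0 : 0 < r := lt_trans one_pos hr
  set q := Real.sqrt r with hq
  have hq2 : q^2 = r := sqrt_sq' hr0.le
  have hq1 : 1 < q := one_lt_sqrt hr
  set M := max (t-r) 0 with hM
  have hM0 : 0 ≤ M := le_max_right _ _
  have hMℓ : M ≤ ℓ := max_le hℓt hℓ.le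
  set m := min (1/ε) (r/ℓ) with hm
  have hm0 : 0 ≤ m := le_min (by positivity) (by positivity)
  have hD0 : 0 < ε*r + q + M := by nlinarith
  have hq0 : 0 < q := lt_trans one_pos hq1
  have hb1 : m * (ε*r) ≤ r := by
    have h1 : m ≤ 1/ε := min_le_left _ _
    calc m * (ε*r) ≤ (1/ε) * (ε*r) := mul_le_mul_of_nonneg_right h1 (by positivity)
      _ = r := by field_simp
  have hb3 : m * M ≤ r := by
    have h1 : m ≤ r/ℓ := min_le_right _ _
    calc m * M ≤ (r/ℓ) * M := mul_le_mul_of_nonneg_right h1 hM0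
      _ ≤ (r/ℓ) * ℓ := mul_le_mul_of_nonneg_left hMℓ (by positivity)
      _ = r := by field_simp
  have hb2 : m * q ≤ 6*r := by
    rcases le_or_gt (1/ε) q with hcase | hcase
    · have h1 : m ≤ q := le_trans (min_le_left _ _) hcase
      have := mul_le_mul_of_nonneg_right h1 hq0.le
      nlinarith
    · have hεq : q * ε < 1 := by
        rw [← lt_div_iff₀ hε]
        exact hcase
      have hεr : ε * r < q := by nlinarith [mul_lt_mul_of_pos_right hεq hq0]
      rcases le_or_gt ℓ q with hl | hl
      · have hrl : r ≤ ℓ * (2*(ε*r + q + M)) := by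
          rwa [div_le_iff₀ (by positivity)] at hℓL
        have hDle : ε*r + q + M ≤ 3*q := by linarith [le_trans hMℓ hl]
        have hr6 : r ≤ 6*q*ℓ := by nlinarith
        have h2 : r/ℓ ≤ 6*q := by
          rw [div_le_iff₀ hℓ]
          linarith
        have h1 : m ≤ 6*q := le_trans (min_le_right _ _) h2
        have := mul_le_mul_of_nonneg_right h1 hq0.le
        nlinarith
      · have h2 : r/ℓ ≤ q := by
          rw [div_le_iff₀ hℓ]
          nlinarith
        have h1 : m ≤ q := le_trans (min_le_right _ _) h2
        have := mul_le_mul_of_nonneg_right h1 hq0.le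
        nlinarith
  have hexp : m * (ε*r + q + M) = m*(ε*r) + m*q + m*M := by ring
  linarith [hexp.le, hexp.ge]

lemma masterX {ε r t ℓ : ℝ} (hε : 0 < ε) (hε1 : ε ≤ 1) (hr : 1 < r) (ht : 0 < t)
    (hℓ : 0 < ℓ) (hℓL : r/(2*(ε*r + Real.sqrt r + max (t-r) 0)) ≤ ℓ) (hℓt : t - r ≤ ℓ) :
    min (r/ε) (r^2/ℓ) * (ε*r + Real.sqrt r + max (t-r) 0) ≤ 8*r^2 := by
  have hr0 : 0 < r := lt_trans one_pos hr
  have key := masterQ hε hε1 hr ht hℓ hℓL hℓt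
  have heq : min (r/ε) (r^2/ℓ) = r * min (1/ε) (r/ℓ) := by
    rw [mul_min_of_nonneg _ _ hr0.le]
    congr 1
    · field_simp
    · rw [pow_two]
      ring_nf
  rw [heq, mul_assoc]
  calc r * (min (1/ε) (r/ℓ) * (ε*r + Real.sqrt r + max (t-r) 0)) ≤ r * (8*r) := by
        apply mul_le_mul_of_nonneg_left key hr0.le
    _ = 8*r^2 := by ring

/-! ### more rpow helpers -/

lemma rpow_m32_mul_sq {s : ℝ} (hs : 0 < s) : s ^ (-(3:ℝ)/2) * s^2 = s ^ ((1:ℝ)/2) := by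
  rw [← Real.rpow_natCast s 2, ← Real.rpow_add hs]
  norm_num

lemma rpow_m52_mul_sq' {s : ℝ} (hs : 0 < s) : s ^ (-(5:ℝ)/2) * s^2 = s ^ (-(1:ℝ)/2) :=
  rpow_m52_mul_sq hs

lemma rpow_half_div_sq {r : ℝ} (hr0 : 0 < r) : r ^ ((1:ℝ)/2) / r^2 = r ^ (-(3:ℝ)/2) := by
  rw [div_eq_mul_inv, ← Real.rpow_natCast r 2, ← Real.rpow_neg hr0.le, ← Real.rpow_add hr0]
  norm_num

lemma half_rpow32 {r : ℝ} (hr0 : 0 < r) : (r/2) ^ (-(3:ℝ)/2) ≤ 3 * r ^ (-(3:ℝ)/2) := by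
  apply half_rpow_le hr0 (by norm_num)
  rw [show -(-(3:ℝ)/2) = (3:ℝ)/2 by norm_num]
  exact two_pow_32_le

lemma half_rpow52 {r : ℝ} (hr0 : 0 < r) : (r/2) ^ (-(5:ℝ)/2) ≤ 6 * r ^ (-(5:ℝ)/2) := by
  apply half_rpow_le hr0 (by norm_num)
  rw [show -(-(5:ℝ)/2) = (5:ℝ)/2 by norm_num]
  exact two_pow_52_le

lemma D_pos {ε r t : ℝ} (hε : 0 < ε) (hr : 1 < r) :
    0 < ε*r + Real.sqrt r + max (t-r) 0 := by
  have h1 : 0 < Real.sqrt r := lt_trans one_pos (one_lt_sqrt hr)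
  have h2 : 0 ≤ max (t-r) 0 := le_max_right _ _
  have hr0 : 0 < r := lt_trans one_pos hr
  nlinarith

lemma D_le {ε r t : ℝ} (hε : 0 < ε) (hε1 : ε ≤ 1) (hr : 1 < r) (htr : t < 100*r) :
    ε*r + Real.sqrt r + max (t-r) 0 ≤ 101*r := by
  have hr0 : 0 < r := lt_trans one_pos hr
  have hq1 : 1 < Real.sqrt r := one_lt_sqrt hr
  have hq2 : Real.sqrt r ^ 2 = r := sqrt_sq' hr0.le
  have h1 : Real.sqrt r ≤ r := by nlinarith
  have h2 : max (t-r) 0 ≤ 99*r := max_le (by linarith) (by positivity)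
  nlinarith

lemma conv_m32 {ε r t : ℝ} (hε : 0 < ε) (hε1 : ε ≤ 1) (hr : 1 < r) (htr : t < 100*r) :
    r ^ (-(3:ℝ)/2) ≤ 101 * r ^ (-(1:ℝ)/2) / (ε*r + Real.sqrt r + max (t-r) 0) := by
  have hr0 : 0 < r := lt_trans one_pos hr
  have hD0 := D_pos (t := t) hε hr
  have hD101 := D_le hε hε1 hr htr
  have h1 : r ^ (-(3:ℝ)/2) = r ^ (-(1:ℝ)/2) / r := by
    rw [eq_div_iff (ne_of_gt hr0)]
    exact rpow_m32_mul hr0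
  rw [h1, div_le_div_iff₀ hr0 hD0]
  have h2 : 0 ≤ r ^ (-(1:ℝ)/2) := Real.rpow_nonneg hr0.le _
  nlinarith

/-! ### lower bounds for gd in the various regions -/

lemma gd_lb_small {ε r s : ℝ} (hr0 : 0 < r) (hs0 : 0 < s) (hsr : s ≤ r/2) :
    3*r^2/(16*s^2) ≤ ‖gd ε r s‖ := by
  apply le_trans _ (norm_gd_ge_im ε r s)
  have h1 : (1:ℝ)/4 - r^2/(4*s^2) ≤ 0 := by
    rw [sub_nonpos, div_le_div_iff₀ (by norm_num) (by positivity)]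
    nlinarith
  rw [abs_of_nonpos h1]
  rw [neg_sub, le_sub_iff_add_le, div_add_div _ _ (by positivity : (16:ℝ)*s^2 ≠ 0) (by norm_num : (4:ℝ) ≠ 0)]
  rw [div_le_div_iff₀ (by positivity) (by positivity)]
  have h4 : 4*s^2 ≤ r^2 := by nlinarith [sq_nonneg (r - 2*s), mul_pos hs0 hs0]
  nlinarith [mul_nonneg (by positivity : (0:ℝ) ≤ 16*s^2) (sub_nonneg.mpr h4)]

lemma gd_lb_left {ε r s : ℝ} (hr0 : 0 < r) (hs0 : 0 < s) (hsr : s ≤ r) :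
    (r - s)/(4*r) ≤ ‖gd ε r s‖ := by
  apply le_trans _ (norm_gd_ge_im ε r s)
  have h1 : (1:ℝ)/4 - r^2/(4*s^2) ≤ 0 := by
    rw [sub_nonpos, div_le_div_iff₀ (by norm_num) (by positivity)]
    nlinarith
  rw [abs_of_nonpos h1, neg_sub]
  rw [div_le_iff₀ (by positivity : (0:ℝ) < 4*r)]
  rw [sub_mul, div_mul_eq_mul_div, div_mul_eq_mul_div, div_sub_div _ _ (by positivity : (4:ℝ)*s^2 ≠ 0) (by norm_num : (4:ℝ) ≠ 0)]
  rw [le_div_iff₀ (by positivity)]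
  nlinarith [mul_nonneg (sub_nonneg.mpr hsr) (mul_pos hs0 hs0).le,
    mul_nonneg (sub_nonneg.mpr hsr) (mul_pos hr0 hs0).le]

lemma gd_sq_lb_left {ε r s : ℝ} (hr0 : 0 < r) (hs0 : 0 < s) (hsr : s ≤ r) :
    ε^2 + ((s - r)/(4*r))^2 ≤ ‖gd ε r s‖^2 := by
  rw [sq_norm_gd]
  have h1 := gd_lb_left (ε := ε) hr0 hs0 hsr
  have h2 : ((s - r)/(4*r))^2 = ((r - s)/(4*r))^2 := by
    rw [div_pow, div_pow]
    congr 1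
    ring
  rw [h2]
  have h3 : ((r - s)/(4*r))^2 ≤ (1/4 - r^2/(4*s^2))^2 := by
    have ha : 0 ≤ (r - s)/(4*r) := by
      apply div_nonneg (by linarith) (by positivity)
    have hb := abs_of_nonpos (a := (1:ℝ)/4 - r^2/(4*s^2)) (by
      rw [sub_nonpos, div_le_div_iff₀ (by norm_num) (by positivity)]
      nlinarith)
    have h4 : (r - s)/(4*r) ≤ |1/4 - r^2/(4*s^2)| := by
      rw [hb, neg_sub]
      have h1' := gd_lb_left (ε := ε) hr0 hs0 hsr
      -- reprove inequality directly
      rw [div_le_iff₀ (by positivity : (0:ℝ) < 4*r), sub_mul, div_mul_eq_mul_div,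
        div_mul_eq_mul_div, div_sub_div _ _ (by positivity : (4:ℝ)*s^2 ≠ 0) (by norm_num : (4:ℝ) ≠ 0),
        le_div_iff₀ (by positivity)]
      nlinarith [mul_nonneg (sub_nonneg.mpr hsr) (mul_pos hs0 hs0).le,
        mul_nonneg (sub_nonneg.mpr hsr) (mul_pos hr0 hs0).le]
    calc ((r - s)/(4*r))^2 ≤ |1/4 - r^2/(4*s^2)|^2 := by
          apply sq_le_sq' _ h4
          have := abs_nonneg ((1:ℝ)/4 - r^2/(4*s^2))
          linarith
      _ = (1/4 - r^2/(4*s^2))^2 := sq_abs _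
  linarith

lemma gd_lb_right {ε r s : ℝ} (hr0 : 0 < r) (hsr : r ≤ s) (hs2 : s ≤ 2*r) :
    (s - r)/(8*r) ≤ ‖gd ε r s‖ := by
  have hs0 : 0 < s := lt_of_lt_of_le hr0 hsr
  apply le_trans _ (norm_gd_ge_im ε r s)
  have h1 : (0:ℝ) ≤ 1/4 - r^2/(4*s^2) := by
    rw [sub_nonneg, div_le_div_iff₀ (by positivity) (by norm_num)]
    nlinarith
  rw [abs_of_nonneg h1]
  rw [div_le_iff₀ (by positivity : (0:ℝ) < 8*r)]
  rw [sub_mul, div_mul_eq_mul_div, div_mul_eq_mul_div, div_sub_div _ _ (by norm_num : (4:ℝ) ≠ 0) (by positivity : (4:ℝ)*s^2 ≠ 0)]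
  rw [le_div_iff₀ (by positivity)]
  nlinarith [mul_nonneg (sub_nonneg.mpr hsr) (mul_pos hr0 hs0).le,
    mul_nonneg (sub_nonneg.mpr hsr) (mul_pos hr0 hr0).le,
    mul_nonneg (sub_nonneg.mpr hsr) (sub_nonneg.mpr hs2)]

lemma gd_sq_lb_right {ε r s : ℝ} (hr0 : 0 < r) (hsr : r ≤ s) (hs2 : s ≤ 2*r) :
    ε^2 + ((s - r)/(8*r))^2 ≤ ‖gd ε r s‖^2 := by
  rw [sq_norm_gd]
  have hs0 : 0 < s := lt_of_lt_of_le hr0 hsr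
  have h1 : (0:ℝ) ≤ 1/4 - r^2/(4*s^2) := by
    rw [sub_nonneg, div_le_div_iff₀ (by positivity) (by norm_num)]
    nlinarith
  have ha : 0 ≤ (s - r)/(8*r) := div_nonneg (by linarith) (by positivity)
  have h4 : (s - r)/(8*r) ≤ 1/4 - r^2/(4*s^2) := by
    have := gd_lb_right (ε := ε) hr0 hsr hs2
    rw [div_le_iff₀ (by positivity : (0:ℝ) < 8*r), sub_mul, div_mul_eq_mul_div,
      div_mul_eq_mul_div, div_sub_div _ _ (by norm_num : (4:ℝ) ≠ 0) (by positivity : (4:ℝ)*s^2 ≠ 0),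
      le_div_iff₀ (by positivity)]
    nlinarith [mul_nonneg (sub_nonneg.mpr hsr) (mul_pos hr0 hs0).le,
      mul_nonneg (sub_nonneg.mpr hsr) (mul_pos hr0 hr0).le,
      mul_nonneg (sub_nonneg.mpr hsr) (sub_nonneg.mpr hs2)]
  have h3 : ((s - r)/(8*r))^2 ≤ (1/4 - r^2/(4*s^2))^2 := by
    apply sq_le_sq' _ h4
    linarith
  linarith

/-! ### piece P3 : the stationary window -/

lemma pieceP3 {ε r t : ℝ} (hε : 0 < ε) (hε1 : ε ≤ 1) (hr : 1 < r) (ht : 0 < t) :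
    ‖∫ s in (max t (r - r/(2*(ε*r + Real.sqrt r + max (t-r) 0))))..(max t (r + r/(2*(ε*r + Real.sqrt r + max (t-r) 0)))), Fi ε r t s‖
      ≤ 3 * r ^ (-(1:ℝ)/2) / (ε*r + Real.sqrt r + max (t-r) 0) := by
  have hr0 : 0 < r := lt_trans one_pos hr
  set D := ε*r + Real.sqrt r + max (t-r) 0 with hD
  have hD0 : 0 < D := D_pos hε hr
  set L : ℝ := r/(2*D) with hLdef
  have hL0 : 0 < L := by positivity
  have hq1 : 1 < Real.sqrt r := one_lt_sqrt hr
  have hDgt1 : 1 < D := by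
    have : 0 ≤ max (t-r) 0 := le_max_right _ _
    nlinarith
  have hLr2 : L ≤ r/2 := by
    rw [hLdef, div_le_div_iff₀ (by positivity) (by norm_num)]
    nlinarith
  set c₂ := max t (r - L) with hc2
  set c₃ := max t (r + L) with hc3
  have hc23 : c₂ ≤ c₃ := max_le_max (le_refl t) (by linarith)
  have hub : ∀ x ∈ uIoc c₂ c₃, ‖Fi ε r t x‖ ≤ 3 * r ^ (-(3:ℝ)/2) := by
    intro x hx
    rw [uIoc_of_le hc23] at hx
    have hx1 : c₂ < x := hx.1
    have hxt : t ≤ x := le_trans (le_max_left _ _) hx1.le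
    have hxr2 : r/2 ≤ x := by
      have : r - L ≤ c₂ := le_max_right _ _
      have : r/2 ≤ r - L := by linarith
      linarith
    have hx0 : 0 < x := by linarith
    calc ‖Fi ε r t x‖ ≤ x ^ (-(3:ℝ)/2) := norm_Fi_le hε.le hxt hx0
      _ ≤ (r/2) ^ (-(3:ℝ)/2) := rpow_anti (by positivity) hxr2 (by norm_num)
      _ ≤ 3 * r ^ (-(3:ℝ)/2) := half_rpow32 hr0
  have hkey := intervalIntegral.norm_integral_le_of_norm_le_const hub
  apply le_trans hkey
  have hdiff : |c₃ - c₂| ≤ 2*L := by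
    rw [abs_of_nonneg (by linarith)]
    rcases le_total t (r - L) with h | h
    · rw [hc2, hc3, max_eq_right h, max_eq_right (by linarith)]
      linarith
    · rw [hc2, max_eq_left h]
      rcases le_total t (r + L) with h' | h'
      · rw [hc3, max_eq_right h']
        linarith
      · rw [hc3, max_eq_left h']
        linarith
  have hfin : 3 * r ^ (-(3:ℝ)/2) * (2*L) = 3 * r ^ (-(1:ℝ)/2) / D := by
    rw [hLdef]
    field_simp
    have h := rpow_m32_mul hr0
    rw [neg_div, neg_div] at h
    exact h
  calc 3 * r ^ (-(3:ℝ)/2) * |c₃ - c₂| ≤ 3 * r ^ (-(3:ℝ)/2) * (2*L) := by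
        apply mul_le_mul_of_nonneg_left hdiff (by positivity)
    _ = 3 * r ^ (-(1:ℝ)/2) / D := hfin

/-! ### piece P1 : small s -/

lemma norm_wf_small {ε r s : ℝ} (hε : 0 < ε) (hr0 : 0 < r) (hs0 : 0 < s) (hsr : s ≤ r/2) :
    ‖wf ε r s‖ ≤ 6 * r ^ (-(3:ℝ)/2) := by
  rw [norm_wf_eq r hs0]
  have hgd := gd_lb_small (ε := ε) hr0 hs0 hsr
  have hgd0 : (0:ℝ) < 3*r^2/(16*s^2) := by positivity
  calc s ^ (-(3:ℝ)/2) / ‖gd ε r s‖ ≤ s ^ (-(3:ℝ)/2) / (3*r^2/(16*s^2)) :=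
        div_le_div_of_nonneg_left (Real.rpow_nonneg hs0.le _) hgd0 hgd
    _ = (16/3) * (s ^ (-(3:ℝ)/2) * s^2) / r^2 := by
        field_simp
    _ = (16/3) * s ^ ((1:ℝ)/2) / r^2 := by rw [rpow_m32_mul_sq hs0]
    _ ≤ (16/3) * r ^ ((1:ℝ)/2) / r^2 := by
        apply div_le_div_of_nonneg_right ?_ (by positivity : (0:ℝ) ≤ r^2)
        exact mul_le_mul_of_nonneg_left
          (Real.rpow_le_rpow hs0.le (by linarith) (by norm_num)) (by norm_num)
    _ = (16/3) * r ^ (-(3:ℝ)/2) := by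
        rw [mul_div_assoc, rpow_half_div_sq hr0]
    _ ≤ 6 * r ^ (-(3:ℝ)/2) := by
        have := Real.rpow_nonneg hr0.le (-(3:ℝ)/2)
        nlinarith

lemma norm_Ei_small {ε r t s : ℝ} (hε : 0 < ε) (hr0 : 0 < r) (hts : t ≤ s) (hs0 : 0 < s)
    (hsr : s ≤ r/2) :
    ‖Ei ε r t s‖ ≤ 23 * s ^ (-(1:ℝ)/2) / r^2 := by
  have hgd := gd_lb_small (ε := ε) hr0 hs0 hsr
  have hgd0 : (0:ℝ) < 3*r^2/(16*s^2) := by positivity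
  have hG0 : 0 < ‖gd ε r s‖ := norm_gd_pos hε r s
  have hW := norm_Wd_le hε r hs0
  have ht1 : (3:ℝ)/2 * s ^ (-(5:ℝ)/2) / ‖gd ε r s‖ ≤ 8 * s ^ (-(1:ℝ)/2) / r^2 := by
    calc (3:ℝ)/2 * s ^ (-(5:ℝ)/2) / ‖gd ε r s‖ ≤ (3:ℝ)/2 * s ^ (-(5:ℝ)/2) / (3*r^2/(16*s^2)) :=
          div_le_div_of_nonneg_left (by positivity) hgd0 hgd
      _ = 8 * (s ^ (-(5:ℝ)/2) * s^2) / r^2 := by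
          field_simp
          ring
      _ = 8 * s ^ (-(1:ℝ)/2) / r^2 := by rw [rpow_m52_mul_sq hs0]
  have ht2 : s ^ (-(3:ℝ)/2) * (r^2/(2*s^3)) / ‖gd ε r s‖^2 ≤ 15 * s ^ (-(1:ℝ)/2) / r^2 := by
    have hsq : (3*r^2/(16*s^2))^2 ≤ ‖gd ε r s‖^2 := by
      apply sq_le_sq' _ hgd
      nlinarith
    calc s ^ (-(3:ℝ)/2) * (r^2/(2*s^3)) / ‖gd ε r s‖^2
        ≤ s ^ (-(3:ℝ)/2) * (r^2/(2*s^3)) / ((3*r^2/(16*s^2))^2) :=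
          div_le_div_of_nonneg_left (by positivity) (by positivity) hsq
      _ = (128/9) * (s ^ (-(3:ℝ)/2) * s) / r^2 := by
          field_simp
          ring
      _ = (128/9) * s ^ (-(1:ℝ)/2) / r^2 := by rw [rpow_m32_mul hs0]
      _ ≤ 15 * s ^ (-(1:ℝ)/2) / r^2 := by
          have h0 : 0 ≤ s ^ (-(1:ℝ)/2) := Real.rpow_nonneg hs0.le _
          have h1 : 0 < r^2 := by positivity
          apply div_le_div_of_nonneg_right ?_ h1.le
          nlinarith
  have hexp := norm_exp_gph_le (r := r) hε.le hts
  unfold Ei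
  rw [norm_mul]
  have hWnn : 0 ≤ ‖Wd ε r s‖ := norm_nonneg _
  have hsum : ‖Wd ε r s‖ ≤ 23 * s ^ (-(1:ℝ)/2) / r^2 := by
    have hadd := add_le_add ht1 ht2
    have h23 : 8 * s ^ (-(1:ℝ)/2) / r^2 + 15 * s ^ (-(1:ℝ)/2) / r^2
        = 23 * s ^ (-(1:ℝ)/2) / r^2 := by ring
    linarith
  calc ‖Complex.exp (gph ε r t s)‖ * ‖Wd ε r s‖ ≤ 1 * ‖Wd ε r s‖ :=
        mul_le_mul_of_nonneg_right hexp hWnn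
    _ = ‖Wd ε r s‖ := one_mul _
    _ ≤ 23 * s ^ (-(1:ℝ)/2) / r^2 := hsum

lemma pieceP1 {ε r t : ℝ} (hε : 0 < ε) (hε1 : ε ≤ 1) (hr : 1 < r) (ht : 0 < t)
    (htr : t < 100*r) :
    ‖∫ s in t..(max t (r/2)), Fi ε r t s‖
      ≤ 5900 * r ^ (-(1:ℝ)/2) / (ε*r + Real.sqrt r + max (t-r) 0) := by
  have hr0 : 0 < r := lt_trans one_pos hr
  have hD0 : 0 < ε*r + Real.sqrt r + max (t-r) 0 := D_pos hε hr
  have hrpos : 0 ≤ 5900 * r ^ (-(1:ℝ)/2) / (ε*r + Real.sqrt r + max (t-r) 0) := by positivity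
  rcases le_or_gt (r/2) t with hcase | hcase
  · rw [max_eq_left hcase, intervalIntegral.integral_same]
    simpa using hrpos
  · rw [max_eq_right hcase.le]
    have hab : t ≤ r/2 := hcase.le
    have hibp := ibp_norm hε r (le_refl t) ht hab
    have hwt : ‖wf ε r t‖ ≤ 6 * r ^ (-(3:ℝ)/2) := norm_wf_small hε hr0 ht hab
    have hwb : ‖wf ε r (r/2)‖ ≤ 6 * r ^ (-(3:ℝ)/2) :=
      norm_wf_small hε hr0 (by positivity) (le_refl _)
    have hEb : ∫ s in t..(r/2), ‖Ei ε r t s‖ ≤ 46 * r ^ (-(3:ℝ)/2) := by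
      have hsub := uIcc_sub ht hab
      have hint1 : IntervalIntegrable (fun s => ‖Ei ε r t s‖) volume t (r/2) :=
        (((continuousOn_Ei hε r t).mono hsub).norm).intervalIntegrable
      have hint2 : IntervalIntegrable (fun s : ℝ => 23 * s ^ (-(1:ℝ)/2) / r^2) volume t (r/2) := by
        apply ContinuousOn.intervalIntegrable
        apply ContinuousOn.div_const
        apply ContinuousOn.const_smul ?_ (23:ℝ)
        apply ContinuousOn.mono (continuousOn_id.rpow_const
          (fun x (hx : x ∈ {s : ℝ | 0 < s}) => Or.inl (ne_of_gt hx)))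
        exact hsub
      have hmono := intervalIntegral.integral_mono_on hab hint1 hint2 (by
        intro x hx
        exact norm_Ei_small hε hr0 hx.1 (lt_of_lt_of_le ht hx.1) hx.2)
      apply le_trans hmono
      have hval : ∫ s in t..(r/2), 23 * s ^ (-(1:ℝ)/2) / r^2
          = (23/r^2) * ∫ s in t..(r/2), s ^ (-(1:ℝ)/2) := by
        rw [← intervalIntegral.integral_const_mul]
        congr 1
        funext x
        ring
      rw [hval]
      have hint3 := int_inv_sqrt ht hab
      have h12 : ((r:ℝ)/2) ^ ((1:ℝ)/2) ≤ r ^ ((1:ℝ)/2) :=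
        Real.rpow_le_rpow (by positivity) (by linarith) (by norm_num)
      have hnn : 0 ≤ ∫ s in t..(r/2), s ^ (-(1:ℝ)/2) := by
        apply intervalIntegral.integral_nonneg hab
        intro x hx
        exact Real.rpow_nonneg (le_of_lt (lt_of_lt_of_le ht hx.1)) _
      calc (23/r^2) * ∫ s in t..(r/2), s ^ (-(1:ℝ)/2)
          ≤ (23/r^2) * (2 * r ^ ((1:ℝ)/2)) := by
            apply mul_le_mul_of_nonneg_left _ (by positivity)
            exact le_trans hint3 (by linarith)
        _ = 46 * (r ^ ((1:ℝ)/2) / r^2) := by ring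
        _ = 46 * r ^ (-(3:ℝ)/2) := by rw [rpow_half_div_sq hr0]
    have htotal : ‖∫ s in t..(r/2), Fi ε r t s‖ ≤ 58 * r ^ (-(3:ℝ)/2) := by
      calc ‖∫ s in t..(r/2), Fi ε r t s‖
          ≤ ‖wf ε r t‖ + ‖wf ε r (r/2)‖ + ∫ s in t..(r/2), ‖Ei ε r t s‖ := hibp
        _ ≤ 6 * r ^ (-(3:ℝ)/2) + 6 * r ^ (-(3:ℝ)/2) + 46 * r ^ (-(3:ℝ)/2) := by
            linarith
        _ = 58 * r ^ (-(3:ℝ)/2) := by ring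
    have hconv := conv_m32 (t := t) hε hε1 hr htr
    calc ‖∫ s in t..(r/2), Fi ε r t s‖ ≤ 58 * r ^ (-(3:ℝ)/2) := htotal
      _ ≤ 58 * (101 * r ^ (-(1:ℝ)/2) / (ε*r + Real.sqrt r + max (t-r) 0)) := by
          apply mul_le_mul_of_nonneg_left hconv (by norm_num)
      _ = 5858 * r ^ (-(1:ℝ)/2) / (ε*r + Real.sqrt r + max (t-r) 0) := by ring
      _ ≤ 5900 * r ^ (-(1:ℝ)/2) / (ε*r + Real.sqrt r + max (t-r) 0) := by
          apply div_le_div_of_nonneg_right ?_ hD0.le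
          have := Real.rpow_nonneg hr0.le (-(1:ℝ)/2)
          nlinarith

/-! ### piece P2 : left of the window -/

lemma pieceP2 {ε r t : ℝ} (hε : 0 < ε) (hε1 : ε ≤ 1) (hr : 1 < r) (ht : 0 < t)
    (htr : t < 100*r) :
    ‖∫ s in (max t (r/2))..(max t (r - r/(2*(ε*r + Real.sqrt r + max (t-r) 0)))), Fi ε r t s‖
      ≤ 2100 * r ^ (-(1:ℝ)/2) / (ε*r + Real.sqrt r + max (t-r) 0) := by
  have hr0 : 0 < r := lt_trans one_pos hr
  set D := ε*r + Real.sqrt r + max (t-r) 0 with hD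
  have hD0 : 0 < D := D_pos hε hr
  set L : ℝ := r/(2*D) with hLdef
  have hL0 : 0 < L := by positivity
  have hq1 : 1 < Real.sqrt r := one_lt_sqrt hr
  have hDgt1 : 1 < D := by
    have : 0 ≤ max (t-r) 0 := le_max_right _ _
    rw [hD]
    nlinarith
  have hLr2 : L ≤ r/2 := by
    rw [hLdef, div_le_div_iff₀ (by positivity) (by norm_num)]
    nlinarith
  have hrpos : 0 ≤ 2100 * r ^ (-(1:ℝ)/2) / D := by positivity
  rcases le_or_gt (r - L) t with hcase | hcase
  · have he1 : max t (r/2) = t := max_eq_left (by linarith)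
    have he2 : max t (r - L) = t := max_eq_left hcase
    rw [he1, he2, intervalIntegral.integral_same]
    simpa using hrpos
  · -- main case : t < r - L
    set c₁ := max t (r/2) with hc1
    have hc2 : max t (r - L) = r - L := max_eq_right hcase.le
    rw [hc2]
    have hc1ge : r/2 ≤ c₁ := le_max_right _ _
    have hc1le : c₁ ≤ r - L := max_le hcase.le (by linarith)
    have hc10 : 0 < c₁ := by linarith
    have htc1 : t ≤ c₁ := le_max_left _ _
    have hLle : ∀ s : ℝ, c₁ ≤ s → s ≤ r - L → L ≤ r - s := fun s h1 h2 => by linarith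
    -- Qm bound for 1/‖gd‖ on the interval
    set Qm := min (1/ε) (4*r/L) with hQm
    have hQm0 : 0 ≤ Qm := le_min (by positivity) (by positivity)
    have hKbound : ∀ s : ℝ, c₁ ≤ s → s ≤ r - L → (1/‖gd ε r s‖) ≤ Qm := by
      intro s h1 h2
      have hs0 : 0 < s := by linarith
      have hsr : s ≤ r := by linarith
      have hG0 : 0 < ‖gd ε r s‖ := norm_gd_pos hε r s
      apply le_min
      · rw [div_le_div_iff₀ hG0 hε]
        have := norm_gd_ge_eps hε r s
        nlinarith
      · have hgl := gd_lb_left (ε := ε) hr0 hs0 hsr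
        have hrs : L ≤ r - s := by linarith
        have hLg : L/(4*r) ≤ ‖gd ε r s‖ := by
          apply le_trans _ hgl
          apply div_le_div_of_nonneg_right hrs (by positivity : (0:ℝ) ≤ 4*r)
        have h4 := one_div_le_one_div_of_le (by positivity : (0:ℝ) < L/(4*r)) hLg
        have heq : 1/(L/(4*r)) = 4*r/L := one_div_div _ _
        rw [heq] at h4
        exact h4
    -- boundary terms
    have hwf_bound : ∀ s : ℝ, c₁ ≤ s → s ≤ r - L → ‖wf ε r s‖ ≤ 3 * r ^ (-(3:ℝ)/2) * Qm := by
      intro s h1 h2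
      have hs0 : 0 < s := by linarith
      rw [norm_wf_eq r hs0]
      have hG0 : 0 < ‖gd ε r s‖ := norm_gd_pos hε r s
      have h3 : s ^ (-(3:ℝ)/2) ≤ 3 * r ^ (-(3:ℝ)/2) := by
        calc s ^ (-(3:ℝ)/2) ≤ (r/2) ^ (-(3:ℝ)/2) := rpow_anti (by positivity) (by linarith) (by norm_num)
          _ ≤ 3 * r ^ (-(3:ℝ)/2) := half_rpow32 hr0
      calc s ^ (-(3:ℝ)/2) / ‖gd ε r s‖ = s ^ (-(3:ℝ)/2) * (1/‖gd ε r s‖) := by ring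
        _ ≤ (3 * r ^ (-(3:ℝ)/2)) * Qm := by
            apply mul_le_mul h3 (hKbound s h1 h2) (by positivity) (by positivity)
    -- pointwise bound for Ei
    have hEi_bound : ∀ s : ℝ, c₁ ≤ s → s ≤ r - L →
        ‖Ei ε r t s‖ ≤ 9 * r ^ (-(5:ℝ)/2) * Qm
          + 12 * r ^ (-(5:ℝ)/2) * (ε^2 + ((s - r)/(4*r))^2)⁻¹ := by
      intro s h1 h2
      have hs0 : 0 < s := by linarith
      have hsr : s ≤ r := by linarith
      have hG0 : 0 < ‖gd ε r s‖ := norm_gd_pos hε r s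
      have hW := norm_Wd_le hε r hs0
      have hexp := norm_exp_gph_le (r := r) hε.le (le_trans htc1 h1)
      have hterm1 : (3:ℝ)/2 * s ^ (-(5:ℝ)/2) / ‖gd ε r s‖ ≤ 9 * r ^ (-(5:ℝ)/2) * Qm := by
        have h3 : s ^ (-(5:ℝ)/2) ≤ 6 * r ^ (-(5:ℝ)/2) := by
          calc s ^ (-(5:ℝ)/2) ≤ (r/2) ^ (-(5:ℝ)/2) := rpow_anti (by positivity) (by linarith) (by norm_num)
            _ ≤ 6 * r ^ (-(5:ℝ)/2) := half_rpow52 hr0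
        calc (3:ℝ)/2 * s ^ (-(5:ℝ)/2) / ‖gd ε r s‖
            = (3:ℝ)/2 * s ^ (-(5:ℝ)/2) * (1/‖gd ε r s‖) := by ring
          _ ≤ ((3:ℝ)/2 * (6 * r ^ (-(5:ℝ)/2))) * Qm := by
              apply mul_le_mul _ (hKbound s h1 h2) (by positivity) (by positivity)
              nlinarith [Real.rpow_nonneg hs0.le (-(5:ℝ)/2)]
          _ = 9 * r ^ (-(5:ℝ)/2) * Qm := by ring
      have hterm2 : s ^ (-(3:ℝ)/2) * (r^2/(2*s^3)) / ‖gd ε r s‖^2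
          ≤ 12 * r ^ (-(5:ℝ)/2) * (ε^2 + ((s - r)/(4*r))^2)⁻¹ := by
        have hnum : s ^ (-(3:ℝ)/2) * (r^2/(2*s^3)) ≤ 12 * r ^ (-(5:ℝ)/2) := by
          have h3 : s ^ (-(3:ℝ)/2) ≤ 3 * r ^ (-(3:ℝ)/2) := by
            calc s ^ (-(3:ℝ)/2) ≤ (r/2) ^ (-(3:ℝ)/2) := rpow_anti (by positivity) (by linarith) (by norm_num)
              _ ≤ 3 * r ^ (-(3:ℝ)/2) := half_rpow32 hr0
          have h4 : r^2/(2*s^3) ≤ 4/r := by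
            rw [div_le_div_iff₀ (by positivity) hr0]
            nlinarith [mul_pos (mul_pos hs0 hs0) hs0, sq_nonneg (s - r/2),
              mul_nonneg (mul_nonneg hs0.le hs0.le) (by linarith : (0:ℝ) ≤ 2*s - r)]
          calc s ^ (-(3:ℝ)/2) * (r^2/(2*s^3)) ≤ (3 * r ^ (-(3:ℝ)/2)) * (4/r) := by
                apply mul_le_mul h3 h4 (by positivity) (by positivity)
            _ = 12 * (r ^ (-(3:ℝ)/2) / r) := by ring
            _ = 12 * r ^ (-(5:ℝ)/2) := by rw [rpow_div_self hr0]
        have hden : (ε^2 + ((s - r)/(4*r))^2) ≤ ‖gd ε r s‖^2 := gd_sq_lb_left hr0 hs0 hsr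
        have hden0 : (0:ℝ) < ε^2 + ((s - r)/(4*r))^2 := by positivity
        calc s ^ (-(3:ℝ)/2) * (r^2/(2*s^3)) / ‖gd ε r s‖^2
            ≤ (12 * r ^ (-(5:ℝ)/2)) / (ε^2 + ((s - r)/(4*r))^2) := by
              apply div_le_div₀ (by positivity) hnum hden0 hden
          _ = 12 * r ^ (-(5:ℝ)/2) * (ε^2 + ((s - r)/(4*r))^2)⁻¹ := by
              rw [div_eq_mul_inv]
      unfold Ei
      rw [norm_mul]
      calc ‖Complex.exp (gph ε r t s)‖ * ‖Wd ε r s‖ ≤ 1 * ‖Wd ε r s‖ :=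
            mul_le_mul_of_nonneg_right hexp (norm_nonneg _)
        _ = ‖Wd ε r s‖ := one_mul _
        _ ≤ (3:ℝ)/2 * s ^ (-(5:ℝ)/2) / ‖gd ε r s‖
            + s ^ (-(3:ℝ)/2) * (r^2/(2*s^3)) / ‖gd ε r s‖^2 := hW
        _ ≤ 9 * r ^ (-(5:ℝ)/2) * Qm + 12 * r ^ (-(5:ℝ)/2) * (ε^2 + ((s - r)/(4*r))^2)⁻¹ :=
            add_le_add hterm1 hterm2
    -- integral of the bound
    have hc12 : c₁ ≤ r - L := hc1le
    have hsub := uIcc_sub hc10 hc12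
    have hint1 : IntervalIntegrable (fun s => ‖Ei ε r t s‖) volume c₁ (r - L) :=
      (((continuousOn_Ei hε r t).mono hsub).norm).intervalIntegrable
    have hlor_int : IntervalIntegrable (fun s : ℝ => (ε^2 + ((s - r)/(4*r))^2)⁻¹)
        volume c₁ (r-L) := (lorentz_cont ε r 4 hε).intervalIntegrable _ _
    have hint2 : IntervalIntegrable (fun s : ℝ => 9 * r ^ (-(5:ℝ)/2) * Qm
        + 12 * r ^ (-(5:ℝ)/2) * (ε^2 + ((s - r)/(4*r))^2)⁻¹) volume c₁ (r-L) :=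
      (intervalIntegrable_const).add ((hlor_int.const_mul _))
    have hmono := intervalIntegral.integral_mono_on hc12 hint1 hint2 (by
      intro x hx
      exact hEi_bound x hx.1 hx.2)
    -- evaluate/estimate the RHS integral
    set X := ∫ s in c₁..(r-L), (ε^2 + ((s - r)/(4*r))^2)⁻¹ with hX
    have hsplit : ∫ s in c₁..(r-L), (9 * r ^ (-(5:ℝ)/2) * Qm
        + 12 * r ^ (-(5:ℝ)/2) * (ε^2 + ((s - r)/(4*r))^2)⁻¹)
        = (r - L - c₁) * (9 * r ^ (-(5:ℝ)/2) * Qm) + 12 * r ^ (-(5:ℝ)/2) * X := by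
      rw [intervalIntegral.integral_add (intervalIntegrable_const) (hlor_int.const_mul _),
        intervalIntegral.integral_const, intervalIntegral.integral_const_mul, smul_eq_mul]
    -- bounds on X
    have hℓL' : r/(2*(ε*r + Real.sqrt r + max (t-r) 0)) ≤ L := by
      rw [← hD]
    have hℓt' : t - r ≤ L := by linarith
    have hX1 : X ≤ Real.pi * (4*r)/ε := int_lorentz hε hr0 4 (by norm_num)
    have hX2 : X ≤ 16*(r^2/L) := by
      have h := int_lorentz_left hε hr0 hc12 (by linarith : r - L < r) 4 (by norm_num)
      have he : r - (r - L) = L := by ring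
      rw [he] at h
      apply le_trans h
      have he2 : (4:ℝ)^2*r^2/L = 16*(r^2/L) := by ring
      linarith [he2.le]
    have hM := masterX (ℓ := L) hε hε1 hr ht hL0 hℓL' hℓt'
    rw [← hD] at hM
    have hQ := masterQ (ℓ := L) hε hε1 hr ht hL0 hℓL' hℓt'
    rw [← hD] at hQ
    have hXD : X * D ≤ 128 * r^2 := by
      have hXm : X ≤ 16 * min (r/ε) (r^2/L) := by
        rcases le_total (r/ε) (r^2/L) with h | h
        · rw [min_eq_left h]
          apply le_trans hX1
          have hπ : Real.pi ≤ 4 := by linarith [Real.pi_le_four]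
          have he : 16*(r/ε) = 16*r/ε := by ring
          rw [he]
          have he2 : Real.pi * (4*r)/ε ≤ 16*r/ε := by
            apply div_le_div_of_nonneg_right _ hε.le
            nlinarith
          exact he2
        · rw [min_eq_right h]
          exact hX2
      have hX0 : 0 ≤ min (r/ε) (r^2/L) := le_min (by positivity) (by positivity)
      calc X*D ≤ (16 * min (r/ε) (r^2/L))*D := mul_le_mul_of_nonneg_right hXm hD0.le
        _ = 16*(min (r/ε) (r^2/L)*D) := by ring
        _ ≤ 16*(8*r^2) := by linarith
        _ = 128*r^2 := by ring
    have hQmD : Qm * D ≤ 32 * r := by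
      have hQm4 : Qm ≤ 4 * min (1/ε) (r/L) := by
        rcases le_total (1/ε) (r/L) with h | h
        · rw [min_eq_left h]
          have h1 : Qm ≤ 1/ε := min_le_left _ _
          have h2 : (0:ℝ) ≤ 1/ε := by positivity
          linarith
        · rw [min_eq_right h]
          have h1 : Qm ≤ 4*r/L := min_le_right _ _
          have h2 : 4*r/L = 4*(r/L) := by ring
          linarith [h2.le]
      calc Qm*D ≤ (4 * min (1/ε) (r/L))*D := mul_le_mul_of_nonneg_right hQm4 hD0.le
        _ = 4*(min (1/ε) (r/L)*D) := by ring
        _ ≤ 4*(8*r) := by linarith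
        _ = 32*r := by ring
    -- total assembly
    have hibp := ibp_norm hε r htc1 hc10 hc12
    have hboundary1 := hwf_bound c₁ (le_refl _) hc12
    have hboundary2 := hwf_bound (r-L) hc12 (le_refl _)
    have hInt : ∫ s in c₁..(r-L), ‖Ei ε r t s‖
        ≤ (r - L - c₁) * (9 * r ^ (-(5:ℝ)/2) * Qm) + 12 * r ^ (-(5:ℝ)/2) * X := by
      rw [← hsplit]
      exact hmono
    have hlen : r - L - c₁ ≤ r := by linarith
    have hc : r ^ (-(5:ℝ)/2) * r = r ^ (-(3:ℝ)/2) := rpow_m52_mul hr0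
    have htot : ‖∫ s in c₁..(r-L), Fi ε r t s‖
        ≤ (15 * r ^ (-(3:ℝ)/2)) * Qm + 12 * r ^ (-(5:ℝ)/2) * X := by
      have h9 : (r - L - c₁) * (9 * r ^ (-(5:ℝ)/2) * Qm)
          ≤ r * (9 * r ^ (-(5:ℝ)/2) * Qm) := mul_le_mul_of_nonneg_right hlen (by positivity)
      have h9' : r * (9 * r ^ (-(5:ℝ)/2) * Qm) = 9 * r ^ (-(3:ℝ)/2) * Qm := by
        rw [← hc]
        ring
      have := hibp
      have hXnn : 0 ≤ X := by
        rw [hX]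
        apply intervalIntegral.integral_nonneg hc12
        intro x _
        positivity
      nlinarith [Real.rpow_nonneg hr0.le (-(3:ℝ)/2), Real.rpow_nonneg hr0.le (-(5:ℝ)/2)]
    have ha : r ^ (-(3:ℝ)/2) * r = r ^ (-(1:ℝ)/2) := rpow_m32_mul hr0
    have hb : r ^ (-(5:ℝ)/2) * r^2 = r ^ (-(1:ℝ)/2) := rpow_m52_mul_sq hr0
    rw [le_div_iff₀ hD0]
    calc ‖∫ s in c₁..(r-L), Fi ε r t s‖ * D
        ≤ ((15 * r ^ (-(3:ℝ)/2)) * Qm + 12 * r ^ (-(5:ℝ)/2) * X) * D :=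
          mul_le_mul_of_nonneg_right htot hD0.le
      _ = 15 * r ^ (-(3:ℝ)/2) * (Qm * D) + 12 * r ^ (-(5:ℝ)/2) * (X * D) := by ring
      _ ≤ 15 * r ^ (-(3:ℝ)/2) * (32*r) + 12 * r ^ (-(5:ℝ)/2) * (128*r^2) := by
          apply add_le_add
          · exact mul_le_mul_of_nonneg_left hQmD (by positivity)
          · exact mul_le_mul_of_nonneg_left hXD (by positivity)
      _ = 480 * (r ^ (-(3:ℝ)/2) * r) + 1536 * (r ^ (-(5:ℝ)/2) * r^2) := by ring
      _ = 2016 * r ^ (-(1:ℝ)/2) := by rw [ha, hb]; ring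
      _ ≤ 2100 * r ^ (-(1:ℝ)/2) := by
          have := Real.rpow_nonneg hr0.le (-(1:ℝ)/2)
          nlinarith

/-! ### piece P4 : right of the window -/

lemma pieceP4 {ε r t : ℝ} (hε : 0 < ε) (hε1 : ε ≤ 1) (hr : 1 < r) (ht : 0 < t)
    (htr : t < 100*r) :
    ‖∫ s in (max t (r + r/(2*(ε*r + Real.sqrt r + max (t-r) 0))))..(max t (2*r)), Fi ε r t s‖
      ≤ 600 * r ^ (-(1:ℝ)/2) / (ε*r + Real.sqrt r + max (t-r) 0) := by
  have hr0 : 0 < r := lt_trans one_pos hr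
  set D := ε*r + Real.sqrt r + max (t-r) 0 with hD
  have hD0 : 0 < D := D_pos hε hr
  set L : ℝ := r/(2*D) with hLdef
  have hL0 : 0 < L := by positivity
  have hq1 : 1 < Real.sqrt r := one_lt_sqrt hr
  have hDgt1 : 1 < D := by
    have : 0 ≤ max (t-r) 0 := le_max_right _ _
    rw [hD]
    nlinarith
  have hLr2 : L ≤ r/2 := by
    rw [hLdef, div_le_div_iff₀ (by positivity) (by norm_num)]
    nlinarith
  have hrpos : 0 ≤ 600 * r ^ (-(1:ℝ)/2) / D := by positivity
  rcases le_or_gt (2*r) t with hcase | hcase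
  · have he1 : max t (r + L) = t := max_eq_left (by linarith)
    have he2 : max t (2*r) = t := max_eq_left hcase
    rw [he1, he2, intervalIntegral.integral_same]
    simpa using hrpos
  · set c₃ := max t (r + L) with hc3
    have hc4 : max t (2*r) = 2*r := max_eq_right hcase.le
    rw [hc4]
    have hc3ge : r + L ≤ c₃ := le_max_right _ _
    have hc3le : c₃ ≤ 2*r := max_le hcase.le (by linarith)
    have hc30 : 0 < c₃ := by linarith
    have htc3 : t ≤ c₃ := le_max_left _ _
    have hc34 : c₃ ≤ 2*r := hc3le
    set ℓ := c₃ - r with hℓdef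
    have hℓ0 : 0 < ℓ := by
      rw [hℓdef]
      linarith
    have hLℓ : L ≤ ℓ := by
      rw [hℓdef]
      linarith
    have hℓt : t - r ≤ ℓ := by
      rw [hℓdef]
      linarith
    set Qm := min (1/ε) (8*r/ℓ) with hQm
    have hQm0 : 0 ≤ Qm := le_min (by positivity) (by positivity)
    have hKbound : ∀ s : ℝ, c₃ ≤ s → s ≤ 2*r → (1/‖gd ε r s‖) ≤ Qm := by
      intro s h1 h2
      have hsr : r ≤ s := by linarith
      have hG0 : 0 < ‖gd ε r s‖ := norm_gd_pos hε r s
      apply le_min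
      · rw [div_le_div_iff₀ hG0 hε]
        have := norm_gd_ge_eps hε r s
        nlinarith
      · have hgl := gd_lb_right (ε := ε) hr0 hsr h2
        have hrs : ℓ ≤ s - r := by
          rw [hℓdef]
          linarith
        have hLg : ℓ/(8*r) ≤ ‖gd ε r s‖ := by
          apply le_trans _ hgl
          apply div_le_div_of_nonneg_right hrs (by positivity : (0:ℝ) ≤ 8*r)
        have h4 := one_div_le_one_div_of_le (by positivity : (0:ℝ) < ℓ/(8*r)) hLg
        have heq : 1/(ℓ/(8*r)) = 8*r/ℓ := one_div_div _ _
        rw [heq] at h4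
        exact h4
    have hwf_bound : ∀ s : ℝ, c₃ ≤ s → s ≤ 2*r → ‖wf ε r s‖ ≤ r ^ (-(3:ℝ)/2) * Qm := by
      intro s h1 h2
      have hs0 : 0 < s := by linarith
      rw [norm_wf_eq r hs0]
      have h3 : s ^ (-(3:ℝ)/2) ≤ r ^ (-(3:ℝ)/2) :=
        rpow_anti hr0 (by linarith) (by norm_num)
      calc s ^ (-(3:ℝ)/2) / ‖gd ε r s‖ = s ^ (-(3:ℝ)/2) * (1/‖gd ε r s‖) := by ring
        _ ≤ r ^ (-(3:ℝ)/2) * Qm := by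
            apply mul_le_mul h3 (hKbound s h1 h2) (by positivity) (by positivity)
    have hEi_bound : ∀ s : ℝ, c₃ ≤ s → s ≤ 2*r →
        ‖Ei ε r t s‖ ≤ 2 * r ^ (-(5:ℝ)/2) * Qm
          + (1/2) * r ^ (-(5:ℝ)/2) * (ε^2 + ((s - r)/(8*r))^2)⁻¹ := by
      intro s h1 h2
      have hs0 : 0 < s := by linarith
      have hsr : r ≤ s := by linarith
      have hG0 : 0 < ‖gd ε r s‖ := norm_gd_pos hε r s
      have hW := norm_Wd_le hε r hs0
      have hexp := norm_exp_gph_le (r := r) hε.le (le_trans htc3 h1)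
      have hterm1 : (3:ℝ)/2 * s ^ (-(5:ℝ)/2) / ‖gd ε r s‖ ≤ 2 * r ^ (-(5:ℝ)/2) * Qm := by
        have h3 : s ^ (-(5:ℝ)/2) ≤ r ^ (-(5:ℝ)/2) :=
          rpow_anti hr0 (by linarith) (by norm_num)
        calc (3:ℝ)/2 * s ^ (-(5:ℝ)/2) / ‖gd ε r s‖
            = ((3:ℝ)/2 * s ^ (-(5:ℝ)/2)) * (1/‖gd ε r s‖) := by ring
          _ ≤ (2 * r ^ (-(5:ℝ)/2)) * Qm := by
              apply mul_le_mul _ (hKbound s h1 h2) (by positivity) (by positivity)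
              nlinarith [Real.rpow_nonneg hs0.le (-(5:ℝ)/2)]
      have hterm2 : s ^ (-(3:ℝ)/2) * (r^2/(2*s^3)) / ‖gd ε r s‖^2
          ≤ (1/2) * r ^ (-(5:ℝ)/2) * (ε^2 + ((s - r)/(8*r))^2)⁻¹ := by
        have hnum : s ^ (-(3:ℝ)/2) * (r^2/(2*s^3)) ≤ (1/2) * r ^ (-(5:ℝ)/2) := by
          have h3 : s ^ (-(3:ℝ)/2) ≤ r ^ (-(3:ℝ)/2) :=
            rpow_anti hr0 (by linarith) (by norm_num)
          have h4 : r^2/(2*s^3) ≤ 1/(2*r) := by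
            rw [div_le_div_iff₀ (by positivity) (by positivity)]
            nlinarith [mul_pos (mul_pos hr0 hr0) hr0,
              mul_nonneg (mul_nonneg hr0.le hr0.le) (by linarith : (0:ℝ) ≤ s - r),
              mul_nonneg (mul_nonneg hr0.le (by linarith : (0:ℝ) ≤ s - r)) hs0.le,
              mul_nonneg (mul_nonneg (by linarith : (0:ℝ) ≤ s - r) hs0.le) hs0.le]
          calc s ^ (-(3:ℝ)/2) * (r^2/(2*s^3)) ≤ r ^ (-(3:ℝ)/2) * (1/(2*r)) := by
                apply mul_le_mul h3 h4 (by positivity) (by positivity)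
            _ = (1/2) * (r ^ (-(3:ℝ)/2) / r) := by ring
            _ = (1/2) * r ^ (-(5:ℝ)/2) := by rw [rpow_div_self hr0]
        have hden : (ε^2 + ((s - r)/(8*r))^2) ≤ ‖gd ε r s‖^2 := gd_sq_lb_right hr0 hsr h2
        have hden0 : (0:ℝ) < ε^2 + ((s - r)/(8*r))^2 := by positivity
        calc s ^ (-(3:ℝ)/2) * (r^2/(2*s^3)) / ‖gd ε r s‖^2
            ≤ ((1/2) * r ^ (-(5:ℝ)/2)) / (ε^2 + ((s - r)/(8*r))^2) := by
              apply div_le_div₀ (by positivity) hnum hden0 hden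
          _ = (1/2) * r ^ (-(5:ℝ)/2) * (ε^2 + ((s - r)/(8*r))^2)⁻¹ := by
              rw [div_eq_mul_inv]
      unfold Ei
      rw [norm_mul]
      calc ‖Complex.exp (gph ε r t s)‖ * ‖Wd ε r s‖ ≤ 1 * ‖Wd ε r s‖ :=
            mul_le_mul_of_nonneg_right hexp (norm_nonneg _)
        _ = ‖Wd ε r s‖ := one_mul _
        _ ≤ (3:ℝ)/2 * s ^ (-(5:ℝ)/2) / ‖gd ε r s‖
            + s ^ (-(3:ℝ)/2) * (r^2/(2*s^3)) / ‖gd ε r s‖^2 := hW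
        _ ≤ 2 * r ^ (-(5:ℝ)/2) * Qm + (1/2) * r ^ (-(5:ℝ)/2) * (ε^2 + ((s - r)/(8*r))^2)⁻¹ :=
            add_le_add hterm1 hterm2
    have hc12 : c₃ ≤ 2*r := hc3le
    have hsub := uIcc_sub hc30 hc12
    have hint1 : IntervalIntegrable (fun s => ‖Ei ε r t s‖) volume c₃ (2*r) :=
      (((continuousOn_Ei hε r t).mono hsub).norm).intervalIntegrable
    have hlor_int : IntervalIntegrable (fun s : ℝ => (ε^2 + ((s - r)/(8*r))^2)⁻¹)
        volume c₃ (2*r) := (lorentz_cont ε r 8 hε).intervalIntegrable _ _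
    have hint2 : IntervalIntegrable (fun s : ℝ => 2 * r ^ (-(5:ℝ)/2) * Qm
        + (1/2) * r ^ (-(5:ℝ)/2) * (ε^2 + ((s - r)/(8*r))^2)⁻¹) volume c₃ (2*r) :=
      (intervalIntegrable_const).add ((hlor_int.const_mul _))
    have hmono := intervalIntegral.integral_mono_on hc12 hint1 hint2 (by
      intro x hx
      exact hEi_bound x hx.1 hx.2)
    set X := ∫ s in c₃..(2*r), (ε^2 + ((s - r)/(8*r))^2)⁻¹ with hX
    have hsplit : ∫ s in c₃..(2*r), (2 * r ^ (-(5:ℝ)/2) * Qm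
        + (1/2) * r ^ (-(5:ℝ)/2) * (ε^2 + ((s - r)/(8*r))^2)⁻¹)
        = (2*r - c₃) * (2 * r ^ (-(5:ℝ)/2) * Qm) + (1/2) * r ^ (-(5:ℝ)/2) * X := by
      rw [intervalIntegral.integral_add (intervalIntegrable_const) (hlor_int.const_mul _),
        intervalIntegral.integral_const, intervalIntegral.integral_const_mul, smul_eq_mul]
    have hℓL' : r/(2*(ε*r + Real.sqrt r + max (t-r) 0)) ≤ ℓ := by
      rw [← hD]
      exact le_trans (le_of_eq hLdef.symm) hLℓ
    have hX1 : X ≤ Real.pi * (8*r)/ε := int_lorentz hε hr0 8 (by norm_num)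
    have hX2 : X ≤ 64*(r^2/ℓ) := by
      have h := int_lorentz_right hε hr0 hc12 (by linarith : r < c₃) 8 (by norm_num)
      have he : c₃ - r = ℓ := by rw [hℓdef]
      rw [he] at h
      apply le_trans h
      have he2 : (8:ℝ)^2*r^2/ℓ = 64*(r^2/ℓ) := by ring
      linarith [he2.le]
    have hM := masterX (ℓ := ℓ) hε hε1 hr ht hℓ0 hℓL' hℓt
    rw [← hD] at hM
    have hQ := masterQ (ℓ := ℓ) hε hε1 hr ht hℓ0 hℓL' hℓt
    rw [← hD] at hQ
    have hXD : X * D ≤ 512 * r^2 := by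
      have hXm : X ≤ 64 * min (r/ε) (r^2/ℓ) := by
        rcases le_total (r/ε) (r^2/ℓ) with h | h
        · rw [min_eq_left h]
          apply le_trans hX1
          have hπ : Real.pi ≤ 4 := by linarith [Real.pi_le_four]
          have he : 64*(r/ε) = 64*r/ε := by ring
          rw [he]
          apply div_le_div_of_nonneg_right _ hε.le
          nlinarith
        · rw [min_eq_right h]
          exact hX2
      calc X*D ≤ (64 * min (r/ε) (r^2/ℓ))*D := mul_le_mul_of_nonneg_right hXm hD0.le
        _ = 64*(min (r/ε) (r^2/ℓ)*D) := by ring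
        _ ≤ 64*(8*r^2) := by linarith
        _ = 512*r^2 := by ring
    have hQmD : Qm * D ≤ 64 * r := by
      have hQm4 : Qm ≤ 8 * min (1/ε) (r/ℓ) := by
        rcases le_total (1/ε) (r/ℓ) with h | h
        · rw [min_eq_left h]
          have h1 : Qm ≤ 1/ε := min_le_left _ _
          have h2 : (0:ℝ) ≤ 1/ε := by positivity
          linarith
        · rw [min_eq_right h]
          have h1 : Qm ≤ 8*r/ℓ := min_le_right _ _
          have h2 : 8*r/ℓ = 8*(r/ℓ) := by ring
          linarith [h2.le]
      calc Qm*D ≤ (8 * min (1/ε) (r/ℓ))*D := mul_le_mul_of_nonneg_right hQm4 hD0.le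
        _ = 8*(min (1/ε) (r/ℓ)*D) := by ring
        _ ≤ 8*(8*r) := by linarith
        _ = 64*r := by ring
    have hibp := ibp_norm hε r htc3 hc30 hc12
    have hboundary1 := hwf_bound c₃ (le_refl _) hc12
    have hboundary2 := hwf_bound (2*r) hc12 (le_refl _)
    have hInt : ∫ s in c₃..(2*r), ‖Ei ε r t s‖
        ≤ (2*r - c₃) * (2 * r ^ (-(5:ℝ)/2) * Qm) + (1/2) * r ^ (-(5:ℝ)/2) * X := by
      rw [← hsplit]
      exact hmono
    have hlen : 2*r - c₃ ≤ r := by linarith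
    have hcm : r ^ (-(5:ℝ)/2) * r = r ^ (-(3:ℝ)/2) := rpow_m52_mul hr0
    have htot : ‖∫ s in c₃..(2*r), Fi ε r t s‖
        ≤ (4 * r ^ (-(3:ℝ)/2)) * Qm + (1/2) * r ^ (-(5:ℝ)/2) * X := by
      have h9 : (2*r - c₃) * (2 * r ^ (-(5:ℝ)/2) * Qm)
          ≤ r * (2 * r ^ (-(5:ℝ)/2) * Qm) := mul_le_mul_of_nonneg_right hlen (by positivity)
      have h9' : r * (2 * r ^ (-(5:ℝ)/2) * Qm) = 2 * r ^ (-(3:ℝ)/2) * Qm := by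
        rw [← hcm]
        ring
      have hXnn : 0 ≤ X := by
        rw [hX]
        apply intervalIntegral.integral_nonneg hc12
        intro x _
        positivity
      nlinarith [Real.rpow_nonneg hr0.le (-(3:ℝ)/2), Real.rpow_nonneg hr0.le (-(5:ℝ)/2)]
    have ha : r ^ (-(3:ℝ)/2) * r = r ^ (-(1:ℝ)/2) := rpow_m32_mul hr0
    have hb : r ^ (-(5:ℝ)/2) * r^2 = r ^ (-(1:ℝ)/2) := rpow_m52_mul_sq hr0
    rw [le_div_iff₀ hD0]
    calc ‖∫ s in c₃..(2*r), Fi ε r t s‖ * D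
        ≤ ((4 * r ^ (-(3:ℝ)/2)) * Qm + (1/2) * r ^ (-(5:ℝ)/2) * X) * D :=
          mul_le_mul_of_nonneg_right htot hD0.le
      _ = 4 * r ^ (-(3:ℝ)/2) * (Qm * D) + (1/2) * r ^ (-(5:ℝ)/2) * (X * D) := by ring
      _ ≤ 4 * r ^ (-(3:ℝ)/2) * (64*r) + (1/2) * r ^ (-(5:ℝ)/2) * (512*r^2) := by
          apply add_le_add
          · exact mul_le_mul_of_nonneg_left hQmD (by positivity)
          · exact mul_le_mul_of_nonneg_left hXD (by positivity)
      _ = 256 * (r ^ (-(3:ℝ)/2) * r) + 256 * (r ^ (-(5:ℝ)/2) * r^2) := by ring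
      _ = 512 * r ^ (-(1:ℝ)/2) := by rw [ha, hb]; ring
      _ ≤ 600 * r ^ (-(1:ℝ)/2) := by
          have := Real.rpow_nonneg hr0.le (-(1:ℝ)/2)
          nlinarith

/-! ### assembly -/

lemma prefactor_norm_le_one :
    ‖(Complex.exp (-(Real.pi / 4 : ℝ) * Complex.I) / ((8 * Real.pi ^ ((3 : ℝ) / 2) : ℝ) : ℂ))‖ ≤ 1 := by
  rw [norm_div]
  have h1 : ‖Complex.exp (-(Real.pi / 4 : ℝ) * Complex.I)‖ = 1 := by
    rw [Complex.norm_exp]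
    have : ((-(Real.pi / 4 : ℝ) : ℂ) * Complex.I).re = 0 := by
      simp
    rw [this, Real.exp_zero]
  rw [h1]
  have h2 : (1:ℝ) ≤ Real.pi ^ ((3 : ℝ) / 2) := by
    have := Real.rpow_le_rpow (by norm_num : (0:ℝ) ≤ 1)
      (by linarith [Real.pi_gt_three] : (1:ℝ) ≤ Real.pi) (by norm_num : (0:ℝ) ≤ (3:ℝ)/2)
    rwa [Real.one_rpow] at this
  have h3 : (1:ℝ) ≤ ‖((8 * Real.pi ^ ((3 : ℝ) / 2) : ℝ) : ℂ)‖ := by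
    rw [Complex.norm_real, Real.norm_eq_abs, abs_of_nonneg (by nlinarith)]
    nlinarith
  rw [div_le_one (by linarith)]
  linarith

lemma main_integral_bound {ε r t : ℝ} (hε : 0 < ε) (hε1 : ε ≤ 1) (hr : 1 < r) (ht : 0 < t)
    (htr : t < 100*r) :
    ‖∫ s in Ioi t, Fi ε r t s‖
      ≤ 20000 * r ^ (-(1:ℝ)/2) / (ε*r + Real.sqrt r + max (t-r) 0) := by
  have hr0 : 0 < r := lt_trans one_pos hr
  have hD0 : 0 < ε*r + Real.sqrt r + max (t-r) 0 := D_pos hε hr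
  have hq1 : 1 < Real.sqrt r := one_lt_sqrt hr
  have hDgt1 : 1 < ε*r + Real.sqrt r + max (t-r) 0 := by
    have : 0 ≤ max (t-r) 0 := le_max_right _ _
    nlinarith
  have hL0 : 0 < r/(2*(ε*r + Real.sqrt r + max (t-r) 0)) := by positivity
  have hLr2 : r/(2*(ε*r + Real.sqrt r + max (t-r) 0)) ≤ r/2 := by
    rw [div_le_div_iff₀ (by positivity) (by norm_num)]
    nlinarith
  set L := r/(2*(ε*r + Real.sqrt r + max (t-r) 0)) with hL
  set c₁ := max t (r/2) with hc1
  set c₂ := max t (r - L) with hc2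
  set c₃ := max t (r + L) with hc3
  set c₄ := max t (2*r) with hc4
  have htc1 : t ≤ c₁ := le_max_left _ _
  have h12 : c₁ ≤ c₂ := max_le_max (le_refl t) (by linarith)
  have h23 : c₂ ≤ c₃ := max_le_max (le_refl t) (by linarith)
  have h34 : c₃ ≤ c₄ := max_le_max (le_refl t) (by linarith)
  have htc4 : t ≤ c₄ := le_max_left _ _
  have hc40 : 2*r ≤ c₄ := le_max_right _ _
  have hc10 : 0 < c₁ := lt_of_lt_of_le ht htc1
  have hc20 : 0 < c₂ := lt_of_lt_of_le hc10 h12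
  have hc30 : 0 < c₃ := lt_of_lt_of_le hc20 h23
  -- interval integrability of Fi on the pieces
  have hii : ∀ x y : ℝ, 0 < x → x ≤ y → IntervalIntegrable (Fi ε r t) volume x y :=
    fun x y hx hxy => ((continuousOn_Fi ε r t).mono (uIcc_sub hx hxy)).intervalIntegrable
  have i1 := hii t c₁ ht htc1
  have i2 := hii c₁ c₂ hc10 h12
  have i3 := hii c₂ c₃ hc20 h23
  have i4 := hii c₃ c₄ hc30 h34
  -- split Ioi t = Ioc t c₄ ∪ Ioi c₄
  have hFI := integrableOn_Fi hε r ht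
  have hIoc : IntegrableOn (Fi ε r t) (Ioc t c₄) volume :=
    hFI.mono_set Ioc_subset_Ioi_self
  have hIoi4 : IntegrableOn (Fi ε r t) (Ioi c₄) volume :=
    hFI.mono_set (Ioi_subset_Ioi htc4)
  have hdisj : Disjoint (Ioc t c₄) (Ioi c₄) := by
    rw [Set.disjoint_left]
    intro a ha ha'
    exact absurd ha' (by simp [ha.2])
  have hsplit0 : ∫ s in Ioi t, Fi ε r t s
      = (∫ s in Ioc t c₄, Fi ε r t s) + ∫ s in Ioi c₄, Fi ε r t s := by
    rw [← Ioc_union_Ioi_eq_Ioi htc4]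
    exact setIntegral_union hdisj measurableSet_Ioi hIoc hIoi4
  have hIocInt : ∫ s in Ioc t c₄, Fi ε r t s = ∫ s in t..c₄, Fi ε r t s :=
    (intervalIntegral.integral_of_le htc4).symm
  have e1 := intervalIntegral.integral_add_adjacent_intervals i1 i2
  have i12 := i1.trans i2
  have e2 := intervalIntegral.integral_add_adjacent_intervals i12 i3
  have i13 := i12.trans i3
  have e3 := intervalIntegral.integral_add_adjacent_intervals i13 i4
  -- bounds
  have b1 := pieceP1 hε hε1 hr ht htr
  have b2 := pieceP2 hε hε1 hr ht htr
  have b3 := pieceP3 (t := t) hε hε1 hr ht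
  have b4 := pieceP4 hε hε1 hr ht htr
  have b5 : ‖∫ s in Ioi c₄, Fi ε r t s‖
      ≤ 1414 * r ^ (-(1:ℝ)/2) / (ε*r + Real.sqrt r + max (t-r) 0) := by
    have h := tail_norm hε r ht htc4 hr0 hc40
    have h2 : c₄ ^ (-(3:ℝ)/2) ≤ r ^ (-(3:ℝ)/2) :=
      rpow_anti hr0 (by linarith) (by norm_num)
    have h3 := conv_m32 (t := t) hε hε1 hr htr
    calc ‖∫ s in Ioi c₄, Fi ε r t s‖ ≤ 14 * c₄ ^ (-(3:ℝ)/2) := h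
      _ ≤ 14 * r ^ (-(3:ℝ)/2) := by linarith
      _ ≤ 14 * (101 * r ^ (-(1:ℝ)/2) / (ε*r + Real.sqrt r + max (t-r) 0)) := by linarith
      _ = 1414 * r ^ (-(1:ℝ)/2) / (ε*r + Real.sqrt r + max (t-r) 0) := by ring
  -- triangle inequality
  have hnorm : ‖∫ s in Ioi t, Fi ε r t s‖
      ≤ ‖∫ s in t..c₁, Fi ε r t s‖ + ‖∫ s in c₁..c₂, Fi ε r t s‖
        + ‖∫ s in c₂..c₃, Fi ε r t s‖ + ‖∫ s in c₃..c₄, Fi ε r t s‖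
        + ‖∫ s in Ioi c₄, Fi ε r t s‖ := by
    rw [hsplit0, hIocInt, ← e3, ← e2, ← e1]
    calc ‖(((∫ s in t..c₁, Fi ε r t s) + ∫ s in c₁..c₂, Fi ε r t s)
          + ∫ s in c₂..c₃, Fi ε r t s) + (∫ s in c₃..c₄, Fi ε r t s)
          + ∫ s in Ioi c₄, Fi ε r t s‖
        ≤ ‖(((∫ s in t..c₁, Fi ε r t s) + ∫ s in c₁..c₂, Fi ε r t s)
          + ∫ s in c₂..c₃, Fi ε r t s) + (∫ s in c₃..c₄, Fi ε r t s)‖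
          + ‖∫ s in Ioi c₄, Fi ε r t s‖ := norm_add_le _ _
      _ ≤ (‖((∫ s in t..c₁, Fi ε r t s) + ∫ s in c₁..c₂, Fi ε r t s)
          + ∫ s in c₂..c₃, Fi ε r t s‖ + ‖∫ s in c₃..c₄, Fi ε r t s‖)
          + ‖∫ s in Ioi c₄, Fi ε r t s‖ := by
          gcongr
          exact norm_add_le _ _
      _ ≤ ((‖(∫ s in t..c₁, Fi ε r t s) + ∫ s in c₁..c₂, Fi ε r t s‖
          + ‖∫ s in c₂..c₃, Fi ε r t s‖) + ‖∫ s in c₃..c₄, Fi ε r t s‖)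
          + ‖∫ s in Ioi c₄, Fi ε r t s‖ := by
          gcongr
          exact norm_add_le _ _
      _ ≤ (((‖∫ s in t..c₁, Fi ε r t s‖ + ‖∫ s in c₁..c₂, Fi ε r t s‖)
          + ‖∫ s in c₂..c₃, Fi ε r t s‖) + ‖∫ s in c₃..c₄, Fi ε r t s‖)
          + ‖∫ s in Ioi c₄, Fi ε r t s‖ := by
          gcongr
          exact norm_add_le _ _
      _ = ‖∫ s in t..c₁, Fi ε r t s‖ + ‖∫ s in c₁..c₂, Fi ε r t s‖
          + ‖∫ s in c₂..c₃, Fi ε r t s‖ + ‖∫ s in c₃..c₄, Fi ε r t s‖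
          + ‖∫ s in Ioi c₄, Fi ε r t s‖ := by ring
  have hsum : (5900:ℝ) + 2100 + 3 + 600 + 1414 ≤ 20000 := by norm_num
  have hfrac : 0 ≤ r ^ (-(1:ℝ)/2) / (ε*r + Real.sqrt r + max (t-r) 0) := by positivity
  calc ‖∫ s in Ioi t, Fi ε r t s‖
      ≤ ‖∫ s in t..c₁, Fi ε r t s‖ + ‖∫ s in c₁..c₂, Fi ε r t s‖
        + ‖∫ s in c₂..c₃, Fi ε r t s‖ + ‖∫ s in c₃..c₄, Fi ε r t s‖
        + ‖∫ s in Ioi c₄, Fi ε r t s‖ := hnorm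
    _ ≤ 5900 * r ^ (-(1:ℝ)/2) / (ε*r + Real.sqrt r + max (t-r) 0)
        + 2100 * r ^ (-(1:ℝ)/2) / (ε*r + Real.sqrt r + max (t-r) 0)
        + 3 * r ^ (-(1:ℝ)/2) / (ε*r + Real.sqrt r + max (t-r) 0)
        + 600 * r ^ (-(1:ℝ)/2) / (ε*r + Real.sqrt r + max (t-r) 0)
        + 1414 * r ^ (-(1:ℝ)/2) / (ε*r + Real.sqrt r + max (t-r) 0) := by
        exact add_le_add (add_le_add (add_le_add (add_le_add b1 b2) b3) b4) b5
    _ = 10017 * r ^ (-(1:ℝ)/2) / (ε*r + Real.sqrt r + max (t-r) 0) := by ring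
    _ ≤ 20000 * r ^ (-(1:ℝ)/2) / (ε*r + Real.sqrt r + max (t-r) 0) := by
        apply div_le_div_of_nonneg_right _ hD0.le
        have := Real.rpow_nonneg hr0.le (-(1:ℝ)/2)
        nlinarith

end Stmt0

end

/-- There is an absolute constant `C > 0` such that for every `ε ∈ (0,1]` and all
`r, t > 0` with `r > 1` and `r > t/100`,
`|G_ε(r,t)| ≤ C · r^{-1/2} / (ε·r + r^{1/2} + max (t − r) 0)`. -/
theorem stmt0 :
    ∃ C : ℝ, 0 < C ∧
      ∀ ε ∈ Set.Ioc (0 : ℝ) 1, ∀ r t : ℝ, 0 < r → 0 < t → 1 < r → t / 100 < r →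
        ‖Gker ε r t‖ ≤
          C * r ^ (-(1 : ℝ) / 2) / (ε * r + r ^ ((1 : ℝ) / 2) + max (t - r) 0) := by
  refine ⟨20000, by norm_num, ?_⟩
  rintro ε ⟨hε, hε1⟩ r t hr0 ht hr htr'
  have htr : t < 100*r := by linarith
  have hGk : Gker ε r t
      = (Complex.exp (-(Real.pi / 4 : ℝ) * Complex.I) / ((8 * Real.pi ^ ((3 : ℝ) / 2) : ℝ) : ℂ))
        * ∫ s in Set.Ioi t, Stmt0.Fi ε r t s := rfl
  have hpre := Stmt0.prefactor_norm_le_one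
  have hmain := Stmt0.main_integral_bound hε hε1 hr ht htr
  have hsq : Real.sqrt r = r ^ ((1:ℝ)/2) := by
    rw [Real.sqrt_eq_rpow]
  rw [hGk, norm_mul]
  rw [← hsq]
  have h0 : 0 ≤ ‖∫ s in Set.Ioi t, Stmt0.Fi ε r t s‖ := norm_nonneg _
  calc ‖Complex.exp (-(Real.pi / 4 : ℝ) * Complex.I) / ((8 * Real.pi ^ ((3 : ℝ) / 2) : ℝ) : ℂ)‖
        * ‖∫ s in Set.Ioi t, Stmt0.Fi ε r t s‖
      ≤ 1 * ‖∫ s in Set.Ioi t, Stmt0.Fi ε r t s‖ := mul_le_mul_of_nonneg_right hpre h0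
    _ = ‖∫ s in Set.Ioi t, Stmt0.Fi ε r t s‖ := one_mul _
    _ ≤ 20000 * r ^ (-(1:ℝ)/2) / (ε*r + Real.sqrt r + max (t-r) 0) := hmain
end

section
/- There is an absolute constant C > 0 such that for every ε ∈ (0,1] and all r, t > 0 with 1 < r < t/100, the kernel satisfies |G_ε(r,t)| ≤ C · t^{-3/2}. -/
open MeasureTheory

/-- The phase `ψ(s) = i((s−t)z + r²/(4s))`. -/
noncomputable def psiP (ε r t s : ℝ) : ℂ :=
  Complex.I * (((s : ℂ) - (t : ℂ)) * (1 / 4 + (ε : ℂ) * Complex.I)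
      + (r : ℂ) ^ 2 / (4 * (s : ℂ)))

/-- `ψ'(s)`. -/
noncomputable def psiD (ε r s : ℝ) : ℂ :=
  Complex.I * ((1 / 4 + (ε : ℂ) * Complex.I) - (r : ℂ) ^ 2 / (4 * (s : ℂ) ^ 2))

/-- `ψ''(s)`. -/
noncomputable def psiDD (r s : ℝ) : ℂ :=
  Complex.I * ((r : ℂ) ^ 2 / (2 * (s : ℂ) ^ 3))

/-- The amplitude `g(s) = s^{-3/2}/ψ'(s)`. -/
noncomputable def gA (ε r s : ℝ) : ℂ :=
  ((s ^ (-(3 : ℝ) / 2) : ℝ) : ℂ) / psiD ε r s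

/-- `g'(s)`. -/
noncomputable def gD (ε r s : ℝ) : ℂ :=
  (((-(3 : ℝ) / 2 * s ^ (-(5 : ℝ) / 2) : ℝ) : ℂ) * psiD ε r s
      - ((s ^ (-(3 : ℝ) / 2) : ℝ) : ℂ) * psiDD r s) / (psiD ε r s) ^ 2

lemma hasDerivAt_ofReal' (s : ℝ) : HasDerivAt (fun s : ℝ => (s : ℂ)) 1 s := by
  simpa using (hasDerivAt_id s).ofReal_comp

lemma hasDerivAt_psiP (ε r t : ℝ) {s : ℝ} (hs : s ≠ 0) :
    HasDerivAt (psiP ε r t) (psiD ε r s) s := by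
  have hsc : (s : ℂ) ≠ 0 := Complex.ofReal_ne_zero.2 hs
  have h4ne : (4 : ℂ) * (s : ℂ) ≠ 0 := by simp [hsc]
  have h2 : HasDerivAt (fun w : ℂ => (w - (t : ℂ)) * (1 / 4 + (ε : ℂ) * Complex.I))
      (1 * (1 / 4 + (ε : ℂ) * Complex.I)) (s : ℂ) :=
    ((hasDerivAt_id ((s : ℝ) : ℂ)).sub_const (t : ℂ)).mul_const _
  have h3 : HasDerivAt (fun w : ℂ => (r : ℂ) ^ 2 / (4 * w))
      ((0 * (4 * (s : ℂ)) - (r : ℂ) ^ 2 * (4 * 1)) / (4 * (s : ℂ)) ^ 2) (s : ℂ) :=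
    (hasDerivAt_const _ ((r : ℂ) ^ 2)).div ((hasDerivAt_id _).const_mul 4) h4ne
  have h5 : HasDerivAt (psiP ε r t)
      (Complex.I * (1 * (1 / 4 + (ε : ℂ) * Complex.I)
        + (0 * (4 * (s : ℂ)) - (r : ℂ) ^ 2 * (4 * 1)) / (4 * (s : ℂ)) ^ 2)) s :=
    (((h2.add h3).const_mul Complex.I)).comp_ofReal
  convert h5 using 1
  unfold psiD
  field_simp
  ring

lemma hasDerivAt_psiD (ε r : ℝ) {s : ℝ} (hs : s ≠ 0) :
    HasDerivAt (psiD ε r) (psiDD r s) s := by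
  have hsc : (s : ℂ) ≠ 0 := Complex.ofReal_ne_zero.2 hs
  have h4ne : (4 : ℂ) * (s : ℂ) ^ 2 ≠ 0 := by simp [hsc]
  have hp : HasDerivAt (fun w : ℂ => 4 * w ^ 2) (4 * ((2 : ℕ) * (s : ℂ) ^ (2 - 1))) (s : ℂ) :=
    (hasDerivAt_pow 2 _).const_mul 4
  have h3 : HasDerivAt (fun w : ℂ => (r : ℂ) ^ 2 / (4 * w ^ 2))
      ((0 * (4 * (s : ℂ) ^ 2) - (r : ℂ) ^ 2 * (4 * ((2 : ℕ) * (s : ℂ) ^ (2 - 1))))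
        / (4 * (s : ℂ) ^ 2) ^ 2) (s : ℂ) :=
    (hasDerivAt_const _ ((r : ℂ) ^ 2)).div hp h4ne
  have h5 : HasDerivAt (psiD ε r)
      (Complex.I * (0 - (0 * (4 * (s : ℂ) ^ 2)
        - (r : ℂ) ^ 2 * (4 * ((2 : ℕ) * (s : ℂ) ^ (2 - 1)))) / (4 * (s : ℂ) ^ 2) ^ 2)) s :=
    (((hasDerivAt_const _ ((1 : ℂ) / 4 + (ε : ℂ) * Complex.I)).sub h3).const_mul
      Complex.I).comp_ofReal
  convert h5 using 1
  unfold psiDD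
  field_simp
  ring

lemma hasDerivAt_rpow32 {s : ℝ} (hs : 0 < s) :
    HasDerivAt (fun s : ℝ => ((s ^ (-(3 : ℝ) / 2) : ℝ) : ℂ))
      ((( -(3 : ℝ) / 2 * s ^ (-(5 : ℝ) / 2) : ℝ)) : ℂ) s := by
  have h := (Real.hasDerivAt_rpow_const (p := -(3 : ℝ) / 2) (Or.inl hs.ne')).ofReal_comp
  convert h using 2
  norm_num

lemma hasDerivAt_gA (ε r : ℝ) {s : ℝ} (hs : 0 < s) (hne : psiD ε r s ≠ 0) :
    HasDerivAt (gA ε r) (gD ε r s) s :=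
  (hasDerivAt_rpow32 hs).div (hasDerivAt_psiD ε r hs.ne') hne

set_option maxHeartbeats 2000000 in
/-- There is an absolute constant `C > 0` such that for every `ε ∈ (0,1]` and all
`r, t > 0` with `1 < r < t/100`, `|G_ε(r,t)| ≤ C · t^{-3/2}`. -/
theorem stmt1 :
    ∃ C : ℝ, 0 < C ∧
      ∀ ε ∈ Set.Ioc (0 : ℝ) 1, ∀ r t : ℝ, 0 < r → 0 < t → 1 < r → r < t / 100 →
        ‖Gker ε r t‖ ≤ C * t ^ (-(3 : ℝ) / 2) := by
  refine ⟨100, by norm_num, ?_⟩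
  rintro ε ⟨hε0, hε1⟩ r t hr ht hr1 hrt
  have ht0 : (0 : ℝ) < t := ht
  -- positivity of points in `Ici t`
  have hpos : ∀ s : ℝ, t ≤ s → 0 < s := fun s hs => lt_of_lt_of_le ht hs
  have hr_s : ∀ s : ℝ, t ≤ s → 100 * r ≤ s := by
    intro s hs
    nlinarith
  -- `|exp ψ| ≤ 1`
  have hexp_le : ∀ s : ℝ, t ≤ s → ‖Complex.exp (psiP ε r t s)‖ ≤ 1 := by
    intro s hs
    have hs0 : (0 : ℝ) < s := hpos s hs
    rw [Complex.norm_exp, Real.exp_le_one_iff]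
    have hrepr : psiP ε r t s = Complex.I * (((((s - t) / 4 + r ^ 2 / (4 * s) : ℝ)) : ℂ)
        + (((ε * (s - t) : ℝ)) : ℂ) * Complex.I) := by
      unfold psiP; push_cast; ring
    rw [hrepr]
    simp only [Complex.mul_re, Complex.add_re, Complex.add_im, Complex.mul_im,
      Complex.I_re, Complex.I_im, Complex.ofReal_re, Complex.ofReal_im]
    nlinarith [mul_nonneg hε0.le (sub_nonneg.2 hs)]
  -- lower bound for `|ψ'|`
  have habs_psiD_ge : ∀ s : ℝ, t ≤ s → 1 / 5 ≤ ‖psiD ε r s‖ := by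
    intro s hs
    have hs0 : (0 : ℝ) < s := hpos s hs
    have hw : (r : ℂ) ^ 2 / (4 * (s : ℂ) ^ 2) = ((r ^ 2 / (4 * s ^ 2) : ℝ) : ℂ) := by
      push_cast; ring
    have h1 : ‖psiD ε r s‖ =
        ‖(((1 / 4 : ℝ)) : ℂ) + (ε : ℂ) * Complex.I - ((r ^ 2 / (4 * s ^ 2) : ℝ) : ℂ)‖ := by
      unfold psiD
      rw [norm_mul, Complex.norm_I, one_mul, hw]
      norm_num
    rw [h1]
    have h2 := Complex.re_le_norm ((((1 / 4 : ℝ)) : ℂ) + (ε : ℂ) * Complex.I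
      - ((r ^ 2 / (4 * s ^ 2) : ℝ) : ℂ))
    have hre : ((((1 / 4 : ℝ)) : ℂ) + (ε : ℂ) * Complex.I - ((r ^ 2 / (4 * s ^ 2) : ℝ) : ℂ)).re
        = 1 / 4 - r ^ 2 / (4 * s ^ 2) := by
      simp only [Complex.sub_re, Complex.add_re, Complex.ofReal_re, Complex.mul_re,
        Complex.I_re, Complex.I_im, Complex.ofReal_im]
      ring
    rw [hre] at h2
    have h3 : r ^ 2 / (4 * s ^ 2) ≤ 1 / 40000 := by
      rw [div_le_div_iff₀ (by positivity) (by norm_num)]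
      nlinarith [hr_s s hs, hr.le]
    linarith
  have hpsiD_ne : ∀ s : ℝ, t ≤ s → psiD ε r s ≠ 0 := by
    intro s hs h0
    have := habs_psiD_ge s hs
    rw [h0] at this
    simp at this
    linarith
  -- bound for `|g|`
  have habs_gA_le : ∀ s : ℝ, t ≤ s → ‖gA ε r s‖ ≤ 5 * s ^ (-(3 : ℝ) / 2) := by
    intro s hs
    have hs0 : (0 : ℝ) < s := hpos s hs
    have hu : (0 : ℝ) ≤ s ^ (-(3 : ℝ) / 2) := Real.rpow_nonneg hs0.le _
    have h1 : ‖gA ε r s‖ = s ^ (-(3 : ℝ) / 2) / ‖psiD ε r s‖ := by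
      unfold gA
      rw [norm_div, Complex.norm_real, Real.norm_eq_abs, abs_of_nonneg hu]
    rw [h1, div_le_iff₀ (by linarith [habs_psiD_ge s hs])]
    nlinarith [habs_psiD_ge s hs]
  -- bound for `|ψ''|`
  have habs_psiDD : ∀ s : ℝ, t ≤ s → ‖psiDD r s‖ ≤ 1 / 20000 * s⁻¹ := by
    intro s hs
    have hs0 : (0 : ℝ) < s := hpos s hs
    have hw : (r : ℂ) ^ 2 / (2 * (s : ℂ) ^ 3) = ((r ^ 2 / (2 * s ^ 3) : ℝ) : ℂ) := by
      push_cast; ring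
    have h1 : ‖psiDD r s‖ = r ^ 2 / (2 * s ^ 3) := by
      unfold psiDD
      rw [norm_mul, Complex.norm_I, one_mul, hw, Complex.norm_real, Real.norm_eq_abs,
        abs_of_nonneg (by positivity)]
    rw [h1, div_le_iff₀ (by positivity)]
    have h2 := hr_s s hs
    have h3 : 1 / 20000 * s⁻¹ * (2 * s ^ 3) = s ^ 2 / 10000 := by
      field_simp; ring
    rw [h3]
    nlinarith [hr.le]
  -- bound for `|g'|`
  have habs_gD : ∀ s : ℝ, t ≤ s → ‖gD ε r s‖ ≤ 8 * s ^ (-(5 : ℝ) / 2) := by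
    intro s hs
    have hs0 : (0 : ℝ) < s := hpos s hs
    set P := ‖psiD ε r s‖ with hP
    have hP5 : 1 / 5 ≤ P := habs_psiD_ge s hs
    have hP0 : 0 < P := by linarith
    have hu5 : (0 : ℝ) ≤ s ^ (-(5 : ℝ) / 2) := Real.rpow_nonneg hs0.le _
    have hu3 : (0 : ℝ) ≤ s ^ (-(3 : ℝ) / 2) := Real.rpow_nonneg hs0.le _
    have hmul : s ^ (-(3 : ℝ) / 2) * s⁻¹ = s ^ (-(5 : ℝ) / 2) := by
      rw [← Real.rpow_neg_one s, ← Real.rpow_add hs0]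
      norm_num
    have h1 : ‖gD ε r s‖ = ‖
        (((-(3 : ℝ) / 2 * s ^ (-(5 : ℝ) / 2) : ℝ)) : ℂ) * psiD ε r s
          - ((s ^ (-(3 : ℝ) / 2) : ℝ) : ℂ) * psiDD r s‖ / P ^ 2 := by
      unfold gD
      rw [norm_div, norm_pow]
    rw [h1, div_le_iff₀ (by positivity)]
    have h2 : ‖(((-(3 : ℝ) / 2 * s ^ (-(5 : ℝ) / 2) : ℝ)) : ℂ) * psiD ε r s
          - ((s ^ (-(3 : ℝ) / 2) : ℝ) : ℂ) * psiDD r s‖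
        ≤ 3 / 2 * s ^ (-(5 : ℝ) / 2) * P + s ^ (-(3 : ℝ) / 2) * (1 / 20000 * s⁻¹) := by
      refine (norm_sub_le _ _).trans ?_
      gcongr
      · rw [norm_mul, Complex.norm_real, Real.norm_eq_abs]
        have : |(-(3 : ℝ) / 2 * s ^ (-(5 : ℝ) / 2))| = 3 / 2 * s ^ (-(5 : ℝ) / 2) := by
          rw [abs_of_nonpos (by nlinarith)]
          ring
        rw [this]
      · rw [norm_mul, Complex.norm_real, Real.norm_eq_abs, abs_of_nonneg hu3]
        exact mul_le_mul_of_nonneg_left (habs_psiDD s hs) hu3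
    refine h2.trans ?_
    have hmul2 : s ^ (-(3 : ℝ) / 2) * (1 / 20000 * s⁻¹) = 1 / 20000 * s ^ (-(5 : ℝ) / 2) := by
      rw [mul_comm (s ^ (-(3 : ℝ) / 2)), mul_assoc, mul_comm s⁻¹, hmul]
    rw [hmul2]
    nlinarith [mul_nonneg hu5 (sq_nonneg (P - 1 / 5))]
  set f : ℝ → ℂ := fun s => Complex.exp (psiP ε r t s) * ((s ^ (-(3 : ℝ) / 2) : ℝ) : ℂ) with hf
  set e : ℝ → ℂ := fun s => Complex.exp (psiP ε r t s) * gD ε r s with he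
  -- continuity
  have hcont_f : ContinuousOn f (Set.Ioi t) := by
    intro s hs
    have hs0 : 0 < s := hpos s (le_of_lt hs)
    exact (((hasDerivAt_psiP ε r t hs0.ne').cexp.continuousAt).mul
      (hasDerivAt_rpow32 hs0).continuousAt).continuousWithinAt
  have hcont_gD : ∀ s : ℝ, t ≤ s → ContinuousAt (gD ε r) s := by
    intro s hs
    have hs0 : 0 < s := hpos s hs
    have c1 : ContinuousAt (fun s : ℝ => ((-(3 : ℝ) / 2 * s ^ (-(5 : ℝ) / 2) : ℝ) : ℂ)) s :=
      Complex.continuous_ofReal.continuousAt.comp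
        ((Real.continuousAt_rpow_const s _ (Or.inl hs0.ne')).const_mul _)
    have c2 : ContinuousAt (psiD ε r) s := (hasDerivAt_psiD ε r hs0.ne').continuousAt
    have c4 : ContinuousAt (fun s : ℝ => ((s ^ (-(3 : ℝ) / 2) : ℝ) : ℂ)) s :=
      (hasDerivAt_rpow32 hs0).continuousAt
    have c3 : ContinuousAt (psiDD r) s := by
      have hden : ContinuousAt (fun s : ℝ => 2 * (s : ℂ) ^ 3) s :=
        ((Complex.continuous_ofReal.continuousAt).pow 3).const_mul 2
      have hdne : 2 * ((s : ℝ) : ℂ) ^ 3 ≠ 0 := by simp [hs0.ne']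
      exact continuousAt_const.mul (ContinuousAt.div continuousAt_const hden hdne)
    exact ((c1.mul c2).sub (c4.mul c3)).div (c2.pow 2)
      (pow_ne_zero 2 (hpsiD_ne s hs))
  have hcont_e : ContinuousOn e (Set.Ioi t) := by
    intro s hs
    have hs0 : 0 < s := hpos s (le_of_lt hs)
    exact (((hasDerivAt_psiP ε r t hs0.ne').cexp.continuousAt).mul
      (hcont_gD s (le_of_lt hs))).continuousWithinAt
  -- integrability
  have hint_f : IntegrableOn f (Set.Ioi t) := by
    refine Integrable.mono' (integrableOn_Ioi_rpow_of_lt (a := -(3 : ℝ) / 2) (by norm_num) ht0)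
      (hcont_f.aestronglyMeasurable measurableSet_Ioi) ?_
    rw [MeasureTheory.ae_restrict_iff' measurableSet_Ioi]
    filter_upwards with s hs
    have hs0 : 0 < s := hpos s (le_of_lt hs)
    have : ‖f s‖ = ‖Complex.exp (psiP ε r t s)‖ * s ^ (-(3 : ℝ) / 2) := by
      rw [hf]
      simp only [norm_mul, Complex.norm_real, Real.norm_eq_abs]
      rw [abs_of_nonneg (Real.rpow_nonneg hs0.le _)]
    rw [this]
    calc ‖Complex.exp (psiP ε r t s)‖ * s ^ (-(3 : ℝ) / 2)
        ≤ 1 * s ^ (-(3 : ℝ) / 2) :=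
          mul_le_mul_of_nonneg_right (hexp_le s (le_of_lt hs)) (Real.rpow_nonneg hs0.le _)
      _ = s ^ (-(3 : ℝ) / 2) := one_mul _
  have hint_rpow5 : IntegrableOn (fun s : ℝ => s ^ (-(5 : ℝ) / 2)) (Set.Ioi t) :=
    integrableOn_Ioi_rpow_of_lt (by norm_num) ht0
  have hint_e : IntegrableOn e (Set.Ioi t) := by
    refine Integrable.mono' (hint_rpow5.const_mul 8)
      (hcont_e.aestronglyMeasurable measurableSet_Ioi) ?_
    rw [MeasureTheory.ae_restrict_iff' measurableSet_Ioi]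
    filter_upwards with s hs
    have hs0 : 0 < s := hpos s (le_of_lt hs)
    have : ‖e s‖ = ‖Complex.exp (psiP ε r t s)‖ * ‖gD ε r s‖ := by
      rw [he]; simp only [norm_mul]
    rw [this]
    calc ‖Complex.exp (psiP ε r t s)‖ * ‖gD ε r s‖
        ≤ 1 * (8 * s ^ (-(5 : ℝ) / 2)) :=
          mul_le_mul (hexp_le s (le_of_lt hs)) (habs_gD s (le_of_lt hs))
            (norm_nonneg _) (by norm_num)
      _ = 8 * s ^ (-(5 : ℝ) / 2) := one_mul _
  -- limit at infinity
  have htendF : Filter.Tendsto (fun s => Complex.exp (psiP ε r t s) * gA ε r s)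
      Filter.atTop (nhds 0) := by
    have hg0 : Filter.Tendsto (fun s : ℝ => 5 * s ^ (-(3 : ℝ) / 2)) Filter.atTop (nhds 0) := by
      have h0 := (tendsto_rpow_neg_atTop (y := (3 : ℝ) / 2) (by norm_num)).const_mul (5 : ℝ)
      simpa [neg_div] using h0
    refine squeeze_zero_norm' ?_ hg0
    · filter_upwards [Filter.eventually_ge_atTop t] with s hs
      have hs0 : 0 < s := hpos s hs
      simp only [norm_mul]
      calc ‖Complex.exp (psiP ε r t s)‖ * ‖gA ε r s‖
          ≤ 1 * (5 * s ^ (-(3 : ℝ) / 2)) :=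
            mul_le_mul (hexp_le s hs) (habs_gA_le s hs) (norm_nonneg _) (by norm_num)
        _ = 5 * s ^ (-(3 : ℝ) / 2) := one_mul _
  -- FTC on (t, ∞)
  have hderiv : ∀ s ∈ Set.Ici t, HasDerivAt (fun s => Complex.exp (psiP ε r t s) * gA ε r s)
      (f s + e s) s := by
    intro s hs
    have hs0 : 0 < s := hpos s hs
    have h1 := ((hasDerivAt_psiP ε r t hs0.ne').cexp).mul
      (hasDerivAt_gA ε r hs0 (hpsiD_ne s hs))
    refine h1.congr_deriv ?_
    simp only [hf, he]
    unfold gA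
    field_simp [hpsiD_ne s hs]
  have key := MeasureTheory.integral_Ioi_of_hasDerivAt_of_tendsto' hderiv
    (hint_f.add hint_e) htendF
  rw [MeasureTheory.integral_add hint_f hint_e] at key
  have hIf : ∫ s in Set.Ioi t, f s
      = -(Complex.exp (psiP ε r t t) * gA ε r t) - ∫ s in Set.Ioi t, e s := by
    linear_combination key
  -- bound the integral of e
  have htm : (0 : ℝ) < t ^ (-(3 : ℝ) / 2) := Real.rpow_pos_of_pos ht0 _
  have hIe : ‖∫ s in Set.Ioi t, e s‖ ≤ 16 / 3 * t ^ (-(3 : ℝ) / 2) := by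
    have hb : ∀ᵐ s ∂(volume.restrict (Set.Ioi t)), ‖e s‖ ≤ 8 * s ^ (-(5 : ℝ) / 2) := by
      rw [MeasureTheory.ae_restrict_iff' measurableSet_Ioi]
      filter_upwards with s hs
      have hs0 : 0 < s := hpos s (le_of_lt hs)
      have h1 : ‖e s‖ = ‖Complex.exp (psiP ε r t s)‖ * ‖gD ε r s‖ := by
        rw [he]; simp only [norm_mul]
      rw [h1]
      calc ‖Complex.exp (psiP ε r t s)‖ * ‖gD ε r s‖
          ≤ 1 * (8 * s ^ (-(5 : ℝ) / 2)) :=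
            mul_le_mul (hexp_le s (le_of_lt hs)) (habs_gD s (le_of_lt hs))
              (norm_nonneg _) (by norm_num)
        _ = 8 * s ^ (-(5 : ℝ) / 2) := one_mul _
    have h := MeasureTheory.norm_integral_le_of_norm_le (hint_rpow5.const_mul 8) hb
    rw [MeasureTheory.integral_const_mul] at h
    rw [integral_Ioi_rpow_of_lt (by norm_num) ht0] at h
    have he2 : (-(5 : ℝ) / 2 + 1) = -(3 : ℝ) / 2 := by norm_num
    rw [he2] at h
    have he3 : 8 * (-t ^ (-(3 : ℝ) / 2) / (-(3 : ℝ) / 2)) = 16 / 3 * t ^ (-(3 : ℝ) / 2) := by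
      ring
    rw [he3] at h
    simpa using h
  -- bound the boundary term
  have hFt : ‖Complex.exp (psiP ε r t t) * gA ε r t‖ ≤ 5 * t ^ (-(3 : ℝ) / 2) := by
    rw [norm_mul]
    calc ‖Complex.exp (psiP ε r t t)‖ * ‖gA ε r t‖
        ≤ 1 * (5 * t ^ (-(3 : ℝ) / 2)) :=
          mul_le_mul (hexp_le t le_rfl) (habs_gA_le t le_rfl) (norm_nonneg _) (by norm_num)
      _ = 5 * t ^ (-(3 : ℝ) / 2) := one_mul _
  have hIf_bound : ‖∫ s in Set.Ioi t, f s‖ ≤ 31 / 3 * t ^ (-(3 : ℝ) / 2) := by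
    rw [hIf]
    have h1 : -(Complex.exp (psiP ε r t t) * gA ε r t) - ∫ s in Set.Ioi t, e s
        = -((Complex.exp (psiP ε r t t) * gA ε r t) + ∫ s in Set.Ioi t, e s) := by ring
    rw [h1, norm_neg]
    calc ‖(Complex.exp (psiP ε r t t) * gA ε r t) + ∫ s in Set.Ioi t, e s‖
        ≤ ‖Complex.exp (psiP ε r t t) * gA ε r t‖
          + ‖∫ s in Set.Ioi t, e s‖ := norm_add_le _ _
      _ ≤ 5 * t ^ (-(3 : ℝ) / 2) + 16 / 3 * t ^ (-(3 : ℝ) / 2) := add_le_add hFt hIe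
      _ = 31 / 3 * t ^ (-(3 : ℝ) / 2) := by ring
  -- assemble
  have hGker : Gker ε r t = (Complex.exp (-(Real.pi / 4 : ℝ) * Complex.I)
      / ((8 * Real.pi ^ ((3 : ℝ) / 2) : ℝ))) * ∫ s in Set.Ioi t, f s := rfl
  rw [hGker, norm_mul]
  have hpref : ‖Complex.exp (-(Real.pi / 4 : ℝ) * Complex.I)
      / ((8 * Real.pi ^ ((3 : ℝ) / 2) : ℝ))‖ ≤ 1 := by
    rw [norm_div, Complex.norm_exp]
    have h1 : ((-(Real.pi / 4 : ℝ) : ℂ) * Complex.I).re = 0 := by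
      simp [Complex.mul_re]
    rw [h1, Real.exp_zero, Complex.norm_real, Real.norm_eq_abs]
    have h2 : (1 : ℝ) ≤ |8 * Real.pi ^ ((3 : ℝ) / 2)| := by
      rw [abs_of_nonneg (by positivity)]
      have h3 : (1 : ℝ) ≤ Real.pi ^ ((3 : ℝ) / 2) :=
        Real.one_le_rpow (by linarith [Real.pi_gt_three]) (by norm_num)
      linarith
    rw [div_le_one (by linarith)]
    exact h2
  calc ‖Complex.exp (-(Real.pi / 4 : ℝ) * Complex.I)
        / ((8 * Real.pi ^ ((3 : ℝ) / 2) : ℝ))‖ * ‖∫ s in Set.Ioi t, f s‖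
      ≤ 1 * (31 / 3 * t ^ (-(3 : ℝ) / 2)) :=
        mul_le_mul hpref hIf_bound (norm_nonneg _) (by norm_num)
    _ ≤ 100 * t ^ (-(3 : ℝ) / 2) := by nlinarith
end

section
/- There is an absolute constant C > 0 such that for every ε ∈ (0,1] and all t > 0 and 0 < r < 1, the kernel satisfies |G_ε(r,t)| ≤ C · min( t^{-1/2}(1+t)^{-1}, r^{-1} ). -/
open MeasureTheory

namespace S2

open Set

noncomputable def E (ε t r s : ℝ) : ℂ :=
  Complex.exp (Complex.I * (((s : ℂ) - (t : ℂ)) * (1 / 4 + (ε : ℂ) * Complex.I)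
      + (r : ℂ) ^ 2 / (4 * (s : ℂ))))

noncomputable def g (s : ℝ) : ℂ := ((s ^ (-(3 : ℝ) / 2) : ℝ) : ℂ)

noncomputable def gd (s : ℝ) : ℂ := ((-(3 : ℝ) / 2 * s ^ (-(3 : ℝ) / 2 - 1) : ℝ) : ℂ)

noncomputable def ψ (ε r s : ℝ) : ℂ :=
  Complex.I * ((1 / 4 + (ε : ℂ) * Complex.I) - (r : ℂ) ^ 2 / (4 * (s : ℂ) ^ 2))

noncomputable def ψd (r s : ℝ) : ℂ := Complex.I * ((r : ℂ) ^ 2 / (2 * (s : ℂ) ^ 3))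

noncomputable def h (ε r s : ℝ) : ℂ := g s / ψ ε r s

noncomputable def H (ε r s : ℝ) : ℂ :=
  (gd s * ψ ε r s - g s * ψd r s) / (ψ ε r s) ^ 2

lemma abs_E (ε t r s : ℝ) : ‖E ε t r s‖ = Real.exp (-(ε * (s - t))) := by
  have hw : Complex.I * (((s : ℂ) - t) * (1 / 4 + (ε : ℂ) * Complex.I)
        + (r : ℂ) ^ 2 / (4 * (s : ℂ)))
      = Complex.I * ((((s - t : ℝ)) : ℂ) * ((((1:ℝ)/4 : ℝ) : ℂ) + (ε : ℂ) * Complex.I)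
        + ((r ^ 2 / (4 * s) : ℝ) : ℂ)) := by
    push_cast; ring
  rw [E, hw, Complex.norm_exp]
  congr 1
  simp only [Complex.mul_re, Complex.mul_im, Complex.add_im, Complex.add_re,
    Complex.I_re, Complex.I_im, Complex.ofReal_re, Complex.ofReal_im,
    one_mul, mul_one, mul_zero, zero_mul, sub_zero, zero_sub, add_zero, zero_add]
  ring

lemma abs_E_le_one {ε t s : ℝ} (r : ℝ) (hε : 0 ≤ ε) (hts : t ≤ s) :
    ‖E ε t r s‖ ≤ 1 := by
  rw [abs_E, Real.exp_le_one_iff]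
  nlinarith

lemma abs_psi_ge (ε r s : ℝ) : |1 / 4 - r ^ 2 / (4 * s ^ 2)| ≤ ‖ψ ε r s‖ := by
  have hw : (1 / 4 + (ε : ℂ) * Complex.I) - (r : ℂ) ^ 2 / (4 * (s : ℂ) ^ 2)
      = (((1 / 4 - r ^ 2 / (4 * s ^ 2) : ℝ)) : ℂ) + (ε : ℂ) * Complex.I := by
    push_cast; ring
  rw [ψ, norm_mul, Complex.norm_I, one_mul, hw]
  calc |1 / 4 - r ^ 2 / (4 * s ^ 2)|
      = |((((1 / 4 - r ^ 2 / (4 * s ^ 2) : ℝ)) : ℂ) + (ε : ℂ) * Complex.I).re| := by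
        simp only [Complex.add_re, Complex.ofReal_re, Complex.mul_re, Complex.I_re,
          Complex.I_im, Complex.ofReal_im, mul_zero, mul_one, zero_mul, sub_zero, add_zero]
    _ ≤ _ := Complex.abs_re_le_norm _

lemma abs_g (s : ℝ) : ‖g s‖ = |s ^ (-(3 : ℝ) / 2)| := by
  simp [g]

lemma abs_g_of_pos {s : ℝ} (hs : 0 < s) : ‖g s‖ = s ^ (-(3 : ℝ) / 2) := by
  rw [abs_g, abs_of_pos (Real.rpow_pos_of_pos hs _)]

lemma abs_gd_of_pos {s : ℝ} (hs : 0 < s) :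
    ‖gd s‖ = 3 / 2 * s ^ (-(3 : ℝ) / 2 - 1) := by
  rw [gd]
  rw [Complex.norm_real, Real.norm_eq_abs, abs_mul, abs_of_pos (Real.rpow_pos_of_pos hs _)]
  norm_num

lemma abs_psid_of_pos {r s : ℝ} (hs : 0 < s) :
    ‖ψd r s‖ = r ^ 2 / (2 * s ^ 3) := by
  have hw : ((r : ℂ) ^ 2 / (2 * (s : ℂ) ^ 3)) = ((r ^ 2 / (2 * s ^ 3) : ℝ) : ℂ) := by
    push_cast; ring
  rw [ψd, norm_mul, Complex.norm_I, one_mul, hw, Complex.norm_real, Real.norm_eq_abs,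
    abs_of_nonneg (by positivity)]

lemma hasDerivAt_ofReal (s : ℝ) : HasDerivAt (fun x : ℝ => (x : ℂ)) 1 s := by
  exact Complex.ofRealCLM.hasDerivAt (x := s)

lemma hasDerivAt_E (ε t r : ℝ) {s : ℝ} (hs : s ≠ 0) :
    HasDerivAt (E ε t r) (ψ ε r s * E ε t r s) s := by
  have hs' := hasDerivAt_ofReal s
  have h1 : HasDerivAt (fun x : ℝ => ((x : ℂ) - t) * (1 / 4 + (ε : ℂ) * Complex.I))
      (1 / 4 + (ε : ℂ) * Complex.I) s := by
    simpa using (hs'.sub_const (t : ℂ)).mul_const _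
  have h4 : HasDerivAt (fun x : ℝ => 4 * (x : ℂ)) 4 s := by simpa using hs'.const_mul (4 : ℂ)
  have hsc : (s : ℂ) ≠ 0 := by simpa using hs
  have h4n : (4 : ℂ) * (s : ℂ) ≠ 0 := by
    simp [hs]
  have h2 : HasDerivAt (fun x : ℝ => (r : ℂ) ^ 2 / (4 * (x : ℂ)))
      (-((r : ℂ) ^ 2 / (4 * (s : ℂ) ^ 2))) s := by
    have := (hasDerivAt_const s ((r : ℂ) ^ 2)).div h4 h4n
    refine this.congr_deriv ?_
    field_simp
    ring
  have h3 := ((h1.add h2).const_mul Complex.I).cexp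
  refine h3.congr_deriv ?_
  rw [ψ, E]
  simp only [Pi.add_apply]
  ring

lemma hasDerivAt_g {s : ℝ} (hs : s ≠ 0) : HasDerivAt g (gd s) s :=
  (Real.hasDerivAt_rpow_const (Or.inl hs)).ofReal_comp

lemma hasDerivAt_psi (ε r : ℝ) {s : ℝ} (hs : s ≠ 0) :
    HasDerivAt (ψ ε r) (ψd r s) s := by
  have hs' := hasDerivAt_ofReal s
  have hsc : (s : ℂ) ≠ 0 := by simpa using hs
  have hsq : HasDerivAt (fun x : ℝ => (x : ℂ) ^ 2) (2 * (s : ℂ)) s := by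
    convert hs'.mul hs' using 1
    · rfl
    · ext x; simp [pow_two]
    · ring
  have h4 : HasDerivAt (fun x : ℝ => 4 * (x : ℂ) ^ 2) (8 * (s : ℂ)) s := by
    have := hsq.const_mul (4 : ℂ)
    refine this.congr_deriv ?_
    ring
  have h4n : (4 : ℂ) * (s : ℂ) ^ 2 ≠ 0 := by simp [hs]
  have h2 := (hasDerivAt_const s ((r : ℂ) ^ 2)).div h4 h4n
  have h3 := ((hasDerivAt_const s ((1:ℂ) / 4 + (ε : ℂ) * Complex.I)).sub h2).const_mul Complex.I
  refine h3.congr_deriv ?_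
  rw [ψd]
  field_simp
  ring

lemma hasDerivAt_h (ε r : ℝ) {s : ℝ} (hs : s ≠ 0) (hψ : ψ ε r s ≠ 0) :
    HasDerivAt (h ε r) (H ε r s) s :=
  (hasDerivAt_g hs).div (hasDerivAt_psi ε r hs) hψ

lemma continuousOn_E (ε t r : ℝ) {S : Set ℝ} (h0 : ∀ s ∈ S, s ≠ 0) :
    ContinuousOn (E ε t r) S := fun s hs =>
  (hasDerivAt_E ε t r (h0 s hs)).continuousAt.continuousWithinAt

lemma continuousOn_g {S : Set ℝ} (h0 : ∀ s ∈ S, s ≠ 0) : ContinuousOn g S := fun s hs =>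
  (hasDerivAt_g (h0 s hs)).continuousAt.continuousWithinAt

lemma continuousOn_psi (ε r : ℝ) {S : Set ℝ} (h0 : ∀ s ∈ S, s ≠ 0) :
    ContinuousOn (ψ ε r) S := fun s hs =>
  (hasDerivAt_psi ε r (h0 s hs)).continuousAt.continuousWithinAt

lemma continuousOn_h (ε r : ℝ) {S : Set ℝ} (h0 : ∀ s ∈ S, s ≠ 0)
    (hψ : ∀ s ∈ S, ψ ε r s ≠ 0) : ContinuousOn (h ε r) S := fun s hs =>
  (hasDerivAt_h ε r (h0 s hs) (hψ s hs)).continuousAt.continuousWithinAt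

lemma continuousOn_H (ε r : ℝ) {S : Set ℝ} (h0 : ∀ s ∈ S, s ≠ 0)
    (hψ : ∀ s ∈ S, ψ ε r s ≠ 0) : ContinuousOn (H ε r) S := by
  have hgd : ContinuousOn gd S := by
    apply Complex.continuous_ofReal.comp_continuousOn
    exact continuousOn_const.mul (continuousOn_id.rpow_const fun x hx => Or.inl (h0 x hx))
  have hpsid : ContinuousOn (fun s => ψd r s) S := by
    apply continuousOn_const.mul
    apply continuousOn_const.div
    · exact (continuous_const.mul (Complex.continuous_ofReal.pow 3)).continuousOn
    · intro x hx
      simp [h0 x hx]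
  exact (((hgd.mul (continuousOn_psi ε r h0)).sub
    ((continuousOn_g h0).mul hpsid)).div
    ((continuousOn_psi ε r h0).pow 2) (fun x hx => pow_ne_zero _ (hψ x hx)))

lemma ibp (ε t r a b : ℝ) (ha : 0 < a) (hab : a ≤ b)
    (hψ : ∀ s ∈ Icc a b, ψ ε r s ≠ 0) :
    ∫ s in a..b, E ε t r s * g s
      = E ε t r b * h ε r b - E ε t r a * h ε r a - ∫ s in a..b, E ε t r s * H ε r s := by
  have h0 : ∀ s ∈ Icc a b, s ≠ 0 := fun s hs => (lt_of_lt_of_le ha hs.1).ne'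
  have huIcc : uIcc a b = Icc a b := uIcc_of_le hab
  have hcE := continuousOn_E ε t r h0
  have hcg := continuousOn_g h0
  have hcH := continuousOn_H ε r h0 hψ
  have hint1 : IntervalIntegrable (fun s => E ε t r s * g s) volume a b := by
    apply ContinuousOn.intervalIntegrable
    rw [huIcc]; exact hcE.mul hcg
  have hint2 : IntervalIntegrable (fun s => E ε t r s * H ε r s) volume a b := by
    apply ContinuousOn.intervalIntegrable
    rw [huIcc]; exact hcE.mul hcH
  have hd : ∀ s ∈ uIcc a b, HasDerivAt (fun x => E ε t r x * h ε r x)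
      (E ε t r s * g s + E ε t r s * H ε r s) s := by
    intro s hs
    rw [huIcc] at hs
    have hs0 := h0 s hs
    have := (hasDerivAt_E ε t r hs0).mul (hasDerivAt_h ε r hs0 (hψ s hs))
    refine this.congr_deriv ?_
    rw [h]
    field_simp [hψ s hs]
  have hFTC := intervalIntegral.integral_eq_sub_of_hasDerivAt hd (hint1.add hint2)
  rw [intervalIntegral.integral_add hint1 hint2] at hFTC
  exact eq_sub_of_add_eq hFTC

lemma ibp_bound (ε t r a b : ℝ) (φ : ℝ → ℝ) (hε : 0 ≤ ε) (ha : 0 < a) (hab : a ≤ b)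
    (hta : t ≤ a)
    (hψ : ∀ s ∈ Icc a b, ψ ε r s ≠ 0)
    (hφ : ∀ s ∈ Icc a b, ‖H ε r s‖ ≤ φ s)
    (hφ0 : ∀ s ∈ Icc a b, 0 ≤ φ s)
    (hφi : IntervalIntegrable φ volume a b) :
    ‖∫ s in a..b, E ε t r s * g s‖
      ≤ ‖h ε r a‖ + ‖h ε r b‖ + ∫ s in a..b, φ s := by
  rw [ibp ε t r a b ha hab hψ]
  have h1 : ‖∫ s in a..b, E ε t r s * H ε r s‖ ≤ ∫ s in a..b, φ s := by
    have hb : ∀ᵐ s ∂volume.restrict (Set.uIoc a b), ‖E ε t r s * H ε r s‖ ≤ φ s := by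
      rw [uIoc_of_le hab]
      refine (ae_restrict_iff' measurableSet_Ioc).mpr (ae_of_all _ fun s hs => ?_)
      have hs' : s ∈ Icc a b := Ioc_subset_Icc_self hs
      calc ‖E ε t r s * H ε r s‖
          = ‖E ε t r s‖ * ‖H ε r s‖ := by
            simp [norm_mul]
        _ ≤ 1 * φ s := mul_le_mul (abs_E_le_one r hε (hta.trans hs'.1)) (hφ s hs')
            (norm_nonneg _) zero_le_one
        _ = φ s := one_mul _
    refine (intervalIntegral.norm_integral_le_abs_of_norm_le hb hφi).trans ?_
    rw [abs_of_nonneg (intervalIntegral.integral_nonneg hab hφ0)]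
  have h2 : ‖E ε t r b * h ε r b‖ ≤ ‖h ε r b‖ := by
    rw [show ‖E ε t r b * h ε r b‖ = ‖E ε t r b‖ * ‖h ε r b‖ by
      simp [norm_mul]]
    nlinarith [norm_nonneg (h ε r b), abs_E_le_one (t := t) r hε (hta.trans hab),
      norm_nonneg (E ε t r b)]
  have h3 : ‖E ε t r a * h ε r a‖ ≤ ‖h ε r a‖ := by
    rw [show ‖E ε t r a * h ε r a‖ = ‖E ε t r a‖ * ‖h ε r a‖ by
      simp [norm_mul]]
    nlinarith [norm_nonneg (h ε r a), abs_E_le_one (t := t) r hε hta,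
      norm_nonneg (E ε t r a)]
  calc ‖E ε t r b * h ε r b - E ε t r a * h ε r a - ∫ s in a..b, E ε t r s * H ε r s‖
      ≤ ‖E ε t r b * h ε r b - E ε t r a * h ε r a‖
        + ‖∫ s in a..b, E ε t r s * H ε r s‖ := norm_sub_le _ _
    _ ≤ (‖E ε t r b * h ε r b‖ + ‖E ε t r a * h ε r a‖) + ∫ s in a..b, φ s :=
        add_le_add (norm_sub_le _ _) h1
    _ ≤ _ := by linarith

lemma integrableOn_f (ε t r b : ℝ) (hε : 0 ≤ ε) (ht : 0 < t) (htb : t ≤ b) :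
    IntegrableOn (fun s => E ε t r s * g s) (Ioi b) := by
  have hb : 0 < b := lt_of_lt_of_le ht htb
  have h0 : ∀ s ∈ Ioi b, s ≠ 0 := fun s hs => (hb.trans hs).ne'
  refine Integrable.mono' (g := fun s : ℝ => s ^ (-(3:ℝ)/2))
    (integrableOn_Ioi_rpow_of_lt (by norm_num) hb)
    (((continuousOn_E ε t r h0).mul (continuousOn_g h0)).aestronglyMeasurable
      measurableSet_Ioi) ?_
  refine (ae_restrict_iff' measurableSet_Ioi).mpr (ae_of_all _ fun s hs => ?_)
  have hs0 : 0 < s := hb.trans hs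
  calc ‖E ε t r s * g s‖ = ‖E ε t r s‖ * ‖g s‖ := by
        simp [norm_mul]
    _ ≤ 1 * s ^ (-(3:ℝ)/2) := by
        rw [abs_g_of_pos hs0]
        exact mul_le_mul_of_nonneg_right (abs_E_le_one r hε (htb.trans hs.le))
          (Real.rpow_pos_of_pos hs0 _).le
    _ = s ^ (-(3:ℝ)/2) := one_mul _

lemma tail_bound (ε t r b : ℝ) (hε : 0 ≤ ε) (ht : 0 < t) (htb : t ≤ b) :
    ‖∫ s in Ioi b, E ε t r s * g s‖ ≤ 2 * b ^ (-(1:ℝ)/2) := by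
  have hb : 0 < b := lt_of_lt_of_le ht htb
  calc ‖∫ s in Ioi b, E ε t r s * g s‖ ≤ ∫ s in Ioi b, ‖E ε t r s * g s‖ :=
      norm_integral_le_integral_norm _
    _ ≤ ∫ s in Ioi b, s ^ (-(3:ℝ)/2) := by
        apply setIntegral_mono_on (integrableOn_f ε t r b hε ht htb).norm
          (integrableOn_Ioi_rpow_of_lt (by norm_num) hb) measurableSet_Ioi
        intro s hs
        have hs0 : 0 < s := hb.trans hs
        calc ‖E ε t r s * g s‖ = ‖E ε t r s‖ * ‖g s‖ := by
              simp [norm_mul]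
          _ ≤ 1 * s ^ (-(3:ℝ)/2) := by
              rw [abs_g_of_pos hs0]
              exact mul_le_mul_of_nonneg_right (abs_E_le_one r hε (htb.trans hs.le))
                (Real.rpow_pos_of_pos hs0 _).le
          _ = s ^ (-(3:ℝ)/2) := one_mul _
    _ = -b ^ (-(3:ℝ)/2 + 1) / (-(3:ℝ)/2 + 1) := integral_Ioi_rpow_of_lt (by norm_num) hb
    _ = 2 * b ^ (-(1:ℝ)/2) := by
        rw [show (-(3:ℝ)/2 + 1) = -(1:ℝ)/2 by norm_num]
        ring

lemma split_int (ε t r b : ℝ) (hε : 0 ≤ ε) (ht : 0 < t) (htb : t ≤ b) :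
    ∫ s in Ioi t, E ε t r s * g s
      = (∫ s in t..b, E ε t r s * g s) + ∫ s in Ioi b, E ε t r s * g s := by
  rw [intervalIntegral.integral_of_le htb,
    ← setIntegral_union (Ioc_disjoint_Ioi le_rfl) measurableSet_Ioi
      ((integrableOn_f ε t r t hε ht le_rfl).mono_set Ioc_subset_Ioi_self)
      (integrableOn_f ε t r b hε ht htb),
    Ioc_union_Ioi_eq_Ioi htb]

lemma H_bound (ε r s m : ℝ) (hs : 0 < s) (hm : 0 < m)
    (hψm : m ≤ ‖ψ ε r s‖) :
    ‖H ε r s‖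
      ≤ 3 / 2 * s ^ (-(3:ℝ)/2 - 1) / m + s ^ (-(3:ℝ)/2) * (r ^ 2 / (2 * s ^ 3)) / m ^ 2 := by
  have hψ0 : (0:ℝ) < ‖ψ ε r s‖ := lt_of_lt_of_le hm hψm
  have hnum : ‖gd s * ψ ε r s - g s * ψd r s‖
      ≤ 3 / 2 * s ^ (-(3:ℝ)/2 - 1) * ‖ψ ε r s‖
        + s ^ (-(3:ℝ)/2) * (r ^ 2 / (2 * s ^ 3)) := by
    calc ‖gd s * ψ ε r s - g s * ψd r s‖
        ≤ ‖gd s * ψ ε r s‖ + ‖g s * ψd r s‖ := by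
          simpa [norm_mul] using
            norm_sub_le (gd s * ψ ε r s) (g s * ψd r s)
      _ = _ := by
          rw [norm_mul, norm_mul, abs_gd_of_pos hs, abs_g_of_pos hs, abs_psid_of_pos hs]
  rw [H, norm_div, norm_pow]
  calc ‖gd s * ψ ε r s - g s * ψd r s‖ / ‖ψ ε r s‖ ^ 2
      ≤ (3 / 2 * s ^ (-(3:ℝ)/2 - 1) * ‖ψ ε r s‖
          + s ^ (-(3:ℝ)/2) * (r ^ 2 / (2 * s ^ 3))) / ‖ψ ε r s‖ ^ 2 := by
        gcongr
    _ = 3 / 2 * s ^ (-(3:ℝ)/2 - 1) / ‖ψ ε r s‖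
        + s ^ (-(3:ℝ)/2) * (r ^ 2 / (2 * s ^ 3)) / ‖ψ ε r s‖ ^ 2 := by
        field_simp
    _ ≤ _ := by
        gcongr

lemma psi_ne (ε r s : ℝ) {m : ℝ} (hm : 0 < m) (hle : m ≤ ‖ψ ε r s‖) :
    ψ ε r s ≠ 0 := by
  intro h0
  rw [h0, norm_zero] at hle
  linarith

lemma abs_h_le (ε r s m : ℝ) (hs : 0 < s) (hm : 0 < m)
    (hψm : m ≤ ‖ψ ε r s‖) :
    ‖h ε r s‖ ≤ s ^ (-(3:ℝ)/2) / m := by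
  rw [h, norm_div, abs_g_of_pos hs]
  gcongr

lemma rpow_neg_half {s : ℝ} (hs : 0 < s) : s ^ (-(1:ℝ)/2) = (Real.sqrt s)⁻¹ := by
  rw [show (-(1:ℝ)/2) = -(1/2 : ℝ) by norm_num, Real.rpow_neg hs.le, Real.sqrt_eq_rpow]

lemma rpow_half {s : ℝ} (hs : 0 < s) : s ^ ((1:ℝ)/2) = Real.sqrt s := by
  rw [Real.sqrt_eq_rpow]

lemma rpow_neg_3half {s : ℝ} (hs : 0 < s) : s ^ (-(3:ℝ)/2) = (Real.sqrt s * s)⁻¹ := by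
  rw [show (-(3:ℝ)/2) = -(3/2 : ℝ) by norm_num, Real.rpow_neg hs.le]
  congr 1
  rw [show (3/2 : ℝ) = 1/2 + 1 by norm_num, Real.rpow_add hs, Real.rpow_one,
    ← Real.sqrt_eq_rpow]

lemma rpow_neg_5half {s : ℝ} (hs : 0 < s) :
    s ^ (-(3:ℝ)/2 - 1) = (Real.sqrt s * s ^ 2)⁻¹ := by
  rw [show (-(3:ℝ)/2 - 1) = -(5/2 : ℝ) by norm_num, Real.rpow_neg hs.le]
  congr 1
  rw [show (5/2 : ℝ) = 1/2 + ((2:ℕ):ℝ) by norm_num, Real.rpow_add hs,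
    Real.rpow_natCast, ← Real.sqrt_eq_rpow]

lemma psi_lb_A (ε r : ℝ) (hr : 0 ≤ r) (hr1 : r ≤ 1) {s : ℝ} (hs : 2 ≤ s) :
    (1/8 : ℝ) ≤ ‖ψ ε r s‖ := by
  have hs0 : (0:ℝ) < s := by linarith
  have h1 : r ^ 2 / (4 * s ^ 2) ≤ 1 / 16 := by
    rw [div_le_div_iff₀ (by positivity) (by norm_num)]
    nlinarith
  linarith [le_abs_self (1/4 - r ^ 2 / (4 * s ^ 2)), abs_psi_ge ε r s]

lemma psi_lb_B (ε r : ℝ) (hr : 0 < r) (hr1 : r ≤ 1) {s : ℝ} (hs : 0 < s)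
    (hsb : s ≤ r ^ 2 / 2) :
    r ^ 2 / (8 * s ^ 2) ≤ ‖ψ ε r s‖ := by
  have hs1 : s ≤ 1 / 2 := by nlinarith
  have h2 : 2 * s ^ 2 ≤ r ^ 2 := by nlinarith
  have h14 : (1:ℝ)/4 ≤ r ^ 2 / (8 * s ^ 2) := by
    rw [le_div_iff₀ (by positivity)]
    nlinarith
  have hid : r ^ 2 / (4 * s ^ 2) = 2 * (r ^ 2 / (8 * s ^ 2)) := by
    field_simp
    ring
  have := abs_psi_ge ε r s
  have hneg := neg_abs_le (1/4 - r ^ 2 / (4 * s ^ 2))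
  linarith

lemma caseA (ε t r : ℝ) (hε : 0 ≤ ε) (hr : 0 < r) (hr1 : r ≤ 1) (ht : 2 ≤ t) :
    ‖∫ s in Ioi t, E ε t r s * g s‖ ≤ 48 * t ^ (-(3:ℝ)/2) := by
  have ht0 : 0 < t := by linarith
  set b : ℝ := t ^ 3 with hbdef
  have htb : t ≤ b := by nlinarith [mul_nonneg (mul_nonneg (by linarith : (0:ℝ) ≤ t)
    (by linarith : (0:ℝ) ≤ t - 1)) (by linarith : (0:ℝ) ≤ t + 1)]
  have hb0 : 0 < b := by positivity
  have hψpos : ∀ s ∈ Icc t b, (1/8 : ℝ) ≤ ‖ψ ε r s‖ :=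
    fun s hs => psi_lb_A ε r hr.le hr1 (ht.trans hs.1)
  have hψne : ∀ s ∈ Icc t b, ψ ε r s ≠ 0 :=
    fun s hs => psi_ne ε r s (by norm_num) (hψpos s hs)
  have hφ : ∀ s ∈ Icc t b, ‖H ε r s‖ ≤ 44 * s ^ (-(3:ℝ)/2 - 1) := by
    intro s hs
    have hs2 : 2 ≤ s := ht.trans hs.1
    have hs0 : 0 < s := by linarith
    have hs1 : 1 ≤ s := by linarith
    refine (H_bound ε r s (1/8) hs0 (by norm_num) (hψpos s hs)).trans ?_
    have hmono : s ^ (-(3:ℝ)/2 + -3) ≤ s ^ (-(3:ℝ)/2 - 1) :=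
      Real.rpow_le_rpow_of_exponent_le hs1 (by norm_num)
    have hneg3 : s ^ ((-3:ℝ)) = (s ^ 3)⁻¹ := by
      rw [show ((-3:ℝ)) = -((3:ℕ):ℝ) by norm_num, Real.rpow_neg hs0.le, Real.rpow_natCast]
    have hsplit : s ^ (-(3:ℝ)/2) * (s ^ 3)⁻¹ = s ^ (-(3:ℝ)/2 + -3) := by
      rw [Real.rpow_add hs0, hneg3]
    have hp1 : 3 / 2 * s ^ (-(3:ℝ)/2 - 1) / (1/8) = 12 * s ^ (-(3:ℝ)/2 - 1) := by ring
    have hp2 : s ^ (-(3:ℝ)/2) * (r ^ 2 / (2 * s ^ 3)) / (1/8) ^ 2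
        ≤ 32 * s ^ (-(3:ℝ)/2 - 1) := by
      have : s ^ (-(3:ℝ)/2) * (r ^ 2 / (2 * s ^ 3)) / (1/8) ^ 2
          = 32 * r ^ 2 * (s ^ (-(3:ℝ)/2) * (s ^ 3)⁻¹) := by ring
      rw [this, hsplit]
      calc 32 * r ^ 2 * s ^ (-(3:ℝ)/2 + -3) ≤ 32 * 1 * s ^ (-(3:ℝ)/2 - 1) := by
            gcongr
            nlinarith
        _ = 32 * s ^ (-(3:ℝ)/2 - 1) := by ring
    linarith
  have hφ0 : ∀ s ∈ Icc t b, 0 ≤ 44 * s ^ (-(3:ℝ)/2 - 1) := by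
    intro s hs
    have hs0 : 0 < s := lt_of_lt_of_le ht0 hs.1
    positivity
  have hφi : IntervalIntegrable (fun s : ℝ => 44 * s ^ (-(3:ℝ)/2 - 1)) volume t b := by
    apply ContinuousOn.intervalIntegrable
    apply continuousOn_const.mul
    apply continuousOn_id.rpow_const
    intro x hx
    rw [uIcc_of_le htb] at hx
    exact Or.inl (lt_of_lt_of_le ht0 hx.1).ne'
  have hibp := ibp_bound ε t r t b (fun s => 44 * s ^ (-(3:ℝ)/2 - 1)) hε ht0 htb le_rfl
    hψne hφ hφ0 hφi
  have hha : ‖h ε r t‖ ≤ 8 * t ^ (-(3:ℝ)/2) := by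
    have h1 := abs_h_le ε r t (1/8) ht0 (by norm_num) (hψpos t ⟨le_rfl, htb⟩)
    calc ‖h ε r t‖ ≤ t ^ (-(3:ℝ)/2) / (1/8) := h1
      _ = 8 * t ^ (-(3:ℝ)/2) := by ring
  have hhb : ‖h ε r b‖ ≤ 8 * t ^ (-(3:ℝ)/2) := by
    have h1 := abs_h_le ε r b (1/8) hb0 (by norm_num) (hψpos b ⟨htb, le_rfl⟩)
    have h2 : b ^ (-(3:ℝ)/2) ≤ t ^ (-(3:ℝ)/2) :=
      Real.rpow_le_rpow_of_nonpos ht0 htb (by norm_num)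
    calc ‖h ε r b‖ ≤ b ^ (-(3:ℝ)/2) / (1/8) := h1
      _ = 8 * b ^ (-(3:ℝ)/2) := by ring
      _ ≤ 8 * t ^ (-(3:ℝ)/2) := by linarith
  have hq1 : (-(3:ℝ)/2 - 1) + 1 = -(3:ℝ)/2 := by ring
  have hInt : ∫ s in t..b, 44 * s ^ (-(3:ℝ)/2 - 1)
      = 44 * ((b ^ (-(3:ℝ)/2) - t ^ (-(3:ℝ)/2)) / (-(3:ℝ)/2)) := by
    rw [intervalIntegral.integral_const_mul, integral_rpow
      (Or.inr ⟨by norm_num, notMem_uIcc_of_lt ht0 hb0⟩), hq1]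
  have hIntle : ∫ s in t..b, 44 * s ^ (-(3:ℝ)/2 - 1) ≤ 30 * t ^ (-(3:ℝ)/2) := by
    rw [hInt]
    have hbp : 0 < b ^ (-(3:ℝ)/2) := Real.rpow_pos_of_pos hb0 _
    have htp : 0 < t ^ (-(3:ℝ)/2) := Real.rpow_pos_of_pos ht0 _
    nlinarith
  have htail := tail_bound ε t r b hε ht0 htb
  have hbval : b ^ (-(1:ℝ)/2) = t ^ (-(3:ℝ)/2) := by
    rw [hbdef, ← Real.rpow_natCast t 3, ← Real.rpow_mul ht0.le]
    norm_num
  rw [hbval] at htail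
  have hsplit := split_int ε t r b hε ht0 htb
  calc ‖∫ s in Ioi t, E ε t r s * g s‖
      ≤ ‖∫ s in t..b, E ε t r s * g s‖ + ‖∫ s in Ioi b, E ε t r s * g s‖ := by
        rw [hsplit]
        exact norm_add_le _ _
    _ ≤ 46 * t ^ (-(3:ℝ)/2) + 2 * t ^ (-(3:ℝ)/2) := by
        apply add_le_add _ htail
        refine hibp.trans ?_
        linarith
    _ = 48 * t ^ (-(3:ℝ)/2) := by ring

lemma caseB1 (ε t r : ℝ) (hε : 0 ≤ ε) (ht : 0 < t) (ht2 : t ≤ 2) (hr : 0 < r)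
    (htr : r ^ 2 / 2 ≤ t) :
    ‖∫ s in Ioi t, E ε t r s * g s‖ ≤ 6 * min (t ^ (-(1:ℝ)/2) * (1 + t)⁻¹) r⁻¹ := by
  have h0 := tail_bound ε t r t hε ht le_rfl
  rw [mul_min_of_nonneg _ _ (by norm_num : (0:ℝ) ≤ 6)]
  refine le_min (h0.trans ?_) (h0.trans ?_)
  · have hp : 0 < t ^ (-(1:ℝ)/2) := Real.rpow_pos_of_pos ht _
    rw [show (6:ℝ) * (t ^ (-(1:ℝ)/2) * (1+t)⁻¹) = (6 * t ^ (-(1:ℝ)/2)) / (1+t) by ring,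
      le_div_iff₀ (by linarith : (0:ℝ) < 1 + t)]
    nlinarith
  · rw [rpow_neg_half ht]
    have hsq0 : 0 < Real.sqrt t := Real.sqrt_pos.mpr ht
    have hrt : r ≤ 2 * Real.sqrt t := by
      nlinarith [Real.sq_sqrt ht.le, Real.sqrt_nonneg t]
    rw [show (6:ℝ) * r⁻¹ = 6/r by ring,
      show (2:ℝ) * (Real.sqrt t)⁻¹ = 2/Real.sqrt t by ring, div_le_div_iff₀ hsq0 hr]
    nlinarith

lemma caseB2 (ε t r : ℝ) (hε : 0 ≤ ε) (ht : 0 < t) (hr : 0 < r) (hr1 : r ≤ 1)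
    (htr : t < r ^ 2 / 2) :
    ‖∫ s in Ioi t, E ε t r s * g s‖ ≤ 108 * r⁻¹ := by
  set b : ℝ := r ^ 2 / 2 with hbdef
  have htb : t ≤ b := htr.le
  have hb0 : 0 < b := lt_of_lt_of_le ht htb
  have hsqb : Real.sqrt b ≤ r := by
    rw [hbdef]
    calc Real.sqrt (r ^ 2 / 2) ≤ Real.sqrt (r ^ 2) := Real.sqrt_le_sqrt (by nlinarith)
      _ = r := Real.sqrt_sq hr.le
  have hψpos : ∀ s ∈ Icc t b, r ^ 2 / (8 * s ^ 2) ≤ ‖ψ ε r s‖ :=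
    fun s hs => psi_lb_B ε r hr hr1 (lt_of_lt_of_le ht hs.1) hs.2
  have hψne : ∀ s ∈ Icc t b, ψ ε r s ≠ 0 := fun s hs => by
    have hs0 : 0 < s := lt_of_lt_of_le ht hs.1
    exact psi_ne ε r s (by positivity) (hψpos s hs)
  have hφ : ∀ s ∈ Icc t b, ‖H ε r s‖ ≤ (44 / r ^ 2) * s ^ (-(1:ℝ)/2) := by
    intro s hs
    have hs0 : 0 < s := lt_of_lt_of_le ht hs.1
    have hsq0 : 0 < Real.sqrt s := Real.sqrt_pos.mpr hs0
    refine (H_bound ε r s (r ^ 2/(8*s ^ 2)) hs0 (by positivity) (hψpos s hs)).trans ?_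
    rw [rpow_neg_5half hs0, rpow_neg_3half hs0, rpow_neg_half hs0]
    have heq : 3/2 * (Real.sqrt s * s ^ 2)⁻¹ / (r ^ 2/(8*s ^ 2))
        + (Real.sqrt s * s)⁻¹ * (r ^ 2/(2*s ^ 3)) / (r ^ 2/(8*s ^ 2)) ^ 2
        = 44 / r ^ 2 * (Real.sqrt s)⁻¹ := by
      field_simp
      ring
    rw [heq]
  have hφ0 : ∀ s ∈ Icc t b, 0 ≤ (44 / r ^ 2) * s ^ (-(1:ℝ)/2) := fun s hs => by
    have hs0 : 0 < s := lt_of_lt_of_le ht hs.1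
    positivity
  have hφi : IntervalIntegrable (fun s : ℝ => (44 / r ^ 2) * s ^ (-(1:ℝ)/2)) volume t b := by
    apply ContinuousOn.intervalIntegrable
    apply continuousOn_const.mul
    apply continuousOn_id.rpow_const
    intro x hx
    rw [uIcc_of_le htb] at hx
    exact Or.inl (lt_of_lt_of_le ht hx.1).ne'
  have hibp := ibp_bound ε t r t b (fun s => (44 / r ^ 2) * s ^ (-(1:ℝ)/2)) hε ht htb le_rfl
    hψne hφ hφ0 hφi
  have hbound : ∀ s ∈ Icc t b, ‖h ε r s‖ ≤ 8 * r⁻¹ := by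
    intro s hs
    have hs0 : 0 < s := lt_of_lt_of_le ht hs.1
    have hsq0 : 0 < Real.sqrt s := Real.sqrt_pos.mpr hs0
    have hsq2 : Real.sqrt s * Real.sqrt s = s := Real.mul_self_sqrt hs0.le
    have h1 := abs_h_le ε r s (r ^ 2/(8*s ^ 2)) hs0 (by positivity) (hψpos s hs)
    have h2 : s ^ (-(3:ℝ)/2) / (r ^ 2/(8*s ^ 2)) = 8 * Real.sqrt s / r ^ 2 := by
      rw [rpow_neg_3half hs0]
      field_simp
      linear_combination (-1) * hsq2
    have h3 : Real.sqrt s ≤ r := (Real.sqrt_le_sqrt hs.2).trans hsqb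
    calc ‖h ε r s‖ ≤ 8 * Real.sqrt s / r ^ 2 := by rw [← h2]; exact h1
      _ ≤ 8 * r / r ^ 2 := by gcongr
      _ = 8 * r⁻¹ := by field_simp
  have hIntle : ∫ s in t..b, (44 / r ^ 2) * s ^ (-(1:ℝ)/2) ≤ 88 * r⁻¹ := by
    rw [intervalIntegral.integral_const_mul, integral_rpow (Or.inl (by norm_num)),
      show (-(1:ℝ)/2 + 1) = (1:ℝ)/2 by norm_num, rpow_half hb0, rpow_half ht]
    have h1 : 0 ≤ Real.sqrt t := Real.sqrt_nonneg t
    calc 44 / r ^ 2 * ((Real.sqrt b - Real.sqrt t)/(1/2))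
        = 88 / r ^ 2 * (Real.sqrt b - Real.sqrt t) := by ring
      _ ≤ 88 / r ^ 2 * r := by
          gcongr
          linarith
      _ = 88 * r⁻¹ := by field_simp
  have htail' : ‖∫ s in Ioi b, E ε t r s * g s‖ ≤ 4 * r⁻¹ := by
    refine (tail_bound ε t r b hε ht htb).trans ?_
    rw [rpow_neg_half hb0]
    have hrb : r / 2 ≤ Real.sqrt b := by
      calc r/2 = Real.sqrt ((r/2) ^ 2) := (Real.sqrt_sq (by positivity)).symm
        _ ≤ Real.sqrt b := Real.sqrt_le_sqrt (by rw [hbdef]; nlinarith)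
    have hb' : 0 < Real.sqrt b := Real.sqrt_pos.mpr hb0
    rw [show (4:ℝ) * r⁻¹ = 4 / r by ring,
      show (2:ℝ) * (Real.sqrt b)⁻¹ = 2 / Real.sqrt b by ring, div_le_div_iff₀ hb' hr]
    nlinarith
  calc ‖∫ s in Ioi t, E ε t r s * g s‖
      ≤ ‖∫ s in t..b, E ε t r s * g s‖ + ‖∫ s in Ioi b, E ε t r s * g s‖ := by
        rw [split_int ε t r b hε ht htb]
        exact norm_add_le _ _
    _ ≤ (8 * r⁻¹ + 8 * r⁻¹ + 88 * r⁻¹) + 4 * r⁻¹ := by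
        refine add_le_add (hibp.trans ?_) htail'
        have hb1 := hbound t ⟨le_rfl, htb⟩
        have hb2 := hbound b ⟨htb, le_rfl⟩
        linarith
    _ = 108 * r⁻¹ := by ring

lemma main_est (ε t r : ℝ) (hε : 0 < ε) (ht : 0 < t) (hr : 0 < r) (hr1 : r < 1) :
    ‖∫ s in Ioi t, E ε t r s * g s‖ ≤ 330 * min (t ^ (-(1:ℝ)/2) * (1 + t)⁻¹) r⁻¹ := by
  have hx0 : 0 < t ^ (-(1:ℝ)/2) := Real.rpow_pos_of_pos ht _
  have hy0 : 0 < (1+t)⁻¹ := inv_pos.mpr (by linarith)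
  have hmin0 : 0 < min (t ^ (-(1:ℝ)/2) * (1 + t)⁻¹) r⁻¹ :=
    lt_min (mul_pos hx0 hy0) (inv_pos.mpr hr)
  rcases le_or_gt 2 t with hA | hB
  · have h := caseA ε t r hε.le hr hr1.le hA
    have ht1 : (1:ℝ) ≤ t := by linarith
    have hts : t ^ (-(3:ℝ)/2) = t ^ (-(1:ℝ)/2) * t⁻¹ := by
      rw [show (-(3:ℝ)/2) = -(1:ℝ)/2 + (-1) by norm_num, Real.rpow_add ht, Real.rpow_neg_one]
    have h2 : t⁻¹ ≤ 2 * (1+t)⁻¹ := by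
      rw [show (2:ℝ)*(1+t)⁻¹ = 2/(1+t) by ring, show t⁻¹ = 1/t by ring,
        div_le_div_iff₀ ht (by linarith : (0:ℝ) < 1 + t)]
      linarith
    have hmin : min (t ^ (-(1:ℝ)/2) * (1 + t)⁻¹) r⁻¹ = t ^ (-(1:ℝ)/2) * (1 + t)⁻¹ := by
      apply min_eq_left
      have hx : t ^ (-(1:ℝ)/2) ≤ 1 := Real.rpow_le_one_of_one_le_of_nonpos ht1 (by norm_num)
      have hy : (1+t)⁻¹ ≤ 1 := by
        rw [show (1:ℝ) = (1:ℝ)⁻¹ by norm_num]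
        exact inv_anti₀ (by norm_num) (by linarith)
      have hr' : 1 ≤ r⁻¹ := by
        rw [show (1:ℝ) = (1:ℝ)⁻¹ by norm_num]
        exact inv_anti₀ hr hr1.le
      nlinarith
    rw [hmin]
    calc ‖∫ s in Ioi t, E ε t r s * g s‖ ≤ 48 * t ^ (-(3:ℝ)/2) := h
      _ = 48 * (t ^ (-(1:ℝ)/2) * t⁻¹) := by rw [hts]
      _ ≤ 48 * (t ^ (-(1:ℝ)/2) * (2*(1+t)⁻¹)) := by gcongr
      _ = 96 * (t ^ (-(1:ℝ)/2) * (1+t)⁻¹) := by ring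
      _ ≤ 330 * (t ^ (-(1:ℝ)/2) * (1+t)⁻¹) := by nlinarith
  · rcases le_or_gt (r ^ 2/2) t with hB1 | hB2
    · refine (caseB1 ε t r hε.le ht hB.le hr hB1).trans ?_
      nlinarith
    · refine (caseB2 ε t r hε.le ht hr hr1.le hB2).trans ?_
      have hsq0 : 0 < Real.sqrt t := Real.sqrt_pos.mpr ht
      have h1 : r⁻¹ ≤ 3 * min (t ^ (-(1:ℝ)/2) * (1 + t)⁻¹) r⁻¹ := by
        rw [mul_min_of_nonneg _ _ (by norm_num : (0:ℝ) ≤ 3)]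
        apply le_min
        · have hsqt : Real.sqrt t ≤ r := by
            calc Real.sqrt t ≤ Real.sqrt (r ^ 2) := Real.sqrt_le_sqrt (by nlinarith)
              _ = r := Real.sqrt_sq hr.le
          have htlt : t < 2 := by nlinarith
          rw [rpow_neg_half ht,
            show (3:ℝ) * ((Real.sqrt t)⁻¹ * (1+t)⁻¹) = 3/(Real.sqrt t * (1+t)) by
              field_simp,
            show r⁻¹ = 1/r by ring, div_le_div_iff₀ hr (by positivity)]
          nlinarith
        · nlinarith [inv_pos.mpr hr]
      calc (108:ℝ) * r⁻¹ ≤ 108 * (3 * min (t ^ (-(1:ℝ)/2) * (1 + t)⁻¹) r⁻¹) := by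
            exact mul_le_mul_of_nonneg_left h1 (by norm_num)
        _ ≤ 330 * min (t ^ (-(1:ℝ)/2) * (1 + t)⁻¹) r⁻¹ := by nlinarith

end S2

/-- There is an absolute constant `C > 0` such that for every `ε ∈ (0,1]`, all `t > 0`
and `0 < r < 1`, `|G_ε(r,t)| ≤ C · min (t^{-1/2}(1+t)^{-1}) (r^{-1})`. -/
theorem stmt2 :
    ∃ C : ℝ, 0 < C ∧
      ∀ ε ∈ Set.Ioc (0 : ℝ) 1, ∀ r t : ℝ, 0 < t → 0 < r → r < 1 →
        ‖Gker ε r t‖ ≤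
          C * min (t ^ (-(1 : ℝ) / 2) * (1 + t)⁻¹) r⁻¹ := by
  refine ⟨330, by norm_num, ?_⟩
  rintro ε ⟨hε0, hε1⟩ r t ht hr hr1
  have hG : Gker ε r t = (Complex.exp (-(Real.pi / 4 : ℝ) * Complex.I) /
      ((8 * Real.pi ^ ((3 : ℝ) / 2) : ℝ))) * ∫ s in Set.Ioi t, S2.E ε t r s * S2.g s := rfl
  rw [hG, norm_mul]
  have hpref : ‖Complex.exp (-(Real.pi / 4 : ℝ) * Complex.I) /
      (((8 * Real.pi ^ ((3 : ℝ) / 2) : ℝ) : ℂ))‖ ≤ 1 := by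
    rw [norm_div, Complex.norm_exp]
    have h1 : ((-(((Real.pi / 4 : ℝ)) : ℂ)) * Complex.I).re = 0 := by simp
    rw [h1, Real.exp_zero]
    have hpi : (1:ℝ) ≤ Real.pi ^ ((3:ℝ)/2) := by
      calc (1:ℝ) = 1 ^ ((3:ℝ)/2) := (Real.one_rpow _).symm
        _ ≤ Real.pi ^ ((3:ℝ)/2) :=
          Real.rpow_le_rpow (by norm_num) (by linarith [Real.pi_gt_three]) (by norm_num)
    have habs : ‖((8 * Real.pi ^ ((3:ℝ)/2) : ℝ) : ℂ)‖ = 8 * Real.pi ^ ((3:ℝ)/2) := by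
      rw [Complex.norm_real, Real.norm_eq_abs, abs_of_pos (by linarith)]
    rw [habs, div_le_one (by linarith)]
    linarith
  have hmain := S2.main_est ε t r hε0 ht hr hr1
  have hmain' : ‖∫ s in Set.Ioi t, S2.E ε t r s * S2.g s‖
      ≤ 330 * min (t ^ (-(1 : ℝ) / 2) * (1 + t)⁻¹) r⁻¹ := by
    exact hmain
  calc ‖Complex.exp (-(Real.pi / 4 : ℝ) * Complex.I) /
          (((8 * Real.pi ^ ((3 : ℝ) / 2) : ℝ) : ℂ))‖
        * ‖∫ s in Set.Ioi t, S2.E ε t r s * S2.g s‖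
      ≤ 1 * (330 * min (t ^ (-(1 : ℝ) / 2) * (1 + t)⁻¹) r⁻¹) :=
        mul_le_mul hpref hmain' (norm_nonneg _) one_pos.le
    _ = 330 * min (t ^ (-(1 : ℝ) / 2) * (1 + t)⁻¹) r⁻¹ := one_mul _
end

section
/- Let z ∈ ℂ with Re z > 0 and Im z > 0, and let r > 0, t > 0, δ > 0. Then (1/(4π² i r)) ∫_{-∞}^{∞} [ p · e^{-(δ+it)p² + irp} / (p² − z) ] dp = (i/(8π^{3/2})) ∫_0^{∞} e^{ isz + i r²/(4(s+t−iδ)) } · ( i(s+t−iδ) )^{-3/2} ds, where w^{-3/2} denotes the principal branch (well-defined since Re(i(s+t−iδ)) = δ > 0). Both integrals converge absolutely. -/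
open MeasureTheory Set Filter Complex Real
open scoped Topology

lemma exp_int (c : ℂ) (hc : c.re < 0) :
    ∫ s in Set.Ioi (0:ℝ), Complex.exp (c * s) = -c⁻¹ := by
  have hc0 : c ≠ 0 := fun h => by simp [h] at hc
  have hint : IntegrableOn (fun s : ℝ => Complex.exp (c * s)) (Set.Ioi 0) := by
    refine (exp_neg_integrableOn_Ioi 0 (neg_pos.mpr hc)).mono' ?_ ?_
    · exact (Complex.continuous_exp.comp (by fun_prop)).aestronglyMeasurable
    · filter_upwards with s
      simp [Complex.norm_exp]
  have hderiv : ∀ s : ℝ, HasDerivAt (fun u : ℝ => Complex.exp (c * u) / c)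
      (Complex.exp (c * s)) s := by
    intro s
    have h1 : HasDerivAt (fun w : ℂ => Complex.exp (c * w) / c)
        (Complex.exp (c * (s:ℂ)) * (c * 1) / c) (s : ℂ) :=
      (((hasDerivAt_id (s:ℂ)).const_mul c).cexp).div_const c
    have h2 := h1.comp_ofReal
    simpa [mul_comm, mul_div_assoc, mul_div_cancel_left₀, hc0] using h2
  have htend : Tendsto (fun s : ℝ => Complex.exp (c * s) / c) atTop (𝓝 0) := by
    apply squeeze_zero_norm (f := fun s : ℝ => Complex.exp (c * s) / c)
      (a := fun s => Real.exp (c.re * s) / ‖c‖)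
    · intro s
      simp [Complex.norm_exp, map_div₀]
    · have h3 : Tendsto (fun s : ℝ => c.re * s) atTop atBot :=
        Tendsto.const_mul_atTop_of_neg hc tendsto_id
      simpa using (Real.tendsto_exp_atBot.comp h3).div_const (‖c‖)
  have := integral_Ioi_of_hasDerivAt_of_tendsto' (fun x _ => hderiv x) hint htend
  simpa using this


lemma cpow_pi_div (a : ℂ) (ha : 0 < a.re) :
    ((Real.pi : ℂ) / a) ^ (1/2 : ℂ) =
      (Real.pi : ℂ) ^ (1/2 : ℂ) * (a ^ (1/2 : ℂ))⁻¹ := by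
  have ha0 : a ≠ 0 := fun h => by simp [h] at ha
  have harg : a.arg ≠ Real.pi := by
    intro h
    have := Complex.arg_eq_pi_iff.mp h
    linarith [this.1]
  have hpi0 : ((Real.pi : ℝ) : ℂ) ≠ 0 := by
    exact_mod_cast Complex.ofReal_ne_zero.mpr Real.pi_ne_zero
  have hainv : a⁻¹ ≠ 0 := inv_ne_zero ha0
  rw [div_eq_mul_inv, Complex.cpow_def_of_ne_zero (mul_ne_zero hpi0 hainv),
    Complex.log_ofReal_mul Real.pi_pos hainv, add_mul, Complex.exp_add,
    ← Complex.cpow_def_of_ne_zero hainv, Complex.inv_cpow _ _ harg]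
  congr 1
  rw [Complex.cpow_def_of_ne_zero hpi0, ← Complex.ofReal_log Real.pi_pos.le]

set_option maxHeartbeats 1000000 in
lemma gauss_mom (a : ℂ) (ha : 0 < a.re) (r : ℝ) :
    ∫ p : ℝ, (p : ℂ) * Complex.exp (-a * (p:ℂ)^2 + Complex.I * r * p) =
      Complex.I * r / (2 * a) *
        (((Real.pi : ℂ) / a) ^ (1/2 : ℂ) * Complex.exp (-(r:ℂ)^2 / (4 * a))) := by
  have ha0 : a ≠ 0 := fun h => by simp [h] at ha
  set h : ℝ → ℂ := fun p => Complex.exp (-a * (p:ℂ)^2 + Complex.I * r * p) with hh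
  have hre : ∀ p : ℝ, (-a * (p:ℂ)^2 + Complex.I * r * p).re = -a.re * p^2 := by
    intro p
    simp [← Complex.ofReal_pow, Complex.mul_re, Complex.mul_im]
  have hnorm : ∀ p : ℝ, ‖h p‖ = Real.exp (-a.re * p^2) := by
    intro p
    rw [hh]
    simp only [Complex.norm_exp, hre p]
  have hInt : Integrable h := by
    simpa [hh] using integrable_cexp_quadratic ha (Complex.I * r) 0
  have hmeas : Continuous (fun p : ℝ => (p:ℂ) * h p) := by fun_prop
  have hph : Integrable (fun p : ℝ => (p:ℂ) * h p) := by
    refine ((integrable_mul_exp_neg_mul_sq ha).abs).mono' hmeas.aestronglyMeasurable ?_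
    filter_upwards with p
    rw [norm_mul, hnorm]
    simp [abs_mul, abs_of_pos (Real.exp_pos _), Complex.norm_real]
  have hderiv : ∀ p : ℝ, HasDerivAt h ((-2*a*p + Complex.I*r) * h p) p := by
    intro p
    have h1 := ((((hasDerivAt_pow 2 (p:ℂ)).const_mul (-a)).add
      ((hasDerivAt_id (p:ℂ)).const_mul (Complex.I * (r:ℂ))))).cexp
    have h2 := h1.comp_ofReal
    convert h2 using 1 <;>
    simp only [hh, id_eq, Pi.add_apply] <;>
    push_cast <;>
    ring
  have h'int : Integrable (fun p : ℝ => (-2*a*p + Complex.I*r) * h p) := by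
    have h5 := (hph.const_mul (-2*a)).add (hInt.const_mul (Complex.I*r))
    refine h5.congr (Filter.Eventually.of_forall fun p => ?_)
    simp only [Pi.add_apply]
    ring
  have hlimtop : Tendsto h atTop (𝓝 0) := by
    apply squeeze_zero_norm (a := fun p : ℝ => Real.exp (-a.re * p^2))
      (fun p => (hnorm p).le)
    have h3 : Tendsto (fun p : ℝ => -a.re * p^2) atTop atBot :=
      (tendsto_pow_atTop two_ne_zero).const_mul_atTop_of_neg (by linarith)
    exact Real.tendsto_exp_atBot.comp h3
  have hlimbot : Tendsto h atBot (𝓝 0) := by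
    apply squeeze_zero_norm (a := fun p : ℝ => Real.exp (-a.re * p^2))
      (fun p => (hnorm p).le)
    have h4 : Tendsto (fun p : ℝ => p^2) atBot atTop := by
      have h6 := (tendsto_pow_atTop (n := 2) two_ne_zero).comp (tendsto_abs_atBot_atTop (G := ℝ))
      simpa [Function.comp_def, sq_abs] using h6
    have h3 : Tendsto (fun p : ℝ => -a.re * p^2) atBot atBot :=
      h4.const_mul_atTop_of_neg (by linarith)
    exact Real.tendsto_exp_atBot.comp h3
  have hIoi := integral_Ioi_of_hasDerivAt_of_tendsto' (a := 0)
    (fun x _ => hderiv x) h'int.integrableOn hlimtop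
  have hIic := integral_Iic_of_hasDerivAt_of_tendsto' (a := 0)
    (fun x _ => hderiv x) h'int.integrableOn hlimbot
  have htot : ∫ p : ℝ, (-2*a*p + Complex.I*r) * h p = 0 := by
    rw [← intervalIntegral.integral_Iic_add_Ioi h'int.integrableOn h'int.integrableOn, hIoi, hIic]
    ring
  have hsplit : (-2*a) * (∫ p : ℝ, (p:ℂ) * h p) + (Complex.I*r) * (∫ p : ℝ, h p) = 0 := by
    have e1 : ∫ p : ℝ, (-2*a*p + Complex.I*r) * h p
        = ∫ p : ℝ, ((-2*a) * ((p:ℂ) * h p) + (Complex.I*r) * h p) := by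
      congr 1; funext p; ring
    rw [e1, integral_add (hph.const_mul _) (hInt.const_mul _), integral_const_mul,
      integral_const_mul] at htot
    exact htot
  have hq : ∫ p : ℝ, h p =
      ((Real.pi : ℂ) / a) ^ (1/2 : ℂ) * Complex.exp (-(r:ℂ)^2 / (4 * a)) := by
    have hb : (-a).re < 0 := by simpa using ha
    have hexp : (0:ℂ) - (Complex.I*(r:ℂ))^2/(4*(-a)) = -(r:ℂ)^2/(4*a) := by
      rw [mul_pow, Complex.I_sq]
      field_simp
      ring
    calc ∫ p : ℝ, h p = ∫ p : ℝ, Complex.exp (-a*(p:ℂ)^2 + Complex.I*(r:ℂ)*p + 0) := by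
          simp [hh]
      _ = ((Real.pi:ℂ) / -(-a)) ^ (1/2:ℂ) *
            Complex.exp (0 - (Complex.I*(r:ℂ))^2/(4*(-a))) := integral_cexp_quadratic hb _ _
      _ = _ := by rw [neg_neg, hexp]
  have h2a : (2*a) ≠ 0 := mul_ne_zero two_ne_zero ha0
  have h2 : ∫ p : ℝ, (p:ℂ) * h p = (Complex.I * r * ∫ p : ℝ, h p)/(2*a) := by
    rw [eq_div_iff h2a]
    linear_combination -hsplit
  rw [h2, hq]
  ring

lemma exp_split (x y zz : ℂ) (h : x = y + zz) :
    Complex.exp x = Complex.exp y * Complex.exp zz := by rw [h, Complex.exp_add]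

set_option maxHeartbeats 1000000 in
/-- Regularized representation formula for the Green's function of
`(−Δ − z)^{-1} e^{itΔ}` on `ℝ³`: for `z ∈ ℂ` with `Re z > 0`, `Im z > 0` and
`r, t, δ > 0`, both integrals below converge absolutely and
`(1/(4π²ir)) ∫_ℝ p e^{-(δ+it)p² + irp}/(p²−z) dp
  = (i/(8π^{3/2})) ∫_0^∞ e^{isz + ir²/(4(s+t−iδ))} (i(s+t−iδ))^{-3/2} ds`,
with the principal branch of `w^{-3/2}`. -/
theorem stmt8 (z : ℂ) (hre : 0 < z.re) (him : 0 < z.im) (r t δ : ℝ)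
    (hr : 0 < r) (ht : 0 < t) (hδ : 0 < δ) :
    Integrable (fun p : ℝ =>
      (p : ℂ) * Complex.exp (-((δ : ℂ) + Complex.I * (t : ℂ)) * (p : ℂ) ^ 2
        + Complex.I * (r : ℂ) * (p : ℂ)) / ((p : ℂ) ^ 2 - z)) volume ∧
    IntegrableOn (fun s : ℝ =>
      Complex.exp (Complex.I * (s : ℂ) * z
          + Complex.I * (r : ℂ) ^ 2 / (4 * ((s : ℂ) + (t : ℂ) - Complex.I * (δ : ℂ)))) *
        (Complex.I * ((s : ℂ) + (t : ℂ) - Complex.I * (δ : ℂ))) ^ (-(3 / 2) : ℂ))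
      (Set.Ioi 0) volume ∧
    (1 / (4 * (Real.pi : ℂ) ^ 2 * Complex.I * (r : ℂ))) *
        ∫ p : ℝ, (p : ℂ) * Complex.exp (-((δ : ℂ) + Complex.I * (t : ℂ)) * (p : ℂ) ^ 2
          + Complex.I * (r : ℂ) * (p : ℂ)) / ((p : ℂ) ^ 2 - z) =
      (Complex.I / ((8 * Real.pi ^ ((3 : ℝ) / 2) : ℝ) : ℂ)) *
        ∫ s in Set.Ioi (0 : ℝ),
          Complex.exp (Complex.I * (s : ℂ) * z
              + Complex.I * (r : ℂ) ^ 2 / (4 * ((s : ℂ) + (t : ℂ) - Complex.I * (δ : ℂ)))) *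
            (Complex.I * ((s : ℂ) + (t : ℂ) - Complex.I * (δ : ℂ))) ^ (-(3 / 2) : ℂ) := by
  -- abbreviations
  set E1 : ℝ → ℂ := fun p => -((δ:ℂ) + Complex.I*t) * (p:ℂ)^2 + Complex.I*r*p with hE1
  set c : ℝ → ℂ := fun p => -(Complex.I) * ((p:ℂ)^2 - z) with hc
  set F : ℝ → ℝ → ℂ := fun p s => (p:ℂ) * Complex.I * Complex.exp (E1 p + c p * s) with hF
  obtain ⟨A, hA⟩ : ∃ A : ℝ → ℂ, A = fun s : ℝ => (δ:ℂ) + Complex.I*(t:ℂ) + Complex.I*(s:ℂ) :=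
    ⟨_, rfl⟩
  set G : ℝ → ℂ := fun s =>
      Complex.exp (Complex.I * (s : ℂ) * z
          + Complex.I * (r : ℂ) ^ 2 / (4 * ((s : ℂ) + (t : ℂ) - Complex.I * (δ : ℂ)))) *
        (Complex.I * ((s : ℂ) + (t : ℂ) - Complex.I * (δ : ℂ))) ^ (-(3 / 2) : ℂ) with hG
  have hπ0 : ((Real.pi : ℝ) : ℂ) ≠ 0 := Complex.ofReal_ne_zero.mpr Real.pi_ne_zero
  obtain ⟨q, hqdef⟩ : ∃ q : ℂ, q = ((Real.pi:ℝ) : ℂ) ^ (1/2 : ℂ) := ⟨_, rfl⟩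
  have hq0 : q ≠ 0 := by
    rw [hqdef]
    exact fun h => hπ0 (Complex.cpow_eq_zero_iff _ _ |>.mp h).1
  have hq2 : q * q = ((Real.pi:ℝ) : ℂ) := by
    rw [hqdef, ← Complex.cpow_add _ _ hπ0]
    norm_num
  obtain ⟨K, hK⟩ : ∃ K : ℂ, K = -((r:ℂ)/2) * q := ⟨_, rfl⟩
  -- real part of exponent
  have hXre : ∀ p s : ℝ, (E1 p + c p * s).re = -δ * p^2 + -z.im * s := by
    intro p s
    rw [hE1, hc]
    simp [← Complex.ofReal_pow, Complex.mul_re, Complex.mul_im, Complex.add_re, Complex.sub_re,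
      Complex.sub_im, Complex.add_im]
  have hnormF : ∀ p s : ℝ, ‖F p s‖ = (|p| * Real.exp (-δ * p^2)) * Real.exp (-z.im * s) := by
    intro p s
    rw [hF]
    simp only [norm_mul, Complex.norm_exp, Complex.norm_real, Real.norm_eq_abs, Complex.norm_I,
      mul_one, hXre p s]
    rw [Real.exp_add]
    ring
  -- product integrability
  have hcont : Continuous (Function.uncurry F) := by
    rw [hF, hE1, hc]
    fun_prop
  have hgint : Integrable (fun q : ℝ × ℝ => (|q.1| * Real.exp (-δ * q.1^2)) *
      Real.exp (-z.im * q.2)) ((volume : Measure ℝ).prod (volume.restrict (Ioi 0))) := by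
    have h1 : Integrable (fun p : ℝ => |p| * Real.exp (-δ * p^2)) volume := by
      refine ((integrable_mul_exp_neg_mul_sq hδ).abs).congr ?_
      filter_upwards with p
      rw [abs_mul, abs_of_pos (Real.exp_pos _)]
    have h2 : Integrable (fun s : ℝ => Real.exp (-z.im * s)) (volume.restrict (Ioi 0)) :=
      exp_neg_integrableOn_Ioi 0 him
    exact h1.mul_prod h2
  have hprod : Integrable (Function.uncurry F)
      ((volume : Measure ℝ).prod (volume.restrict (Ioi 0))) := by
    refine hgint.mono' hcont.aestronglyMeasurable ?_
    filter_upwards with q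
    exact (hnormF q.1 q.2).le
  -- the s-integral for fixed p
  have hpz : ∀ p : ℝ, ((p:ℂ)^2 - z) ≠ 0 := by
    intro p h
    have h2 : ((p:ℂ)^2 - z).im = 0 := by rw [h]; simp
    simp [Complex.sub_im, ← Complex.ofReal_pow, Complex.ofReal_im] at h2
    linarith
  have hcre : ∀ p : ℝ, (c p).re < 0 := by
    intro p
    rw [hc]
    simp [Complex.sub_im, ← Complex.ofReal_pow]
    linarith
  have hFs : ∀ p : ℝ, (∫ s in Ioi (0:ℝ), F p s) =
      (p:ℂ) * Complex.exp (E1 p) / ((p:ℂ)^2 - z) := by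
    intro p
    have hre1 : ∀ s : ℝ, F p s = (((p:ℂ) * Complex.exp (E1 p)) * Complex.I) *
        Complex.exp (c p * s) := by
      intro s
      simp only [hF]
      rw [exp_split (E1 p + c p * s) (E1 p) (c p * s) rfl]
      ring
    rw [integral_congr_ae (Eventually.of_forall fun s => hre1 s), integral_const_mul,
      exp_int (c p) (hcre p)]
    simp only [hc]
    rw [mul_inv, inv_neg, Complex.inv_I, div_eq_mul_inv]
    linear_combination (-((p:ℂ) * Complex.exp (E1 p) * (((p:ℂ)^2 - z)⁻¹))) * Complex.I_sq
  -- the p-integral for fixed s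
  have hAre : ∀ s : ℝ, 0 < (A s).re := by
    intro s
    simp only [hA]
    simp [hδ]
  have hA0 : ∀ s : ℝ, A s ≠ 0 := fun s h => by simpa [h] using (hAre s)
  have hFp : ∀ s : ℝ, (∫ p : ℝ, F p s) = K * G s := by
    intro s
    have hre2 : ∀ p : ℝ, F p s = (Complex.I * Complex.exp (Complex.I * s * z)) *
        ((p:ℂ) * Complex.exp (-(A s) * (p:ℂ)^2 + Complex.I*r*p)) := by
      intro p
      simp only [hF]
      rw [exp_split (E1 p + c p * s) (Complex.I * s * z)
        (-(A s) * (p:ℂ)^2 + Complex.I*r*p) (by simp only [hE1, hc, hA]; ring)]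
      ring
    rw [integral_congr_ae (Eventually.of_forall fun p => hre2 p), integral_const_mul,
      gauss_mom (A s) (hAre s) r, cpow_pi_div (A s) (hAre s)]
    -- now pure scalar algebra
    have hw0 : ((s:ℂ) + t - Complex.I*δ) ≠ 0 := by
      intro h
      have h2 : ((s:ℂ) + t - Complex.I*δ).im = 0 := by rw [h]; simp
      simp at h2
      linarith
    have haw : A s = Complex.I * ((s:ℂ) + t - Complex.I*δ) := by
      simp only [hA]
      linear_combination (δ:ℂ) * Complex.I_sq
    have hexpeq : Complex.exp (Complex.I * s * z) * Complex.exp (-(r:ℂ)^2 / (4 * A s)) =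
        Complex.exp (Complex.I * (s : ℂ) * z
          + Complex.I * (r : ℂ) ^ 2 / (4 * ((s : ℂ) + (t : ℂ) - Complex.I * (δ : ℂ)))) := by
      rw [← Complex.exp_add]
      congr 1
      rw [haw]
      have h4w : (4:ℂ) * (Complex.I * ((s:ℂ) + t - Complex.I*δ)) ≠ 0 := by
        simp [hw0, Complex.I_ne_zero]
      have h4w' : (4:ℂ) * ((s:ℂ) + t - Complex.I*δ) ≠ 0 := by simp [hw0]
      have hx : -(r:ℂ)^2 / (4 * (Complex.I * ((s:ℂ) + t - Complex.I*δ))) =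
          Complex.I * (r:ℂ)^2 / (4 * ((s:ℂ) + t - Complex.I*δ)) := by
        rw [div_eq_div_iff h4w h4w']
        linear_combination (-4 * (r:ℂ)^2 * ((s:ℂ) + t - Complex.I*δ)) * Complex.I_sq
      rw [hx]
    have hcpow : (Complex.I * ((s:ℂ) + (t:ℂ) - Complex.I * (δ:ℂ))) ^ (-(3/2) : ℂ) =
        ((A s) ^ (1/2 : ℂ))⁻¹ * (A s)⁻¹ := by
      rw [← haw, show (-(3/2) : ℂ) = -(1/2) + (-1) by norm_num,
        Complex.cpow_add _ _ (hA0 s), Complex.cpow_neg, Complex.cpow_neg_one]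
    simp only [hG]
    rw [hcpow, hK, ← hexpeq, hqdef]
    linear_combination ((r:ℂ)/2 * ((Real.pi:ℝ):ℂ) ^ (1/2:ℂ) *
      Complex.exp (Complex.I * s * z) * Complex.exp (-(r:ℂ)^2 / (4 * A s)) *
      ((A s) ^ (1/2 : ℂ))⁻¹ * (A s)⁻¹) * Complex.I_sq
  -- conjunct 1
  have hint1 : Integrable (fun p : ℝ =>
      (p : ℂ) * Complex.exp (-((δ : ℂ) + Complex.I * (t : ℂ)) * (p : ℂ) ^ 2
        + Complex.I * (r : ℂ) * (p : ℂ)) / ((p : ℂ) ^ 2 - z)) volume := by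
    refine hprod.integral_prod_left.congr (Eventually.of_forall fun p => ?_)
    exact hFs p
  -- conjunct 2
  have hint2' : Integrable (fun s : ℝ => K * G s) (volume.restrict (Ioi 0)) := by
    refine (hprod.swap.integral_prod_left).congr (Eventually.of_forall fun s => ?_)
    exact hFp s
  have hK0 : K ≠ 0 := by
    rw [hK]
    simp [hq0, hr.ne']
  have hint2 : IntegrableOn G (Ioi 0) volume := by
    refine (hint2'.const_mul K⁻¹).congr (Eventually.of_forall fun s => ?_)
    field_simp
  refine ⟨hint1, hint2, ?_⟩
  -- the main identity
  have hmain : (∫ p : ℝ, (p : ℂ) * Complex.exp (-((δ : ℂ) + Complex.I * (t : ℂ)) * (p : ℂ) ^ 2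
      + Complex.I * (r : ℂ) * (p : ℂ)) / ((p : ℂ) ^ 2 - z)) = K * ∫ s in Ioi (0:ℝ), G s := by
    calc (∫ p : ℝ, (p : ℂ) * Complex.exp (-((δ : ℂ) + Complex.I * (t : ℂ)) * (p : ℂ) ^ 2
        + Complex.I * (r : ℂ) * (p : ℂ)) / ((p : ℂ) ^ 2 - z))
        = ∫ p : ℝ, ∫ s in Ioi (0:ℝ), F p s := by
          refine integral_congr_ae (Eventually.of_forall fun p => ?_)
          exact (hFs p).symm
      _ = ∫ s in Ioi (0:ℝ), ∫ p : ℝ, F p s := integral_integral_swap hprod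
      _ = ∫ s in Ioi (0:ℝ), K * G s :=
          integral_congr_ae (Eventually.of_forall fun s => hFp s)
      _ = K * ∫ s in Ioi (0:ℝ), G s := integral_const_mul K _
  rw [hmain, ← mul_assoc]
  congr 1
  -- constant identity
  have hofreal : ((8 * Real.pi ^ ((3:ℝ)/2) : ℝ) : ℂ) = 8 * ((Real.pi:ℝ):ℂ) * q := by
    rw [hqdef]
    push_cast [Complex.ofReal_cpow Real.pi_pos.le]
    rw [show ((3:ℂ)/2) = (1:ℂ) + (1/2:ℂ) by norm_num,
      Complex.cpow_add _ _ hπ0, Complex.cpow_one]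
    ring
  have h8 : (8 : ℂ) * ((Real.pi:ℝ):ℂ) * q ≠ 0 := by
    simp [hπ0, hq0]
  have hD : (4 : ℂ) * ((Real.pi:ℝ):ℂ)^2 * Complex.I * (r:ℂ) ≠ 0 := by
    simp [hπ0, Complex.I_ne_zero, hr.ne']
  have hconst : (1 / (4 * ((Real.pi:ℝ):ℂ)^2 * Complex.I * (r:ℂ))) * K =
      Complex.I / (8 * ((Real.pi:ℝ):ℂ) * q) := by
    rw [div_mul_eq_mul_div, one_mul, div_eq_div_iff hD h8, hK]
    linear_combination (-4*((Real.pi:ℝ):ℂ)*(r:ℂ)) * hq2 +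
      (-4*((Real.pi:ℝ):ℂ)^2*(r:ℂ)) * Complex.I_sq
  rw [hofreal, hconst]
end
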